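/- arXiv:1507.07502 — 4 statements merged into one kernel-verified Lean document; each statement's English description precedes it below -/
import Mathlib

section
/- Suppose F is a Borel probability measure on [0,∞) satisfying tail assumption (T1) with index α ∈ (0,1). Then condition (★) is equivalent to condition (N): lim_{η→0⁺} limsup_{x→∞} (x/A(x)) · E[ (A(x−X)²/(x−X)) · 1_{1 ≤ x−X < ηx} ] = 0, where X is a random variable with law F. -/
open MeasureTheory ProbabilityTheory Filter Set Asymptotics Topology

/-- `t > 0` is an arithmetic support span of `F` (i.e. `F` is supported on `t·ℤ`). -/
def IsArithSpan (F : MeasureTheory.Measure ℝ) (t : ℝ) : Prop :=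
  0 < t ∧ F ({x : ℝ | ∃ k : ℤ, x = t * k}ᶜ) = 0

/-- The ratio `r(x) = x · F((x−h, x]) / F((x, ∞))`. -/
noncomputable def rr (F : MeasureTheory.Measure ℝ) (h x : ℝ) : ℝ :=
  x * (F (Set.Ioc (x - h) x)).toReal / (F (Set.Ioi x)).toReal

/-- Condition (★): `lim_{η→0⁺} limsup_{x→∞} (1/A(x)²) ∫_1^{ηx} (A(s)²/s)·r(x−s) ds = 0`. -/
def CondStar (F : MeasureTheory.Measure ℝ) (A : ℝ → ℝ) (h : ℝ) : Prop :=
  Filter.Tendsto (fun η : ℝ =>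
      Filter.limsup (fun x : ℝ =>
        1 / (A x) ^ 2 * ∫ s in (1:ℝ)..(η * x), (A s) ^ 2 / s * rr F h (x - s))
        Filter.atTop)
    (nhdsWithin 0 (Set.Ioi 0)) (nhds 0)

/-- Condition (N):
`lim_{η→0⁺} limsup_{x→∞} (x/A(x)) · E[(A(x−X)²/(x−X)) · 1_{1 ≤ x−X < ηx}] = 0`,
where `X` has law `F`. -/
def CondN (F : MeasureTheory.Measure ℝ) (A : ℝ → ℝ) : Prop :=
  Filter.Tendsto (fun η : ℝ =>
      Filter.limsup (fun x : ℝ =>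
        x / A x * ∫ y, Set.indicator {s : ℝ | 1 ≤ x - s ∧ x - s < η * x}
          (fun s => (A (x - s)) ^ 2 / (x - s)) y ∂F) Filter.atTop)
    (nhdsWithin 0 (Set.Ioi 0)) (nhds 0)

private lemma ev_le_bdd {f g : ℝ → ℝ} (hfg : ∀ᶠ x in atTop, f x ≤ g x)
    (hb : IsBoundedUnder (· ≤ ·) atTop g) : IsBoundedUnder (· ≤ ·) atTop f := by
  obtain ⟨M, hM⟩ := hb
  rw [eventually_map] at hM
  exact ⟨M, eventually_map.2 ((hfg.and hM).mono fun x ⟨h1, h2⟩ => h1.trans h2)⟩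

private lemma bdd_shift {f : ℝ → ℝ} {h : ℝ} (hh : 0 ≤ h)
    (hb : IsBoundedUnder (· ≤ ·) atTop f) :
    IsBoundedUnder (· ≤ ·) atTop (fun x => f (x + h)) := by
  obtain ⟨M, hM⟩ := hb
  rw [eventually_map] at hM
  obtain ⟨N, hN⟩ := eventually_atTop.1 hM
  exact ⟨M, eventually_map.2 (eventually_atTop.2 ⟨N, fun x hx => hN _ (by linarith)⟩)⟩

private lemma bdd_const_mul {f : ℝ → ℝ} {C : ℝ} (hC : 0 ≤ C)
    (hb : IsBoundedUnder (· ≤ ·) atTop f) :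
    IsBoundedUnder (· ≤ ·) atTop (fun x => C * f x) := by
  obtain ⟨M, hM⟩ := hb
  rw [eventually_map] at hM
  exact ⟨C * M, eventually_map.2 (hM.mono fun x hx => mul_le_mul_of_nonneg_left hx hC)⟩

private lemma limsup_of_unbdd {f : ℝ → ℝ} (hf : ¬ IsBoundedUnder (· ≤ ·) atTop f) :
    limsup f atTop = 0 := by
  rw [limsup_eq]
  refine (congrArg sInf ?_).trans Real.sInf_empty
  ext a
  simp only [mem_setOf_eq, mem_empty_iff_false, iff_false]
  intro ha
  exact hf ⟨a, eventually_map.2 ha⟩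

private lemma two_mul_tendsto : Tendsto (fun η : ℝ => 2 * η) (𝓝[>] (0:ℝ)) (𝓝[>] (0:ℝ)) := by
  apply tendsto_nhdsWithin_of_tendsto_nhds_of_eventually_within
  · have : Tendsto (fun η : ℝ => 2 * η) (𝓝 (0:ℝ)) (𝓝 (2 * 0)) :=
      (continuous_const.mul continuous_id).tendsto 0
    simpa using this.mono_left nhdsWithin_le_nhds
  · filter_upwards [self_mem_nhdsWithin] with η (hη : (0:ℝ) < η)
    exact mem_Ioi.2 (by linarith)

private lemma limsup_transfer (S N : ℝ → ℝ → ℝ) (h C : ℝ) (hh : 0 < h) (hC : 0 < C)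
    (hS0 : ∀ η : ℝ, 0 < η → η < 1/4 → ∀ᶠ x in atTop, 0 ≤ S η x)
    (hN0 : ∀ η : ℝ, 0 < η → η < 1/4 → ∀ᶠ x in atTop, 0 ≤ N η x)
    (hSN : ∀ η η' : ℝ, 0 < η → η < η' → η' < 1/4 → ∀ᶠ x in atTop, S η x ≤ C * N η' x)
    (hNS : ∀ η η' : ℝ, 0 < η → η < η' → η' < 1/4 → ∀ᶠ x in atTop, N η x ≤ C * S η' (x + h)) :
    Tendsto (fun η => limsup (fun x => S η x) atTop) (𝓝[>] (0:ℝ)) (𝓝 0) ↔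
    Tendsto (fun η => limsup (fun x => N η x) atTop) (𝓝[>] (0:ℝ)) (𝓝 0) := by
  by_cases Q : ∃ δ : ℝ, 0 < δ ∧ δ < 1/4 ∧ ∀ η : ℝ, 0 < η → η < δ →
      IsBoundedUnder (· ≤ ·) atTop (N η)
  · obtain ⟨δ, hδ0, hδ4, hQ⟩ := Q
    -- boundedness of S η for η < δ/2
    have hSbdd : ∀ η : ℝ, 0 < η → η < δ/2 → IsBoundedUnder (· ≤ ·) atTop (S η) := by
      intro η hη hηδ
      exact ev_le_bdd (hSN η (2*η) hη (by linarith) (by linarith))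
        (bdd_const_mul hC.le (hQ (2*η) (by linarith) (by linarith)))
    constructor
    · -- CondStar → CondN
      intro hS
      rw [Metric.tendsto_nhds]
      intro ε hε
      have hev : ∀ᶠ η' in 𝓝[>] (0:ℝ), dist (limsup (fun x => S η' x) atTop) 0 < ε/(2*C) :=
        Metric.tendsto_nhds.1 hS _ (by positivity)
      have hev2 : ∀ᶠ η in 𝓝[>] (0:ℝ), dist (limsup (fun x => S (2*η) x) atTop) 0 < ε/(2*C) :=
        two_mul_tendsto.eventually hev
      filter_upwards [hev2, Ioo_mem_nhdsGT_of_mem (left_mem_Ico.2 (by linarith : (0:ℝ) < δ/4)),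
        self_mem_nhdsWithin] with η h1 h2 (hη : (0:ℝ) < η)
      obtain ⟨_, hη4⟩ := h2
      -- η < δ/4
      have hNb : IsBoundedUnder (· ≤ ·) atTop (N η) := hQ η hη (by linarith)
      have hSb : IsBoundedUnder (· ≤ ·) atTop (S (2*η)) := hSbdd (2*η) (by linarith) (by linarith)
      have hls : limsup (fun x => S (2*η) x) atTop < ε/(2*C) := by
        have := h1; rw [Real.dist_eq, abs_sub_comm, abs_sub_lt_iff] at this; linarith [this.2]
      have hevS : ∀ᶠ x in atTop, S (2*η) x < ε/(2*C) := eventually_lt_of_limsup_lt hls hSb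
      have hevS' : ∀ᶠ x in atTop, S (2*η) (x+h) < ε/(2*C) := by
        obtain ⟨M, hM⟩ := eventually_atTop.1 hevS
        exact eventually_atTop.2 ⟨M, fun x hx => hM _ (by linarith)⟩
      have hevN : ∀ᶠ x in atTop, N η x ≤ ε/2 := by
        filter_upwards [hNS η (2*η) hη (by linarith) (by linarith), hevS'] with x hx1 hx2
        calc N η x ≤ C * S (2*η) (x+h) := hx1
          _ ≤ C * (ε/(2*C)) := mul_le_mul_of_nonneg_left hx2.le hC.le
          _ = ε/2 := by field_simp
      have hub : limsup (fun x => N η x) atTop ≤ ε/2 :=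
        limsup_le_of_le (IsCoboundedUnder.of_frequently_ge
          ((hN0 η hη (by linarith)).frequently)) hevN
      have hlb : (0:ℝ) ≤ limsup (fun x => N η x) atTop :=
        le_limsup_of_frequently_le ((hN0 η hη (by linarith)).frequently) hNb
      rw [Real.dist_eq, abs_sub_comm]
      rw [abs_sub_lt_iff]
      constructor <;> [skip; linarith]
      simp only [zero_sub, neg_lt]
      linarith
    · -- CondN → CondStar
      intro hN
      rw [Metric.tendsto_nhds]
      intro ε hε
      have hev : ∀ᶠ η' in 𝓝[>] (0:ℝ), dist (limsup (fun x => N η' x) atTop) 0 < ε/(2*C) :=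
        Metric.tendsto_nhds.1 hN _ (by positivity)
      have hev2 : ∀ᶠ η in 𝓝[>] (0:ℝ), dist (limsup (fun x => N (2*η) x) atTop) 0 < ε/(2*C) :=
        two_mul_tendsto.eventually hev
      filter_upwards [hev2, Ioo_mem_nhdsGT_of_mem (left_mem_Ico.2 (by linarith : (0:ℝ) < δ/4)),
        self_mem_nhdsWithin] with η h1 h2 (hη : (0:ℝ) < η)
      obtain ⟨_, hη4⟩ := h2
      have hNb : IsBoundedUnder (· ≤ ·) atTop (N (2*η)) := hQ (2*η) (by linarith) (by linarith)
      have hSb : IsBoundedUnder (· ≤ ·) atTop (S η) := hSbdd η hη (by linarith)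
      have hls : limsup (fun x => N (2*η) x) atTop < ε/(2*C) := by
        have := h1; rw [Real.dist_eq, abs_sub_comm, abs_sub_lt_iff] at this; linarith [this.2]
      have hevN : ∀ᶠ x in atTop, N (2*η) x < ε/(2*C) := eventually_lt_of_limsup_lt hls hNb
      have hevS : ∀ᶠ x in atTop, S η x ≤ ε/2 := by
        filter_upwards [hSN η (2*η) hη (by linarith) (by linarith), hevN] with x hx1 hx2
        calc S η x ≤ C * N (2*η) x := hx1
          _ ≤ C * (ε/(2*C)) := mul_le_mul_of_nonneg_left hx2.le hC.le
          _ = ε/2 := by field_simp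
      have hub : limsup (fun x => S η x) atTop ≤ ε/2 :=
        limsup_le_of_le (IsCoboundedUnder.of_frequently_ge
          ((hS0 η hη (by linarith)).frequently)) hevS
      have hlb : (0:ℝ) ≤ limsup (fun x => S η x) atTop :=
        le_limsup_of_frequently_le ((hS0 η hη (by linarith)).frequently) hSb
      rw [Real.dist_eq, abs_sub_comm, abs_sub_lt_iff]
      constructor <;> [skip; linarith]
      simp only [zero_sub, neg_lt]
      linarith
  · -- degenerate case: everything unbounded, both limsups are identically 0 near 0
    push_neg at Q
    have key : ∀ η'' : ℝ, 0 < η'' → η'' < 1/4 →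
        ¬ IsBoundedUnder (· ≤ ·) atTop (S η'') ∧ ¬ IsBoundedUnder (· ≤ ·) atTop (N η'') := by
      intro η'' hη'' hη4
      obtain ⟨η, hη0, hηlt, hNub⟩ := Q (η''/2) (by linarith) (by linarith)
      have hSub : ∀ η' : ℝ, η < η' → η' < 1/4 → ¬ IsBoundedUnder (· ≤ ·) atTop (S η') := by
        intro η' hlt hlt4 hSb
        exact hNub (ev_le_bdd (hNS η η' hη0 hlt hlt4) (bdd_const_mul hC.le (bdd_shift hh.le hSb)))
      refine ⟨hSub η'' (by linarith) hη4, ?_⟩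
      intro hNb
      exact hSub ((η + η'')/2) (by linarith) (by linarith)
        (ev_le_bdd (hSN ((η + η'')/2) η'' (by linarith) (by linarith) hη4)
          (bdd_const_mul hC.le hNb))
    have hSz : ∀ᶠ η in 𝓝[>] (0:ℝ), limsup (fun x => S η x) atTop = 0 := by
      filter_upwards [Ioo_mem_nhdsGT_of_mem (left_mem_Ico.2 (by norm_num : (0:ℝ) < 1/4))]
        with η hη
      exact limsup_of_unbdd (key η hη.1 hη.2).1
    have hNz : ∀ᶠ η in 𝓝[>] (0:ℝ), limsup (fun x => N η x) atTop = 0 := by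
      filter_upwards [Ioo_mem_nhdsGT_of_mem (left_mem_Ico.2 (by norm_num : (0:ℝ) < 1/4))]
        with η hη
      exact limsup_of_unbdd (key η hη.1 hη.2).2
    constructor <;> intro _
    · exact (tendsto_congr' (hNz.mono fun η hη => hη.symm)).1 tendsto_const_nhds
    · exact (tendsto_congr' (hSz.mono fun η hη => hη.symm)).1 tendsto_const_nhds


private lemma tonelli_star (F : Measure ℝ) [IsProbabilityMeasure F]
    (w : ℝ → ENNReal) (hw : Measurable w) (x h b : ℝ) :
    ∫⁻ s in Ioc 1 b, w s * F (Ioc (x - s - h) (x - s)) ∂volume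
      = ∫⁻ y, ∫⁻ s in Ioc (max 1 (x - y - h)) (min b (x - y)), w s ∂volume ∂F := by
  have hind : Measurable fun p : ℝ × ℝ =>
      (Ioc (x - h) x).indicator (fun _ => (1:ENNReal)) (p.1 + p.2) :=
    (measurable_const.indicator measurableSet_Ioc).comp (measurable_fst.add measurable_snd)
  have key : ∀ s : ℝ, w s * F (Ioc (x - s - h) (x - s))
      = ∫⁻ y, w s * (Ioc (x - h) x).indicator (fun _ => (1:ENNReal)) (s + y) ∂F := by
    intro s
    have hset : (fun y => (Ioc (x - h) x).indicator (fun _ => (1:ENNReal)) (s + y))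
        = (Ioc (x - s - h) (x - s)).indicator (fun _ => (1:ENNReal)) := by
      ext y
      by_cases hy : y ∈ Ioc (x - s - h) (x - s)
      · have : s + y ∈ Ioc (x - h) x := ⟨by cases hy with | intro a b => linarith,
          by cases hy with | intro a b => linarith⟩
        rw [indicator_of_mem this, indicator_of_mem hy]
      · have : s + y ∉ Ioc (x - h) x := by
          intro hc
          exact hy ⟨by cases hc with | intro a b => linarith,
            by cases hc with | intro a b => linarith⟩
        rw [indicator_of_notMem this, indicator_of_notMem hy]
    calc w s * F (Ioc (x - s - h) (x - s))
        = ∫⁻ y, w s * (Ioc (x - s - h) (x - s)).indicator (fun _ => (1:ENNReal)) y ∂F := by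
          rw [lintegral_const_mul _ (measurable_const.indicator measurableSet_Ioc),
            lintegral_indicator_const measurableSet_Ioc, one_mul]
      _ = ∫⁻ y, w s * (Ioc (x - h) x).indicator (fun _ => (1:ENNReal)) (s + y) ∂F :=
          lintegral_congr fun y => by rw [congrFun hset y]
  calc ∫⁻ s in Ioc 1 b, w s * F (Ioc (x - s - h) (x - s)) ∂volume
      = ∫⁻ s in Ioc 1 b, ∫⁻ y, w s * (Ioc (x - h) x).indicator (fun _ => (1:ENNReal)) (s + y) ∂F ∂volume := by
        exact lintegral_congr fun s => key s
    _ = ∫⁻ y, ∫⁻ s in Ioc 1 b, w s * (Ioc (x - h) x).indicator (fun _ => (1:ENNReal)) (s + y) ∂volume ∂F := by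
        exact lintegral_lintegral_swap (((hw.comp measurable_fst).mul hind).aemeasurable)
    _ = ∫⁻ y, ∫⁻ s in Ioc (max 1 (x - y - h)) (min b (x - y)), w s ∂volume ∂F := by
        refine lintegral_congr fun y => ?_
        have hset : (fun s => w s * (Ioc (x - h) x).indicator (fun _ => (1:ENNReal)) (s + y))
            = (Ioc (x - y - h) (x - y)).indicator w := by
          ext s
          by_cases hs : s ∈ Ioc (x - y - h) (x - y)
          · have : s + y ∈ Ioc (x - h) x := ⟨by cases hs with | intro a b => linarith,
              by cases hs with | intro a b => linarith⟩
            rw [indicator_of_mem this, indicator_of_mem hs, mul_one]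
          · have : s + y ∉ Ioc (x - h) x := by
              intro hc
              exact hs ⟨by cases hc with | intro a b => linarith,
                by cases hc with | intro a b => linarith⟩
            rw [indicator_of_notMem this, indicator_of_notMem hs, mul_zero]
        rw [hset, lintegral_indicator measurableSet_Ioc,
          Measure.restrict_restrict measurableSet_Ioc, Ioc_inter_Ioc]
        congr 2 <;> simp [max_comm, min_comm]

private lemma toReal_Ioc (F : Measure ℝ) [IsProbabilityMeasure F] {a b : ℝ} (hab : a ≤ b) :
    (F (Ioc a b)).toReal = (F (Ioi a)).toReal - (F (Ioi b)).toReal := by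
  have hd : Ioi a \ Ioi b = Ioc a b := Ioi_diff_Ioi
  have hsub : Ioi b ⊆ Ioi a := Ioi_subset_Ioi hab
  have := measure_diff hsub measurableSet_Ioi.nullMeasurableSet (measure_ne_top F _)
  rw [hd] at this
  rw [this, ENNReal.toReal_sub_of_le (measure_mono hsub) (measure_ne_top F _)]

private lemma Nval (F : Measure ℝ) [IsProbabilityMeasure F] (A g : ℝ → ℝ)
    (hgc : Continuous g) (hgm : Monotone g) (hg0 : ∀ z, 0 ≤ g z)
    (hgA : ∀ z : ℝ, (0:ℝ) ≤ z → g z = A z) (c x : ℝ) :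
    (∫ y, Set.indicator {s : ℝ | 1 ≤ x - s ∧ x - s < c} (fun s => (A (x - s))^2 / (x - s)) y ∂F)
      = (∫⁻ y, (Ioc (x - c) (x - 1)).indicator
          (fun y => ENNReal.ofReal (g (x - y)^2 / (x - y))) y ∂F).toReal
    ∧ (∫⁻ y, (Ioc (x - c) (x - 1)).indicator
          (fun y => ENNReal.ofReal (g (x - y)^2 / (x - y))) y ∂F) ≠ ⊤ := by
  have hseteq : {s : ℝ | 1 ≤ x - s ∧ x - s < c} = Ioc (x - c) (x - 1) := by
    ext y
    simp only [mem_setOf_eq, mem_Ioc]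
    constructor
    · rintro ⟨h1, h2⟩; exact ⟨by linarith, by linarith⟩
    · rintro ⟨h1, h2⟩; exact ⟨by linarith, by linarith⟩
  have hu : Measurable fun y : ℝ => g (x - y)^2 / (x - y) :=
    (((hgc.comp (continuous_const.sub continuous_id)).pow 2).measurable).div
      (continuous_const.sub continuous_id).measurable
  have hfcongr : Set.indicator {s : ℝ | 1 ≤ x - s ∧ x - s < c}
      (fun s => (A (x - s))^2 / (x - s))
      = (Ioc (x - c) (x - 1)).indicator (fun y => g (x - y)^2 / (x - y)) := by
    rw [hseteq]
    refine Set.indicator_congr fun y hy => ?_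
    rw [hgA (x - y) (by linarith [hy.2])]
  have hnn : ∀ y, 0 ≤ (Ioc (x - c) (x - 1)).indicator (fun y => g (x - y)^2 / (x - y)) y :=
    fun y => Set.indicator_nonneg
      (fun y hy => div_nonneg (sq_nonneg _) (by linarith [hy.2])) y
  have hofc : ∀ y, ENNReal.ofReal ((Ioc (x - c) (x - 1)).indicator
        (fun y => g (x - y)^2 / (x - y)) y)
      = (Ioc (x - c) (x - 1)).indicator (fun y => ENNReal.ofReal (g (x - y)^2 / (x - y))) y := by
    intro y
    by_cases hy : y ∈ Ioc (x - c) (x - 1)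
    · rw [indicator_of_mem hy, indicator_of_mem hy]
    · rw [indicator_of_notMem hy, indicator_of_notMem hy, ENNReal.ofReal_zero]
  constructor
  · rw [hfcongr, integral_eq_lintegral_of_nonneg_ae (ae_of_all _ hnn)
      ((hu.indicator measurableSet_Ioc).aestronglyMeasurable)]
    congr 1
    exact lintegral_congr hofc
  · have hbd : ∀ y, (Ioc (x - c) (x - 1)).indicator
        (fun y => ENNReal.ofReal (g (x - y)^2 / (x - y))) y ≤ ENNReal.ofReal (g c ^ 2) := by
      intro y
      by_cases hy : y ∈ Ioc (x - c) (x - 1)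
      · rw [indicator_of_mem hy]
        refine ENNReal.ofReal_le_ofReal ?_
        have h1 : (1:ℝ) ≤ x - y := by linarith [hy.2]
        have h2 : x - y ≤ c := by linarith [hy.1]
        calc g (x - y)^2 / (x - y) ≤ g (x - y)^2 := div_le_self (sq_nonneg _) h1
          _ ≤ g c ^ 2 := pow_le_pow_left₀ (hg0 _) (hgm h2) 2
      · rw [indicator_of_notMem hy]; exact zero_le
    refine ne_top_of_le_ne_top ?_ (lintegral_mono hbd)
    rw [lintegral_const]
    exact ENNReal.mul_ne_top ENNReal.ofReal_ne_top (by simp)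

private lemma starval (F : Measure ℝ) [IsProbabilityMeasure F] (A g : ℝ → ℝ)
    (hgc : Continuous g) (hg0 : ∀ z, 0 ≤ g z) (hgA : ∀ z : ℝ, (0:ℝ) ≤ z → g z = A z)
    (h b x : ℝ) (hh : 0 < h) (hb1 : 1 ≤ b) (hbx : b < x) :
    ∫ s in (1:ℝ)..b, (A s)^2 / s * rr F h (x - s)
      = (∫⁻ s in Ioc 1 b, ENNReal.ofReal (g s^2 * (x - s) / (s * (F (Ioi (x - s))).toReal))
          * F (Ioc (x - s - h) (x - s)) ∂volume).toReal := by
  have hTanti : Antitone fun z : ℝ => (F (Ioi z)).toReal := fun a b hab =>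
    ENNReal.toReal_mono (measure_ne_top F _) (measure_mono (Ioi_subset_Ioi hab))
  have hTm : Measurable fun z : ℝ => (F (Ioi z)).toReal := hTanti.measurable
  have hWm : Measurable fun s : ℝ => g s^2 * (x - s) / (s * (F (Ioi (x - s))).toReal) :=
    (((hgc.measurable.pow_const 2).mul (measurable_const.sub measurable_id)).div
      (measurable_id.mul (hTm.comp (measurable_const.sub measurable_id))))
  have hmm : Measurable fun s : ℝ => (F (Ioc (x - s - h) (x - s))).toReal := by
    have : (fun s : ℝ => (F (Ioc (x - s - h) (x - s))).toReal)
        = fun s => (F (Ioi (x - s - h))).toReal - (F (Ioi (x - s))).toReal := by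
      funext s
      exact toReal_Ioc F (by linarith)
    rw [this]
    exact (hTm.comp ((measurable_const.sub measurable_id).sub measurable_const)).sub
      (hTm.comp (measurable_const.sub measurable_id))
  rw [intervalIntegral.integral_of_le hb1]
  rw [setIntegral_congr_fun measurableSet_Ioc
    (g := fun s => (g s^2 * (x - s) / (s * (F (Ioi (x - s))).toReal))
      * (F (Ioc (x - s - h) (x - s))).toReal) ?_]
  · rw [integral_eq_lintegral_of_nonneg_ae ?_ ((show Measurable fun s : ℝ => g s^2 * (x - s) / (s * (F (Ioi (x - s))).toReal) * (F (Ioc (x - s - h) (x - s))).toReal from hWm.mul hmm).aestronglyMeasurable.restrict)]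
    · congr 1
      refine lintegral_congr_ae ((ae_restrict_iff' measurableSet_Ioc).2 (ae_of_all _ ?_))
      intro s hs
      have hW0 : 0 ≤ g s^2 * (x - s) / (s * (F (Ioi (x - s))).toReal) :=
        div_nonneg (mul_nonneg (sq_nonneg _) (by linarith [hs.2]))
          (mul_nonneg (by linarith [hs.1]) ENNReal.toReal_nonneg)
      show ENNReal.ofReal (g s^2 * (x - s) / (s * (F (Ioi (x - s))).toReal)
          * (F (Ioc (x - s - h) (x - s))).toReal)
        = ENNReal.ofReal (g s^2 * (x - s) / (s * (F (Ioi (x - s))).toReal))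
          * F (Ioc (x - s - h) (x - s))
      rw [ENNReal.ofReal_mul hW0, ENNReal.ofReal_toReal (measure_ne_top F _)]
    · refine (ae_restrict_iff' measurableSet_Ioc).2 (ae_of_all _ ?_)
      intro s hs
      exact mul_nonneg (div_nonneg (mul_nonneg (sq_nonneg _) (by linarith [hs.2]))
        (mul_nonneg (by linarith [hs.1]) ENNReal.toReal_nonneg)) ENNReal.toReal_nonneg
  · intro s hs
    have hs1 : (0:ℝ) ≤ s := by linarith [hs.1]
    simp only
    rw [rr, ← hgA s hs1]
    ring

section Claims

variable (F : Measure ℝ) [IsProbabilityMeasure F]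

set_option maxHeartbeats 2000000 in
private lemma claimA
    (α : ℝ) (hα1 : 0 < α) (hα2 : α < 1)
    (A : ℝ → ℝ)
    (hApos : ∀ x : ℝ, 0 ≤ x → 0 < A x)
    (hAcont : ContinuousOn A (Set.Ici 0))
    (hAmono : StrictMonoOn A (Set.Ici 0))
    (hAreg : ∀ l : ℝ, 0 < l →
      Tendsto (fun x : ℝ => A (l * x) / A x) atTop (nhds (l ^ α)))
    (hT1 : (fun x : ℝ => (F (Set.Ioi x)).toReal) ~[atTop] fun x : ℝ => 1 / A x)
    (h : ℝ) (hh : 0 < h) :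
    (∀ η η' : ℝ, 0 < η → η < η' → η' < 1/4 → ∀ᶠ x in atTop,
      (1 / (A x) ^ 2 * ∫ s in (1:ℝ)..(η * x), (A s) ^ 2 / s * rr F h (x - s))
        ≤ (2*h*(1+h)) *
          (x / A x * ∫ y, Set.indicator {s : ℝ | 1 ≤ x - s ∧ x - s < η' * x}
            (fun s => (A (x - s)) ^ 2 / (x - s)) y ∂F))
    ∧ (∀ η η' : ℝ, 0 < η → η < η' → η' < 1/4 → ∀ᶠ x in atTop,
      (x / A x * ∫ y, Set.indicator {s : ℝ | 1 ≤ x - s ∧ x - s < η * x}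
            (fun s => (A (x - s)) ^ 2 / (x - s)) y ∂F)
        ≤ (48*(1+h)/h) *
          (1 / (A (x+h)) ^ 2 * ∫ s in (1:ℝ)..(η' * (x+h)), (A s) ^ 2 / s * rr F h ((x+h) - s))) := by
  classical
  -- the measurable monotone modification of A
  set g : ℝ → ℝ := fun z => A (max z 0) with hgdef
  have hgc : Continuous g :=
    hAcont.comp_continuous (continuous_id.max continuous_const) fun z => mem_Ici.2 (le_max_right _ _)
  have hgA : ∀ z : ℝ, 0 ≤ z → g z = A z := fun z hz => by
    rw [hgdef]; simp only; rw [max_eq_left hz]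
  have hg0 : ∀ z, 0 ≤ g z := fun z => (hApos _ (le_max_right _ _)).le
  have hgm : Monotone g := fun a b hab =>
    hAmono.monotoneOn (le_max_right a 0) (le_max_right b 0) (max_le_max hab le_rfl)
  have hAm : MonotoneOn A (Ici 0) := hAmono.monotoneOn
  -- tail facts
  obtain ⟨x₁, hx₁1, hx₁⟩ : ∃ x₁ : ℝ, 1 ≤ x₁ ∧ ∀ z, x₁ ≤ z →
      0 < A z ∧ 1/(2*A z) ≤ (F (Ioi z)).toReal ∧ (F (Ioi z)).toReal ≤ 2/(A z) := by
    have h1 := hT1.isLittleO.def (by norm_num : (0:ℝ) < 1/2)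
    obtain ⟨M, hM⟩ := eventually_atTop.1 (h1.and (eventually_ge_atTop (1:ℝ)))
    refine ⟨max M 1, le_max_right _ _, fun z hz => ?_⟩
    obtain ⟨hnorm, hz1⟩ := hM z (le_trans (le_max_left _ _) hz)
    have hz0 : (0:ℝ) ≤ z := by linarith
    have hA : 0 < A z := hApos z hz0
    refine ⟨hA, ?_, ?_⟩
    · have habs : |(F (Ioi z)).toReal - 1/A z| ≤ 1/2 * (1/A z) := by
        have h2 : ‖(F (Ioi z)).toReal - 1/A z‖ ≤ 1/2 * ‖1/A z‖ := hnorm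
        rw [Real.norm_eq_abs, Real.norm_eq_abs, abs_of_pos (by positivity : (0:ℝ) < 1/A z)] at h2
        exact h2
      rw [abs_le] at habs
      have he : (1:ℝ)/(2*A z) = 1/A z - 1/2 * (1/A z) := by field_simp; ring
      linarith [habs.1]
    · have habs : |(F (Ioi z)).toReal - 1/A z| ≤ 1/2 * (1/A z) := by
        have h2 : ‖(F (Ioi z)).toReal - 1/A z‖ ≤ 1/2 * ‖1/A z‖ := hnorm
        rw [Real.norm_eq_abs, Real.norm_eq_abs, abs_of_pos (by positivity : (0:ℝ) < 1/A z)] at h2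
        exact h2
      rw [abs_le] at habs
      have he : (2:ℝ)/A z = 1/A z + 1/2 * (1/A z) + 1/2 * (1/A z) := by field_simp; ring
      linarith [habs.2, (by positivity : (0:ℝ) < 1/2 * (1/A z))]
  have hTanti : Antitone fun z : ℝ => (F (Ioi z)).toReal := fun a b hab =>
    ENNReal.toReal_mono (measure_ne_top F _) (measure_mono (Ioi_subset_Ioi hab))
  have hTm : Measurable fun z : ℝ => (F (Ioi z)).toReal := hTanti.measurable
  have hWmr : ∀ x : ℝ, Measurable fun s : ℝ => g s^2 * (x - s) / (s * (F (Ioi (x - s))).toReal) :=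
    fun x => (((hgc.measurable.pow_const 2).mul (measurable_const.sub measurable_id)).div
      (measurable_id.mul (hTm.comp (measurable_const.sub measurable_id))))
  have hWm : ∀ x : ℝ, Measurable fun s : ℝ =>
      ENNReal.ofReal (g s^2 * (x - s) / (s * (F (Ioi (x - s))).toReal)) :=
    fun x => ENNReal.measurable_ofReal.comp (hWmr x)
  constructor
  · ---- Claim A
    intro η η' hη hηη' hη4
    filter_upwards [eventually_ge_atTop ((1+h)/η), eventually_ge_atTop (x₁/(1-η)),
      eventually_ge_atTop x₁, eventually_gt_atTop (h/(η'-η)), eventually_gt_atTop (1:ℝ)]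
      with x hF1 hF2 hF3 hF4 hx1'
    have hx0 : (0:ℝ) < x := by linarith
    have hbh : 1 + h ≤ η * x := by
      rw [mul_comm]; exact (div_le_iff₀ hη).1 hF1
    have hb1 : (1:ℝ) ≤ η * x := by linarith
    have hbx : η * x < x := by nlinarith
    have hsx₁ : ∀ s : ℝ, s ≤ η * x → x₁ ≤ x - s := by
      intro s hs
      have h2 : x₁ ≤ x * (1 - η) := (div_le_iff₀ (by linarith : (0:ℝ) < 1 - η)).1 hF2
      nlinarith
    have hηh : η * x + h < η' * x := by
      have h2 : h < x * (η' - η) := (div_lt_iff₀ (by linarith : (0:ℝ) < η' - η)).1 hF4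
      nlinarith
    have hAx : 0 < A x := (hx₁ x hF3).1
    -- star value as double lintegral
    have hSval := starval F A g hgc hg0 hgA h (η*x) x hh hb1 hbx
    have hEton := tonelli_star F
      (fun s => ENNReal.ofReal (g s^2 * (x - s) / (s * (F (Ioi (x - s))).toReal)))
      (hWm x) x h (η*x)
    set K : ℝ := 2*(1+h)*h*x*(A x) with hKdef
    have hK0 : 0 ≤ K := by positivity
    set Jset : Set ℝ := Ioc (x - η'*x) (x - 1) with hJsetdef
    set Jf : ℝ → ENNReal := fun y => ENNReal.ofReal (g (x - y)^2 / (x - y)) with hJfdef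
    obtain ⟨hNeq, hJfin⟩ := Nval F A g hgc hgm hg0 hgA (η'*x) x
    -- pointwise bound on the inner integral
    have hbound : ∀ y : ℝ,
        (∫⁻ s in Ioc (max 1 (x - y - h)) (min (η*x) (x - y)),
          ENNReal.ofReal (g s^2 * (x - s) / (s * (F (Ioi (x - s))).toReal)) ∂volume)
        ≤ Jset.indicator (fun y => ENNReal.ofReal (K * (g (x - y)^2 / (x - y)))) y := by
      intro y
      by_cases hcase : 1 < x - y ∧ x - y ≤ η * x + h
      · have hymem : y ∈ Jset := by
          rw [hJsetdef, mem_Ioc]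
          exact ⟨by linarith [hcase.2, hηh], by linarith [hcase.1]⟩
        rw [indicator_of_mem hymem]
        have hxy1 : (1:ℝ) < x - y := hcase.1
        set By : ℝ := 2*(1+h)*x*(A x) * (g (x - y)^2 / (x - y)) with hBydef
        have hBy0 : 0 ≤ By := by
          have : 0 ≤ g (x - y)^2 / (x - y) := div_nonneg (sq_nonneg _) (by linarith)
          positivity
        have hWineq : ∀ s ∈ Ioc (max 1 (x - y - h)) (min (η*x) (x - y)),
            g s^2 * (x - s) / (s * (F (Ioi (x - s))).toReal) ≤ By := by
          intro s hs
          have hs1 : (1:ℝ) < s := lt_of_le_of_lt (le_max_left _ _) hs.1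
          have hsxy : s ≤ x - y := le_trans hs.2 (min_le_right _ _)
          have hsηx : s ≤ η * x := le_trans hs.2 (min_le_left _ _)
          have hxs₁ : x₁ ≤ x - s := hsx₁ s hsηx
          have hAxs : 0 < A (x - s) := (hx₁ _ hxs₁).1
          have hTlb : 1/(2*A (x - s)) ≤ (F (Ioi (x - s))).toReal := (hx₁ _ hxs₁).2.1
          have hxs0 : (0:ℝ) ≤ x - s := by linarith
          have hAxsle : A (x - s) ≤ A x := hAm hxs0 hx0.le (by linarith)
          have hTlb2 : 1/(2*A x) ≤ (F (Ioi (x - s))).toReal :=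
            le_trans (by apply one_div_le_one_div_of_le <;> nlinarith) hTlb
          have hsge : (x - y)/(1+h) ≤ s := by
            refine le_trans ?_ hs.1.le
            by_cases hxy2 : x - y ≤ 1 + h
            · exact le_trans ((div_le_one (by linarith)).2 hxy2) (le_max_left _ _)
            · refine le_trans ?_ (le_max_right _ _)
              rw [div_le_iff₀ (by linarith : (0:ℝ) < 1 + h)]
              nlinarith
          have hnum : g s^2 * (x - s) ≤ g (x - y)^2 * x := by
            have h1 : g s^2 ≤ g (x - y)^2 := by
              have := hgm hsxy
              nlinarith [hg0 s, hg0 (x - y)]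
            nlinarith [sq_nonneg (g s), hg0 (x - y), sq_nonneg (g (x-y))]
          have hdenpos : (0:ℝ) < (x - y)/(1+h) * (1/(2*A x)) := by positivity
          have hden : (x - y)/(1+h) * (1/(2*A x)) ≤ s * (F (Ioi (x - s))).toReal := by
            apply mul_le_mul hsge hTlb2 (by positivity) (by linarith)
          calc g s^2 * (x - s) / (s * (F (Ioi (x - s))).toReal)
              ≤ g (x - y)^2 * x / ((x - y)/(1+h) * (1/(2*A x))) := by
                apply div_le_div₀ (by nlinarith [sq_nonneg (g (x-y))]) hnum hdenpos hden
            _ = By := by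
                rw [hBydef]; field_simp
        calc (∫⁻ s in Ioc (max 1 (x - y - h)) (min (η*x) (x - y)),
              ENNReal.ofReal (g s^2 * (x - s) / (s * (F (Ioi (x - s))).toReal)) ∂volume)
            ≤ ∫⁻ _ in Ioc (max 1 (x - y - h)) (min (η*x) (x - y)),
                ENNReal.ofReal By ∂volume :=
              setLIntegral_mono' measurableSet_Ioc
                (fun s hs => ENNReal.ofReal_le_ofReal (hWineq s hs))
          _ = ENNReal.ofReal By * volume (Ioc (max 1 (x - y - h)) (min (η*x) (x - y))) :=
              setLIntegral_const _ _
          _ ≤ ENNReal.ofReal By * ENNReal.ofReal h := by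
              refine mul_le_mul_of_nonneg_left ?_ (zero_le)
              rw [Real.volume_Ioc]
              refine ENNReal.ofReal_le_ofReal ?_
              have := min_le_right (η*x) (x - y)
              have := le_max_right 1 (x - y - h)
              linarith
          _ = ENNReal.ofReal (K * (g (x - y)^2 / (x - y))) := by
              rw [← ENNReal.ofReal_mul hBy0]
              congr 1
              rw [hBydef, hKdef]; ring
      · push_neg at hcase
        have hD : Ioc (max 1 (x - y - h)) (min (η*x) (x - y)) = ∅ := by
          rw [Ioc_eq_empty]
          intro hlt
          rcases lt_or_ge 1 (x - y) with h1 | h1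
          · have h2 := hcase h1
            have h3 : x - y - h ≤ max 1 (x - y - h) := le_max_right _ _
            have h4 : min (η*x) (x - y) ≤ η*x := min_le_left _ _
            linarith
          · have h3 : (1:ℝ) ≤ max 1 (x - y - h) := le_max_left _ _
            have h4 : min (η*x) (x - y) ≤ x - y := min_le_right _ _
            linarith
        rw [hD]
        simp only [Measure.restrict_empty, lintegral_zero_measure]
        exact zero_le
    -- assemble
    have hconst : ∀ y : ℝ, Jset.indicator
        (fun y => ENNReal.ofReal (K * (g (x - y)^2 / (x - y)))) y
        = ENNReal.ofReal K * Jset.indicator Jf y := by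
      intro y
      by_cases hy : y ∈ Jset
      · rw [indicator_of_mem hy, indicator_of_mem hy, hJfdef, ← ENNReal.ofReal_mul hK0]
      · rw [indicator_of_notMem hy, indicator_of_notMem hy, mul_zero]
    have hEle : (∫⁻ s in Ioc 1 (η*x),
        ENNReal.ofReal (g s^2 * (x - s) / (s * (F (Ioi (x - s))).toReal))
          * F (Ioc (x - s - h) (x - s)) ∂volume)
        ≤ ENNReal.ofReal K * ∫⁻ y, Jset.indicator Jf y ∂F := by
      rw [hEton]
      calc (∫⁻ y, ∫⁻ s in Ioc (max 1 (x - y - h)) (min (η*x) (x - y)),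
            ENNReal.ofReal (g s^2 * (x - s) / (s * (F (Ioi (x - s))).toReal)) ∂volume ∂F)
          ≤ ∫⁻ y, Jset.indicator
              (fun y => ENNReal.ofReal (K * (g (x - y)^2 / (x - y)))) y ∂F :=
            lintegral_mono hbound
        _ = ∫⁻ y, ENNReal.ofReal K * Jset.indicator Jf y ∂F := lintegral_congr hconst
        _ = ENNReal.ofReal K * ∫⁻ y, Jset.indicator Jf y ∂F := by
            rw [lintegral_const_mul]
            exact (ENNReal.measurable_ofReal.comp
              ((((hgc.comp (continuous_const.sub continuous_id)).pow 2).measurable).div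
                (continuous_const.sub continuous_id).measurable)).indicator measurableSet_Ioc
    have hJne : (∫⁻ y, Jset.indicator Jf y ∂F) ≠ ⊤ := hJfin
    have htr : (∫⁻ s in Ioc 1 (η*x),
        ENNReal.ofReal (g s^2 * (x - s) / (s * (F (Ioi (x - s))).toReal))
          * F (Ioc (x - s - h) (x - s)) ∂volume).toReal
        ≤ K * (∫⁻ y, Jset.indicator Jf y ∂F).toReal := by
      calc (∫⁻ s in Ioc 1 (η*x),
          ENNReal.ofReal (g s^2 * (x - s) / (s * (F (Ioi (x - s))).toReal))
            * F (Ioc (x - s - h) (x - s)) ∂volume).toReal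
          ≤ (ENNReal.ofReal K * ∫⁻ y, Jset.indicator Jf y ∂F).toReal :=
            ENNReal.toReal_mono (ENNReal.mul_ne_top ENNReal.ofReal_ne_top hJne) hEle
        _ = K * (∫⁻ y, Jset.indicator Jf y ∂F).toReal := by
            rw [ENNReal.toReal_mul, ENNReal.toReal_ofReal hK0]
    rw [hSval, hNeq]
    calc 1/(A x)^2 * (∫⁻ s in Ioc 1 (η*x),
          ENNReal.ofReal (g s^2 * (x - s) / (s * (F (Ioi (x - s))).toReal))
            * F (Ioc (x - s - h) (x - s)) ∂volume).toReal
        ≤ 1/(A x)^2 * (K * (∫⁻ y, Jset.indicator Jf y ∂F).toReal) := by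
          apply mul_le_mul_of_nonneg_left htr (by positivity)
      _ = (2*h*(1+h)) * (x / A x * (∫⁻ y, Jset.indicator Jf y ∂F).toReal) := by
          rw [hKdef]; field_simp
  · ---- Claim B
    intro η η' hη hηη' hη4
    have hpow : (1:ℝ)/2 < (1-η)^α := by
      have h1 : ((1-η):ℝ)^(1:ℝ) ≤ (1-η)^α :=
        Real.rpow_le_rpow_of_exponent_ge (by linarith) (by linarith) hα2.le
      rw [Real.rpow_one] at h1; linarith
    have hpow2 : (2:ℝ)^α < 3 := by
      have h1 : (2:ℝ)^α ≤ 2^(1:ℝ) :=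
        Real.rpow_le_rpow_of_exponent_le (by norm_num) hα2.le
      rw [Real.rpow_one] at h1; linarith
    filter_upwards [eventually_ge_atTop (1/η'), eventually_ge_atTop (x₁/(1-η')),
      eventually_ge_atTop ((4/3)*x₁), eventually_ge_atTop (h*(1-η')/(η'-η)),
      eventually_ge_atTop h, eventually_gt_atTop (1:ℝ),
      (hAreg (1-η) (by linarith)).eventually_const_lt hpow,
      (hAreg 2 (by norm_num)).eventually_lt_const hpow2,
      eventually_ge_atTop x₁]
      with x hF1 hF2 hF3 hF4 hFh hx1' hAq hA2 hFx₁
    have hx0 : (0:ℝ) < x := by linarith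
    have hη'0 : (0:ℝ) < η' := lt_trans hη hηη'
    have hη'1 : η' < 1 := by linarith
    have hAx : 0 < A x := (hx₁ x hFx₁).1
    have hAxh : 0 < A (x+h) := hApos (x+h) (by linarith)
    have hη'x : (1:ℝ) ≤ x * η' := (div_le_iff₀ hη'0).1 hF1
    have hb1' : (1:ℝ) ≤ η' * (x+h) := by
      have h1 : 0 < η' * h := mul_pos hη'0 hh
      have h2 : η' * (x+h) = x * η' + η' * h := by ring
      linarith
    have hbx' : η' * (x+h) < x + h := by
      have h1 : 0 < (1 - η') * (x + h) := mul_pos (by linarith) (by linarith)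
      have h2 : (1 - η') * (x + h) = (x + h) - η' * (x + h) := by ring
      linarith
    have hAhalf : (1/2)*A x ≤ A ((1-η)*x) := by
      have := (lt_div_iff₀ hAx).1 hAq; linarith
    have hA3 : A (x+h) ≤ 3*A x := by
      have h2 : A (2*x) < 3 * A x := (div_lt_iff₀ hAx).1 hA2
      have h3 : A (x+h) ≤ A (2*x) :=
        hAm (mem_Ici.2 (by linarith)) (mem_Ici.2 (by linarith)) (by linarith)
      linarith
    have hsx₁' : ∀ s : ℝ, s ≤ η' * (x+h) → x₁ ≤ x + h - s := by
      intro s hs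
      have h2 : x₁ ≤ x * (1 - η') := (div_le_iff₀ (by linarith : (0:ℝ) < 1 - η')).1 hF2
      have h3 : 0 ≤ (1 - η') * h := mul_nonneg (by linarith) hh.le
      have h4 : (1 - η') * (x + h) = x * (1 - η') + (1 - η') * h := by ring
      have h5 : (1 - η') * (x + h) = (x + h) - η' * (x + h) := by ring
      linarith
    have hwin : η * x + h ≤ η' * (x+h) := by
      have h2 : h * (1-η') ≤ x * (η' - η) := (div_le_iff₀ (by linarith : (0:ℝ) < η' - η)).1 hF4
      have h3 : η' * (x+h) - (η*x + h) = x*(η'-η) - h*(1-η') := by ring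
      linarith
    have hSval := starval F A g hgc hg0 hgA h (η'*(x+h)) (x+h) hh hb1' hbx'
    have hEton := tonelli_star F
      (fun s => ENNReal.ofReal (g s^2 * ((x+h) - s) / (s * (F (Ioi ((x+h) - s))).toReal)))
      (hWm (x+h)) (x+h) h (η'*(x+h))
    set cK : ℝ := 3*h*x*(A x)/(16*(1+h)) with hcKdef
    have hcK0 : 0 ≤ cK := by positivity
    set Jset : Set ℝ := Ioc (x - η*x) (x - 1) with hJsetdef
    set Jf : ℝ → ENNReal := fun y => ENNReal.ofReal (g (x - y)^2 / (x - y)) with hJfdef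
    obtain ⟨hNeq, hJfin⟩ := Nval F A g hgc hgm hg0 hgA (η*x) x
    -- pointwise lower bound on the inner integral
    have hlowbound : ∀ y : ℝ,
        Jset.indicator (fun y => ENNReal.ofReal (cK * (g (x - y)^2 / (x - y)))) y
        ≤ ∫⁻ s in Ioc (max 1 (x + h - y - h)) (min (η'*(x+h)) (x + h - y)),
            ENNReal.ofReal (g s^2 * ((x+h) - s) / (s * (F (Ioi ((x+h) - s))).toReal)) ∂volume := by
      intro y
      by_cases hy : y ∈ Jset
      · rw [indicator_of_mem hy]
        rw [hJsetdef, mem_Ioc] at hy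
        have hxy1 : (1:ℝ) ≤ x - y := by linarith [hy.2]
        have hxyη : x - y < η * x := by linarith [hy.1]
        have hymax : max 1 (x + h - y - h) = x - y := by
          rw [show x + h - y - h = x - y by ring]; exact max_eq_right hxy1
        have hymin : min (η'*(x+h)) (x + h - y) = x + h - y :=
          min_eq_right (by linarith)
        rw [hymax, hymin]
        have hηq : η * x < (1/4) * x := mul_lt_mul_of_pos_right (by linarith) hx0
        have hyy : (3/4)*x ≤ y := by linarith [hy.1]
        have hyx₁ : x₁ ≤ y := by linarith
        have hmx : (1-η)*x = x - η*x := by ring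
        have hAy : (1/2)*A x ≤ A y := by
          refine le_trans hAhalf (hAm ?_ ?_ ?_)
          · simp only [mem_Ici]; exact mul_nonneg (by linarith) hx0.le
          · simp only [mem_Ici]; linarith
          · linarith [hy.1]
        have hAypos : 0 < A y := (hx₁ y hyx₁).1
        have hTy : (F (Ioi y)).toReal ≤ 4/(A x) := by
          refine le_trans (hx₁ y hyx₁).2.2 ?_
          rw [div_le_div_iff₀ hAypos hAx]
          linarith
        set L : ℝ := 3*x*(A x)/(16*(1+h)) * (g (x - y)^2 / (x - y)) with hLdef
        have hL0 : 0 ≤ L := by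
          have : 0 ≤ g (x - y)^2 / (x - y) := div_nonneg (sq_nonneg _) (by linarith)
          positivity
        have hlow : ∀ s ∈ Ioc (x - y) (x + h - y),
            L ≤ g s^2 * ((x+h) - s) / (s * (F (Ioi ((x+h) - s))).toReal) := by
          intro s hs
          have hs1 : x - y < s := hs.1
          have hs2 : s ≤ x + h - y := hs.2
          have hsx₁s : x₁ ≤ x + h - s := by linarith
          have hApos' : 0 < A (x + h - s) := (hx₁ _ hsx₁s).1
          have hTpos : 0 < (F (Ioi (x + h - s))).toReal :=
            lt_of_lt_of_le (div_pos one_pos (by linarith)) (hx₁ _ hsx₁s).2.1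
          have hTub : (F (Ioi (x + h - s))).toReal ≤ 4/(A x) :=
            le_trans (hTanti (by linarith : y ≤ x + h - s)) hTy
          have hgs : g (x - y) ≤ g s := hgm (by linarith)
          have hnum : g (x - y)^2 * ((3/4)*x) ≤ g s^2 * ((x+h) - s) := by
            have h1 : g (x - y)^2 ≤ g s^2 := pow_le_pow_left₀ (hg0 _) hgs 2
            exact mul_le_mul h1 (by linarith) (by positivity) (sq_nonneg _)
          have hs_ub : s ≤ (1+h)*(x - y) := by
            have h1 : h * 1 ≤ h * (x - y) := mul_le_mul_of_nonneg_left hxy1 hh.le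
            have h2 : (1+h)*(x - y) = (x - y) + h * (x - y) := by ring
            linarith
          have hden_ub : s * (F (Ioi (x + h - s))).toReal ≤ (1+h)*(x - y) * (4/(A x)) := by
            apply mul_le_mul hs_ub hTub ENNReal.toReal_nonneg (by positivity)
          have hden_pos : 0 < s * (F (Ioi (x + h - s))).toReal :=
            mul_pos (by linarith) hTpos
          have hLeq : L = (g (x - y)^2 * ((3/4)*x)) / ((1+h)*(x - y) * (4/(A x))) := by
            rw [hLdef]; field_simp; ring
          rw [hLeq]
          exact div_le_div₀ (mul_nonneg (sq_nonneg _) (by linarith)) hnum hden_pos hden_ub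
        calc ENNReal.ofReal (cK * (g (x - y)^2 / (x - y)))
            = ENNReal.ofReal L * ENNReal.ofReal h := by
              rw [← ENNReal.ofReal_mul hL0]
              congr 1
              rw [hLdef, hcKdef]; ring
          _ = ENNReal.ofReal L * volume (Ioc (x - y) (x + h - y)) := by
              rw [Real.volume_Ioc, show x + h - y - (x - y) = h by ring]
          _ = ∫⁻ _ in Ioc (x - y) (x + h - y), ENNReal.ofReal L ∂volume :=
              (setLIntegral_const _ _).symm
          _ ≤ ∫⁻ s in Ioc (x - y) (x + h - y),
                ENNReal.ofReal (g s^2 * ((x+h) - s) / (s * (F (Ioi ((x+h) - s))).toReal)) ∂volume :=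
              setLIntegral_mono' measurableSet_Ioc
                (fun s hs => ENNReal.ofReal_le_ofReal (hlow s hs))
      · rw [indicator_of_notMem hy]; exact zero_le
    -- finiteness of E'
    have hE'fin : (∫⁻ s in Ioc 1 (η'*(x+h)),
        ENNReal.ofReal (g s^2 * ((x+h) - s) / (s * (F (Ioi ((x+h) - s))).toReal))
          * F (Ioc ((x+h) - s - h) ((x+h) - s)) ∂volume) ≠ ⊤ := by
      set Wmax : ℝ := g (η'*(x+h))^2 * ((x+h) * (2*A (x+h))) with hWmaxdef
      have hbnd : ∀ s ∈ Ioc (1:ℝ) (η'*(x+h)),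
          ENNReal.ofReal (g s^2 * ((x+h) - s) / (s * (F (Ioi ((x+h) - s))).toReal))
            * F (Ioc ((x+h) - s - h) ((x+h) - s)) ≤ ENNReal.ofReal Wmax := by
        intro s hs
        have hs1 : (1:ℝ) < s := hs.1
        have hxh₁ : x₁ ≤ x + h := by linarith
        have hT1lb : 1/(2*A (x+h)) ≤ (F (Ioi (x+h))).toReal := (hx₁ _ hxh₁).2.1
        have hTlb : 1/(2*A (x+h)) ≤ (F (Ioi ((x+h) - s))).toReal :=
          le_trans hT1lb (hTanti (by linarith))
        have hW : g s^2 * ((x+h) - s) / (s * (F (Ioi ((x+h) - s))).toReal) ≤ Wmax := by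
          rcases le_or_gt ((x+h) - s) 0 with hneg | hpos
          · refine le_trans (div_nonpos_of_nonpos_of_nonneg ?_ ?_) ?_
            · exact mul_nonpos_of_nonneg_of_nonpos (sq_nonneg _) hneg
            · exact mul_nonneg (by linarith) ENNReal.toReal_nonneg
            · rw [hWmaxdef]; positivity
          · have hnum : g s^2 * ((x+h) - s) ≤ g (η'*(x+h))^2 * (x+h) := by
              have h1 : g s^2 ≤ g (η'*(x+h))^2 := pow_le_pow_left₀ (hg0 _) (hgm hs.2) 2
              exact mul_le_mul h1 (by linarith) hpos.le (sq_nonneg _)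
            have hden : 1/(2*A (x+h)) ≤ s * (F (Ioi ((x+h) - s))).toReal := by
              have h1 : 1 * (F (Ioi ((x+h) - s))).toReal ≤ s * (F (Ioi ((x+h) - s))).toReal :=
                mul_le_mul_of_nonneg_right (by linarith) ENNReal.toReal_nonneg
              rw [one_mul] at h1
              linarith
            calc g s^2 * ((x+h) - s) / (s * (F (Ioi ((x+h) - s))).toReal)
                ≤ g (η'*(x+h))^2 * (x+h) / (1/(2*A (x+h))) := by
                  apply div_le_div₀ (mul_nonneg (sq_nonneg _) (by linarith))
                    hnum (by positivity) hden
              _ = Wmax := by rw [hWmaxdef]; field_simp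
        calc ENNReal.ofReal (g s^2 * ((x+h) - s) / (s * (F (Ioi ((x+h) - s))).toReal))
              * F (Ioc ((x+h) - s - h) ((x+h) - s))
            ≤ ENNReal.ofReal Wmax * 1 :=
              mul_le_mul' (ENNReal.ofReal_le_ofReal hW) prob_le_one
          _ = ENNReal.ofReal Wmax := mul_one _
      refine ne_top_of_le_ne_top ?_ (setLIntegral_mono' measurableSet_Ioc hbnd)
      rw [setLIntegral_const, Real.volume_Ioc]
      exact ENNReal.mul_ne_top ENNReal.ofReal_ne_top ENNReal.ofReal_ne_top
    -- assemble
    have hJmeas : Measurable fun y : ℝ => Jset.indicator Jf y :=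
      (ENNReal.measurable_ofReal.comp
        ((((hgc.comp (continuous_const.sub continuous_id)).pow 2).measurable).div
          (continuous_const.sub continuous_id).measurable)).indicator measurableSet_Ioc
    have hconst : ∀ y : ℝ, Jset.indicator
        (fun y => ENNReal.ofReal (cK * (g (x - y)^2 / (x - y)))) y
        = ENNReal.ofReal cK * Jset.indicator Jf y := by
      intro y
      by_cases hy : y ∈ Jset
      · rw [indicator_of_mem hy, indicator_of_mem hy, hJfdef, ← ENNReal.ofReal_mul hcK0]
      · rw [indicator_of_notMem hy, indicator_of_notMem hy, mul_zero]
    have hEge : ENNReal.ofReal cK * (∫⁻ y, Jset.indicator Jf y ∂F)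
        ≤ (∫⁻ s in Ioc 1 (η'*(x+h)),
          ENNReal.ofReal (g s^2 * ((x+h) - s) / (s * (F (Ioi ((x+h) - s))).toReal))
            * F (Ioc ((x+h) - s - h) ((x+h) - s)) ∂volume) := by
      rw [hEton]
      calc ENNReal.ofReal cK * (∫⁻ y, Jset.indicator Jf y ∂F)
          = ∫⁻ y, ENNReal.ofReal cK * Jset.indicator Jf y ∂F :=
            (lintegral_const_mul _ hJmeas).symm
        _ = ∫⁻ y, Jset.indicator
              (fun y => ENNReal.ofReal (cK * (g (x - y)^2 / (x - y)))) y ∂F :=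
            lintegral_congr fun y => (hconst y).symm
        _ ≤ ∫⁻ y, ∫⁻ s in Ioc (max 1 (x + h - y - h)) (min (η'*(x+h)) (x + h - y)),
              ENNReal.ofReal (g s^2 * ((x+h) - s) / (s * (F (Ioi ((x+h) - s))).toReal)) ∂volume ∂F :=
            lintegral_mono hlowbound
    have htr : cK * (∫⁻ y, Jset.indicator Jf y ∂F).toReal
        ≤ (∫⁻ s in Ioc 1 (η'*(x+h)),
          ENNReal.ofReal (g s^2 * ((x+h) - s) / (s * (F (Ioi ((x+h) - s))).toReal))
            * F (Ioc ((x+h) - s - h) ((x+h) - s)) ∂volume).toReal := by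
      have h1 := ENNReal.toReal_mono hE'fin hEge
      rwa [ENNReal.toReal_mul, ENNReal.toReal_ofReal hcK0] at h1
    rw [hNeq, hSval]
    have hsq : A (x+h)^2 ≤ 9*(A x)^2 := by
      have hp : 0 ≤ (3*A x - A (x+h)) * (3*A x + A (x+h)) :=
        mul_nonneg (by linarith) (by linarith)
      have hq : (3*A x - A (x+h)) * (3*A x + A (x+h)) = 9*(A x)^2 - A (x+h)^2 := by ring
      linarith
    have hinvsq : 1/(9*(A x)^2) ≤ 1/(A (x+h))^2 := by
      rw [div_le_div_iff₀ (by positivity) (by positivity)]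
      linarith
    have hstep : (h/(48*(1+h))) * (x / A x * (∫⁻ y, Jset.indicator Jf y ∂F).toReal)
        ≤ 1/(A (x+h))^2 * (∫⁻ s in Ioc 1 (η'*(x+h)),
          ENNReal.ofReal (g s^2 * ((x+h) - s) / (s * (F (Ioi ((x+h) - s))).toReal))
            * F (Ioc ((x+h) - s - h) ((x+h) - s)) ∂volume).toReal := by
      calc (h/(48*(1+h))) * (x / A x * (∫⁻ y, Jset.indicator Jf y ∂F).toReal)
          = 1/(9*(A x)^2) * (cK * (∫⁻ y, Jset.indicator Jf y ∂F).toReal) := by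
            rw [hcKdef]; field_simp; ring
        _ ≤ 1/(A (x+h))^2 * (cK * (∫⁻ y, Jset.indicator Jf y ∂F).toReal) :=
            mul_le_mul_of_nonneg_right hinvsq
              (mul_nonneg hcK0 ENNReal.toReal_nonneg)
        _ ≤ 1/(A (x+h))^2 * (∫⁻ s in Ioc 1 (η'*(x+h)),
              ENNReal.ofReal (g s^2 * ((x+h) - s) / (s * (F (Ioi ((x+h) - s))).toReal))
                * F (Ioc ((x+h) - s - h) ((x+h) - s)) ∂volume).toReal :=
            mul_le_mul_of_nonneg_left htr (by positivity)
    calc x / A x * (∫⁻ y, Jset.indicator Jf y ∂F).toReal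
        = (48*(1+h)/h) * ((h/(48*(1+h)))
            * (x / A x * (∫⁻ y, Jset.indicator Jf y ∂F).toReal)) := by
          have hc1 : (48*(1+h)/h) * (h/(48*(1+h))) = 1 := by
            field_simp
          rw [← mul_assoc, hc1, one_mul]
      _ ≤ (48*(1+h)/h) * (1/(A (x+h))^2 * (∫⁻ s in Ioc 1 (η'*(x+h)),
            ENNReal.ofReal (g s^2 * ((x+h) - s) / (s * (F (Ioi ((x+h) - s))).toReal))
              * F (Ioc ((x+h) - s - h) ((x+h) - s)) ∂volume).toReal) :=
          mul_le_mul_of_nonneg_left hstep (by positivity)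

end Claims

/-- **Lemma 3.1 (first part)**: under (T1), condition (★) is equivalent to
condition (N), its reformulation in terms of the law `F` itself. -/
theorem condStar_iff_condN
    (F : Measure ℝ) [IsProbabilityMeasure F]
    (hFsupp : F (Set.Iio 0) = 0)
    (α : ℝ) (hα1 : 0 < α) (hα2 : α < 1)
    (A : ℝ → ℝ)
    (hApos : ∀ x : ℝ, 0 ≤ x → 0 < A x)
    (hAcont : ContinuousOn A (Set.Ici 0))
    (hAmono : StrictMonoOn A (Set.Ici 0))
    (hAreg : ∀ l : ℝ, 0 < l →
      Tendsto (fun x : ℝ => A (l * x) / A x) atTop (nhds (l ^ α)))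
    (hT1 : (fun x : ℝ => (F (Set.Ioi x)).toReal) ~[atTop] fun x : ℝ => 1 / A x)
    (h : ℝ) (hh : 0 < h)
    (hspan : (∃ t, IsArithSpan F t) → IsGreatest {t | IsArithSpan F t} h)
    :
    CondStar F A h ↔ CondN F A := by
  obtain ⟨hAcl, hBcl⟩ := claimA F α hα1 hα2 A hApos hAcont hAmono hAreg hT1 h hh
  have hp1 : (0:ℝ) < 1 + h := by linarith
  have hCA : (0:ℝ) < 2*h*(1+h) := mul_pos (mul_pos two_pos hh) hp1
  have hCB : (0:ℝ) < 48*(1+h)/h := div_pos (by linarith) hh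
  have hC : (0:ℝ) < 2*h*(1+h) + 48*(1+h)/h := by linarith
  have hS0 : ∀ η : ℝ, 0 < η → η < 1/4 → ∀ᶠ x in atTop,
      0 ≤ 1 / (A x) ^ 2 * ∫ s in (1:ℝ)..(η * x), (A s) ^ 2 / s * rr F h (x - s) := by
    intro η hη _
    filter_upwards [eventually_ge_atTop (1/η), eventually_gt_atTop (0:ℝ)] with x hx hx0
    have hb1 : (1:ℝ) ≤ η * x := by rw [mul_comm]; exact (div_le_iff₀ hη).1 hx
    have hbx : η * x ≤ x := by
      have h1 : η * x ≤ 1 * x := mul_le_mul_of_nonneg_right (by linarith) hx0.le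
      linarith [h1, one_mul x]
    refine mul_nonneg (by positivity) (intervalIntegral.integral_nonneg hb1 ?_)
    intro u hu
    refine mul_nonneg (div_nonneg (sq_nonneg _) (by linarith [hu.1])) ?_
    simp only [rr]
    exact div_nonneg (mul_nonneg (by linarith [hu.2]) ENNReal.toReal_nonneg)
      ENNReal.toReal_nonneg
  have hN0 : ∀ η : ℝ, 0 < η → η < 1/4 → ∀ᶠ x in atTop,
      0 ≤ x / A x * ∫ y, Set.indicator {s : ℝ | 1 ≤ x - s ∧ x - s < η * x}
        (fun s => (A (x - s)) ^ 2 / (x - s)) y ∂F := by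
    intro η hη _
    filter_upwards [eventually_ge_atTop (0:ℝ)] with x hx0
    refine mul_nonneg (div_nonneg hx0 (hApos x hx0).le) (integral_nonneg fun y => ?_)
    exact indicator_nonneg (fun s hs => div_nonneg (sq_nonneg _) (by linarith [hs.1])) y
  have hSN : ∀ η η' : ℝ, 0 < η → η < η' → η' < 1/4 → ∀ᶠ x in atTop,
      (1 / (A x) ^ 2 * ∫ s in (1:ℝ)..(η * x), (A s) ^ 2 / s * rr F h (x - s))
        ≤ (2*h*(1+h) + 48*(1+h)/h) *
          (x / A x * ∫ y, Set.indicator {s : ℝ | 1 ≤ x - s ∧ x - s < η' * x}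
            (fun s => (A (x - s)) ^ 2 / (x - s)) y ∂F) := by
    intro η η' h1 h2 h3
    filter_upwards [hAcl η η' h1 h2 h3, hN0 η' (lt_trans h1 h2) h3] with x ha hn
    have hd : 0 ≤ (48*(1+h)/h) * (x / A x * ∫ y,
        Set.indicator {s : ℝ | 1 ≤ x - s ∧ x - s < η' * x}
          (fun s => (A (x - s)) ^ 2 / (x - s)) y ∂F) := mul_nonneg hCB.le hn
    have hexp : (2*h*(1+h) + 48*(1+h)/h) * (x / A x * ∫ y,
        Set.indicator {s : ℝ | 1 ≤ x - s ∧ x - s < η' * x}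
          (fun s => (A (x - s)) ^ 2 / (x - s)) y ∂F)
        = (2*h*(1+h)) * (x / A x * ∫ y,
            Set.indicator {s : ℝ | 1 ≤ x - s ∧ x - s < η' * x}
              (fun s => (A (x - s)) ^ 2 / (x - s)) y ∂F)
          + (48*(1+h)/h) * (x / A x * ∫ y,
            Set.indicator {s : ℝ | 1 ≤ x - s ∧ x - s < η' * x}
              (fun s => (A (x - s)) ^ 2 / (x - s)) y ∂F) := by ring
    linarith
  have hNS : ∀ η η' : ℝ, 0 < η → η < η' → η' < 1/4 → ∀ᶠ x in atTop,
      (x / A x * ∫ y, Set.indicator {s : ℝ | 1 ≤ x - s ∧ x - s < η * x}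
          (fun s => (A (x - s)) ^ 2 / (x - s)) y ∂F)
        ≤ (2*h*(1+h) + 48*(1+h)/h) *
          (1 / (A (x + h)) ^ 2 * ∫ s in (1:ℝ)..(η' * (x + h)),
            (A s) ^ 2 / s * rr F h ((x + h) - s)) := by
    intro η η' h1 h2 h3
    obtain ⟨M, hM⟩ := eventually_atTop.1 (hS0 η' (lt_trans h1 h2) h3)
    filter_upwards [hBcl η η' h1 h2 h3, eventually_ge_atTop M] with x hb' hxM
    have h0 : 0 ≤ 1 / (A (x + h)) ^ 2 * ∫ s in (1:ℝ)..(η' * (x + h)),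
        (A s) ^ 2 / s * rr F h ((x + h) - s) := hM (x + h) (by linarith)
    have hd : 0 ≤ (2*h*(1+h)) * (1 / (A (x + h)) ^ 2 * ∫ s in (1:ℝ)..(η' * (x + h)),
        (A s) ^ 2 / s * rr F h ((x + h) - s)) := mul_nonneg hCA.le h0
    have hexp : (2*h*(1+h) + 48*(1+h)/h) * (1 / (A (x + h)) ^ 2 *
          ∫ s in (1:ℝ)..(η' * (x + h)), (A s) ^ 2 / s * rr F h ((x + h) - s))
        = (2*h*(1+h)) * (1 / (A (x + h)) ^ 2 *
            ∫ s in (1:ℝ)..(η' * (x + h)), (A s) ^ 2 / s * rr F h ((x + h) - s))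
          + (48*(1+h)/h) * (1 / (A (x + h)) ^ 2 *
            ∫ s in (1:ℝ)..(η' * (x + h)), (A s) ^ 2 / s * rr F h ((x + h) - s)) := by ring
    linarith
  unfold CondStar CondN
  exact limsup_transfer
    (fun η x => 1 / (A x) ^ 2 * ∫ s in (1:ℝ)..(η * x), (A s) ^ 2 / s * rr F h (x - s))
    (fun η x => x / A x * ∫ y, Set.indicator {s : ℝ | 1 ≤ x - s ∧ x - s < η * x}
      (fun s => (A (x - s)) ^ 2 / (x - s)) y ∂F)
    h (2*h*(1+h) + 48*(1+h)/h) hh hC hS0 hN0 hSN hNS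
end

section
/- Suppose F is a Borel probability measure on [0,∞) satisfying tail assumption (T1) with index α ∈ (0,1). Define R_0(a,b) := ∫_a^b r(y) dy where r(x) := x·F((x−h,x])/F((x,∞)). Then the condition lim_{η→0⁺} limsup_{x→∞} (1/A(x)²) ∫_1^{ηx} (A(s)²/s²)·R_0(x−s,x) ds = 0 is equivalent to the condition lim_{η→0⁺} limsup_{x→∞} (x/A(x)) ∫_1^{ηx} (A(s)²/s²)·P(X ∈ (x−s, x]) ds = 0, where X is a random variable with law F. -/
set_option linter.unusedSectionVars false


open MeasureTheory ProbabilityTheory Filter Set Asymptotics Topology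

/-- `R₀(a,b) = ∫_a^b r(y) dy`. -/
noncomputable def R0 (F : MeasureTheory.Measure ℝ) (h a b : ℝ) : ℝ :=
  ∫ y in a..b, rr F h y

/-- Condition (★★):
`lim_{η→0⁺} limsup_{x→∞} (1/A(x)²) ∫_1^{ηx} (A(s)²/s²)·R₀(x−s,x) ds = 0`. -/
def CondStarStar (F : MeasureTheory.Measure ℝ) (A : ℝ → ℝ) (h : ℝ) : Prop :=
  Filter.Tendsto (fun η : ℝ =>
      Filter.limsup (fun x : ℝ =>
        1 / (A x) ^ 2 * ∫ s in (1:ℝ)..(η * x), (A s) ^ 2 / s ^ 2 * R0 F h (x - s) x)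
        Filter.atTop)
    (nhdsWithin 0 (Set.Ioi 0)) (nhds 0)

section Aux

variable {F : MeasureTheory.Measure ℝ} [IsProbabilityMeasure F] {A : ℝ → ℝ} {α : ℝ} {h : ℝ}

noncomputable def Gf (F : MeasureTheory.Measure ℝ) (x : ℝ) : ℝ := (F (Set.Ioi x)).toReal

lemma Gf_anti : Antitone (Gf F) := fun _ _ hab =>
  ENNReal.toReal_mono (measure_ne_top F _) (measure_mono (Set.Ioi_subset_Ioi hab))
lemma Gf_nonneg (x : ℝ) : 0 ≤ Gf F x := ENNReal.toReal_nonneg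
lemma Gf_le_one (x : ℝ) : Gf F x ≤ 1 := by
  have h1 : F (Set.Ioi x) ≤ 1 := prob_le_one
  simpa [Gf] using ENNReal.toReal_mono ENNReal.one_ne_top h1
lemma Gf_abs_le_one (x : ℝ) : |Gf F x| ≤ 1 := by
  rw [abs_of_nonneg (Gf_nonneg x)]; exact Gf_le_one x
lemma Gf_meas : Measurable (Gf F) := Antitone.measurable Gf_anti
lemma intInt_of_bdd_on {f : ℝ → ℝ} {a b : ℝ}
    (hm : AEStronglyMeasurable f (volume.restrict (Set.uIoc a b))) {C : ℝ}
    (hC : ∀ y ∈ Set.uIoc a b, |f y| ≤ C) : IntervalIntegrable f volume a b := by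
  rw [intervalIntegrable_iff]
  refine Integrable.mono' (g := fun _ => C) ?_ hm ?_
  · refine (integrableOn_const_iff (C := C)).mpr (Or.inr ?_)
    rw [Set.uIoc]; exact measure_Ioc_lt_top
  · rw [ae_restrict_iff' measurableSet_uIoc]
    exact ae_of_all _ (fun y hy => by simpa [Real.norm_eq_abs] using hC y hy)
lemma intInt_of_bdd {f : ℝ → ℝ} (hf : Measurable f) {C : ℝ}
    (hC : ∀ y, |f y| ≤ C) (a b : ℝ) : IntervalIntegrable f volume a b :=
  intInt_of_bdd_on (hf.aestronglyMeasurable.restrict) (fun y _ => hC y)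
lemma Gf_intInt (a b : ℝ) : IntervalIntegrable (Gf F) volume a b :=
  intInt_of_bdd Gf_meas Gf_abs_le_one a b
lemma Gf_ioc {a b : ℝ} (hab : a ≤ b) :
    (F (Set.Ioc a b)).toReal = Gf F a - Gf F b := by
  have hdiff : Set.Ioc a b = Set.Ioi a \ Set.Ioi b := (Set.Ioi_diff_Ioi).symm
  rw [hdiff, measure_diff (Set.Ioi_subset_Ioi hab) measurableSet_Ioi.nullMeasurableSet
    (measure_ne_top F _),
    ENNReal.toReal_sub_of_le (measure_mono (Set.Ioi_subset_Ioi hab)) (measure_ne_top F _)]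
  rfl


lemma tail_ev (hApos : ∀ x : ℝ, 0 ≤ x → 0 < A x)
    (hT1 : (fun x : ℝ => (F (Set.Ioi x)).toReal) ~[atTop] fun x : ℝ => 1 / A x) :
    ∀ᶠ y in atTop, 0 ≤ y ∧ 1/(2*A y) ≤ Gf F y ∧ Gf F y ≤ 2/(A y) := by
  have hlo := Asymptotics.isLittleO_iff.mp hT1.isLittleO (c := 1/2) (by norm_num)
  filter_upwards [hlo, eventually_ge_atTop (0:ℝ)] with y h1 h2
  have hA := hApos y h2
  rw [Real.norm_eq_abs, Real.norm_eq_abs] at h1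
  have hnorm : |Gf F y - 1/A y| ≤ 1/2 * |1/A y| := h1
  rw [abs_of_nonneg (by positivity : (0:ℝ) ≤ 1/A y)] at hnorm
  have habs := abs_le.mp hnorm
  have e1 : 1/(2*A y) = (1/2) * (1/A y) := by field_simp
  have e2 : 2/(A y) = 2 * (1/A y) := by field_simp
  refine ⟨h2, ?_, ?_⟩
  · rw [e1]; linarith [habs.1]
  · rw [e2]; linarith [habs.2]

lemma Gf_pos (hApos : ∀ x : ℝ, 0 ≤ x → 0 < A x)
    (hT1 : (fun x : ℝ => (F (Set.Ioi x)).toReal) ~[atTop] fun x : ℝ => 1 / A x) :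
    ∀ y, 0 < Gf F y := by
  obtain ⟨Y, hY⟩ := eventually_atTop.mp (tail_ev hApos hT1)
  intro y
  have h1 := hY (max y Y) (le_max_right _ _)
  have hA := hApos _ h1.1
  have h2 : 0 < 1/(2*A (max y Y)) := by positivity
  exact lt_of_lt_of_le (lt_of_lt_of_le h2 h1.2.1) (Gf_anti (le_max_left y Y))


/-! rr lemmas -/

lemma rr_eq (hh : 0 ≤ h) (y : ℝ) :
    rr F h y = y * (Gf F (y - h) - Gf F y) / Gf F y := by
  rw [rr, Gf_ioc (by linarith : y - h ≤ y)]; rfl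

lemma rr_nonneg (hFsupp : F (Set.Iio 0) = 0) (y : ℝ) : 0 ≤ rr F h y := by
  rcases le_or_gt 0 y with hy | hy
  · exact div_nonneg (mul_nonneg hy ENNReal.toReal_nonneg) ENNReal.toReal_nonneg
  · have hz : F (Set.Ioc (y - h) y) = 0 :=
      measure_mono_null (fun z hz => lt_of_le_of_lt hz.2 hy) hFsupp
    simp [rr, hz]

lemma rr_meas (hh : 0 ≤ h) : Measurable (rr F h) := by
  have : rr F h = fun y => y * (Gf F (y - h) - Gf F y) / Gf F y := funext (rr_eq hh)
  rw [this]
  exact (measurable_id.mul ((Gf_meas.comp (measurable_id.sub_const h)).sub Gf_meas)).div Gf_meas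

lemma rr_intInt (hGpos : ∀ y, 0 < Gf F y) (hh : 0 ≤ h) (a b : ℝ) :
    IntervalIntegrable (rr F h) volume a b := by
  refine intInt_of_bdd_on ((rr_meas hh).aestronglyMeasurable.restrict)
    (C := (|a| + |b|) / Gf F (max a b)) (fun y hy => ?_)
  have hy1 : min a b ≤ y := le_of_lt hy.1
  have hy2 : y ≤ max a b := hy.2
  have hyabs : |y| ≤ |a| + |b| := by
    rw [abs_le]
    constructor
    · have := min_le_max (a := a) (b := b)
      have h1 : -(|a| + |b|) ≤ min a b := by
        rcases min_choice a b with hc | hc <;> rw [hc] <;>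
          [linarith [neg_abs_le a, abs_nonneg b]; linarith [neg_abs_le b, abs_nonneg a]]
      linarith
    · have h2 : max a b ≤ |a| + |b| := by
        rcases max_choice a b with hc | hc <;> rw [hc] <;>
          [linarith [le_abs_self a, abs_nonneg b]; linarith [le_abs_self b, abs_nonneg a]]
      linarith
  rw [rr_eq hh]
  have hG := hGpos y
  have hGm := hGpos (max a b)
  have hΔ : 0 ≤ Gf F (y - h) - Gf F y := sub_nonneg.mpr (Gf_anti (by linarith))
  have hΔ1 : Gf F (y - h) - Gf F y ≤ 1 := by
    have := Gf_le_one (F := F) (y - h); have := Gf_nonneg (F := F) y; linarith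
  rw [abs_div, abs_of_pos hG, abs_mul]
  have hGy : Gf F (max a b) ≤ Gf F y := Gf_anti hy2
  have h1 : |y| * |Gf F (y - h) - Gf F y| ≤ (|a| + |b|) * 1 := by
    apply mul_le_mul hyabs _ (abs_nonneg _) (by positivity)
    rw [abs_of_nonneg hΔ]; exact hΔ1
  rw [mul_one] at h1
  exact div_le_div₀ (by positivity) h1 hGm hGy


/-! R0 lemmas -/

lemma R0_nonneg (hFsupp : F (Set.Iio 0) = 0) {a b : ℝ} (hab : a ≤ b) :
    0 ≤ R0 F h a b :=
  intervalIntegral.integral_nonneg hab (fun y _ => rr_nonneg hFsupp y)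

lemma R0_shift_cont (hGpos : ∀ y, 0 < Gf F y) (hh : 0 ≤ h) (x : ℝ) :
    Continuous fun s : ℝ => R0 F h (x - s) x := by
  have hint := rr_intInt (F := F) hGpos hh
  have heq : ∀ s : ℝ, R0 F h (x - s) x
      = (∫ y in (0:ℝ)..x, rr F h y) - ∫ y in (0:ℝ)..(x - s), rr F h y := by
    intro s
    rw [R0, ← intervalIntegral.integral_interval_sub_left (hint 0 x) (hint 0 (x - s))]
  simp_rw [heq]
  exact continuous_const.sub
    ((intervalIntegral.continuous_primitive (fun a b => hint a b) 0).comp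
      (continuous_const.sub continuous_id))

/-! Integral bounds for Gf on intervals -/

lemma int_Gf_le {a b : ℝ} (hab : a ≤ b) :
    ∫ y in a..b, Gf F y ≤ (b - a) * Gf F a := by
  have := intervalIntegral.integral_mono_on hab (Gf_intInt a b)
    intervalIntegrable_const (g := fun _ => Gf F a) (fun y hy => Gf_anti hy.1)
  simpa [smul_eq_mul] using this

lemma int_Gf_ge {a b : ℝ} (hab : a ≤ b) :
    (b - a) * Gf F b ≤ ∫ y in a..b, Gf F y := by
  have := intervalIntegral.integral_mono_on hab
    intervalIntegrable_const (Gf_intInt a b) (f := fun _ => Gf F b) (fun y hy => Gf_anti hy.2)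
  simpa [smul_eq_mul] using this

/-- key identity: `∫_a^b (G(y-h) - G(y)) dy = ∫_{a-h}^a G - ∫_{b-h}^b G` -/
lemma intD_eq (a b : ℝ) :
    ∫ y in a..b, (Gf F (y - h) - Gf F y)
      = (∫ y in (a-h)..a, Gf F y) - ∫ y in (b-h)..b, Gf F y := by
  have hint : ∀ c d : ℝ, IntervalIntegrable (Gf F) volume c d := Gf_intInt
  have hsub : ∫ y in a..b, (Gf F (y - h) - Gf F y)
      = (∫ y in a..b, Gf F (y - h)) - ∫ y in a..b, Gf F y :=
    intervalIntegral.integral_sub (by simpa using (hint (a - h) (b - h)).comp_sub_right h) (hint a b)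
  have e1 : (∫ y in a..b, Gf F (y - h)) = ∫ y in (a-h)..(b-h), Gf F y :=
    intervalIntegral.integral_comp_sub_right _ h
  have e2 : (∫ y in (a-h)..a, Gf F y) + (∫ y in a..(b-h), Gf F y)
      = ∫ y in (a-h)..(b-h), Gf F y :=
    intervalIntegral.integral_add_adjacent_intervals (hint _ _) (hint _ _)
  have e3 : (∫ y in a..(b-h), Gf F y) + (∫ y in (b-h)..b, Gf F y)
      = ∫ y in a..b, Gf F y :=
    intervalIntegral.integral_add_adjacent_intervals (hint _ _) (hint _ _)
  rw [hsub, e1]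
  linarith

/-- upper bound for the smoothed interval mass -/
lemma intD_le (hh : 0 ≤ h) {a b : ℝ} (hab : a ≤ b) :
    ∫ y in a..b, (Gf F (y - h) - Gf F y) ≤ h * (Gf F (a - h) - Gf F b) := by
  rw [intD_eq]
  have h1 : ∫ y in (a-h)..a, Gf F y ≤ h * Gf F (a - h) := by
    have := int_Gf_le (F := F) (a := a - h) (b := a) (by linarith)
    simpa using this
  have h2 : h * Gf F b ≤ ∫ y in (b-h)..b, Gf F y := by
    have := int_Gf_ge (F := F) (a := b - h) (b := b) (by linarith)
    simpa using this
  linarith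

/-- lower bound for the smoothed interval mass -/
lemma intD_ge (hh : 0 ≤ h) {a b : ℝ} (hab : a ≤ b) :
    h * (Gf F a - Gf F (b - h)) ≤ ∫ y in a..b, (Gf F (y - h) - Gf F y) := by
  rw [intD_eq]
  have h1 : h * Gf F a ≤ ∫ y in (a-h)..a, Gf F y := by
    have := int_Gf_ge (F := F) (a := a - h) (b := a) (by linarith)
    simpa using this
  have h2 : ∫ y in (b-h)..b, Gf F y ≤ h * Gf F (b - h) := by
    have := int_Gf_le (F := F) (a := b - h) (b := b) (by linarith)
    simpa using this
  linarith

/-! integrability of products -/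

lemma contOn_mul_bdd_intInt {φ g : ℝ → ℝ} {a b : ℝ} (hab : a ≤ b)
    (hφ : ContinuousOn φ (Set.Icc a b)) (hg : Measurable g) {C : ℝ}
    (hC : ∀ y, |g y| ≤ C) : IntervalIntegrable (fun s => φ s * g s) volume a b := by
  obtain ⟨Cφ, hCφ⟩ := (isCompact_Icc (a := a) (b := b)).exists_bound_of_continuousOn hφ
  have hsub : Set.uIoc a b ⊆ Set.Icc a b := by
    rw [Set.uIoc_of_le hab]; exact Set.Ioc_subset_Icc_self
  refine intInt_of_bdd_on ?_ (C := Cφ * C) (fun y hy => ?_)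
  · exact ((hφ.mono hsub).aestronglyMeasurable measurableSet_uIoc).mul
      hg.aestronglyMeasurable.restrict
  · rw [abs_mul]
    have h1 : |φ y| ≤ Cφ := by
      simpa [Real.norm_eq_abs] using hCφ y (hsub hy)
    exact mul_le_mul h1 (hC y) (abs_nonneg _) ((abs_nonneg _).trans h1)


/-! continuity of the weight -/

lemma wA_contOn (hAcont : ContinuousOn A (Set.Ici 0)) {a b : ℝ} (ha : 0 < a) :
    ContinuousOn (fun s : ℝ => (A s)^2/s^2) (Set.Icc a b) := by
  have hsub : Set.Icc a b ⊆ Set.Ici 0 := fun y hy => le_trans ha.le hy.1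
  exact ((hAcont.mono hsub).pow 2).div ((continuous_pow 2).continuousOn)
    (fun s hs => pow_ne_zero 2 (ne_of_gt (lt_of_lt_of_le ha hs.1)))

lemma wAc_contOn (hAcont : ContinuousOn A (Set.Ici 0)) {c a b : ℝ} (hc : 0 < c) (ha : 0 < a) :
    ContinuousOn (fun t : ℝ => (A (t/c))^2/(t/c)^2) (Set.Icc a b) := by
  have hdiv : ContinuousOn (fun t : ℝ => t/c) (Set.Icc a b) :=
    (continuous_id.div_const c).continuousOn
  have hmap : Set.MapsTo (fun t : ℝ => t/c) (Set.Icc a b) (Set.Ici 0) := by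
    intro t ht
    have h0 : 0 < t := lt_of_lt_of_le ha ht.1
    have : 0 ≤ t/c := by positivity
    exact this
  exact ((hAcont.comp hdiv hmap).pow 2).div (hdiv.pow 2)
    (fun t ht => pow_ne_zero _ (by
      have h0 : 0 < t := lt_of_lt_of_le ha ht.1
      positivity))

lemma DG_bdd (x c d : ℝ) : ∀ y : ℝ, |Gf F (x - c*y) - Gf F d| ≤ 1 := by
  intro y
  rw [abs_sub_le_iff]
  constructor
  · have := Gf_le_one (F := F) (x - c*y); have := Gf_nonneg (F := F) d; linarith
  · have := Gf_le_one (F := F) d; have := Gf_nonneg (F := F) (x - c*y); linarith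

set_option maxHeartbeats 1600000 in
/-- Key comparison 1: the (★★)-integrand is bounded by the probability-form integrand. -/
lemma keyP1 (hFsupp : F (Set.Iio 0) = 0)
    (hApos : ∀ x : ℝ, 0 ≤ x → 0 < A x)
    (hAcont : ContinuousOn A (Set.Ici 0))
    (hAmono : StrictMonoOn A (Set.Ici 0))
    (hT1 : (fun x : ℝ => (F (Set.Ioi x)).toReal) ~[atTop] fun x : ℝ => 1 / A x)
    (hh : 0 < h) {η : ℝ} (hη0 : 0 < η) (hη : η ≤ 1/2) :
    ∀ᶠ x in atTop,
      1/(A x)^2 * ∫ s in (1:ℝ)..(η*x), (A s)^2/s^2 * R0 F h (x-s) x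
        ≤ (2*h*(1+h)) * ((x / A x) *
            ∫ s in (1:ℝ)..(((1+h)*η)*x), (A s)^2/s^2 * (F (Set.Ioc (x-s) x)).toReal) := by
  obtain ⟨X₀, hX₀⟩ := eventually_atTop.mp (tail_ev hApos hT1)
  have hGpos := Gf_pos hApos hT1
  have hAmono' := hAmono.monotoneOn
  have h1h : (0:ℝ) < 1 + h := by linarith
  filter_upwards [eventually_ge_atTop (max (max (2*X₀) (1/η)) 1)] with x hx
  have hx2 : 2*X₀ ≤ x := le_trans (le_max_left _ _) (le_trans (le_max_left _ _) hx)
  have hx3 : 1/η ≤ x := le_trans (le_max_right _ _) (le_trans (le_max_left _ _) hx)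
  have hx1 : 1 ≤ x := le_trans (le_max_right _ _) hx
  have hx0 : 0 ≤ x := by linarith
  have hAx := hApos x hx0
  have hT : 1 ≤ η * x := by
    have := (div_le_iff₀ hη0).mp hx3
    linarith [this, mul_comm x η]
  have hTx : η * x ≤ x/2 := by nlinarith
  set T := η * x with hTdef
  -- pointwise bound on R0
  have RB : ∀ s ∈ Set.Icc (1:ℝ) T,
      R0 F h (x-s) x ≤ 2*x*A x*(h*(Gf F (x-(1+h)*s) - Gf F x)) := by
    intro s hs
    obtain ⟨hs1, hs2⟩ := hs
    have hs0 : 0 ≤ s := by linarith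
    have hsx : x/2 ≤ x - s := by linarith
    have hX0x : X₀ ≤ x/2 := by linarith
    have hDint : IntervalIntegrable (fun y => Gf F (y-h) - Gf F y) volume (x-s) x := by
      have h0 : IntervalIntegrable (fun y => Gf F (y-h)) volume (x-s) x := by
        simpa using (Gf_intInt (x-s-h) (x-h)).comp_sub_right h
      exact h0.sub (Gf_intInt _ _)
    have step1 : R0 F h (x-s) x
        ≤ ∫ y in (x-s)..x, (2*x*A x) * (Gf F (y-h) - Gf F y) := by
      rw [R0]
      refine intervalIntegral.integral_mono_on (by linarith)
        (rr_intInt hGpos hh.le _ _) (hDint.const_mul _) (fun y hy => ?_)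
      have hyX : X₀ ≤ y := by linarith [hy.1]
      have htb := hX₀ y hyX
      have hy0 : 0 ≤ y := htb.1
      have hGy := hGpos y
      have hAy := hApos y hy0
      have hAyx : A y ≤ A x := hAmono' htb.1 hx0 hy.2
      have hΔ : 0 ≤ Gf F (y-h) - Gf F y := sub_nonneg.mpr (Gf_anti (by linarith))
      rw [rr_eq hh.le, div_le_iff₀ hGy]
      have key : 1 ≤ Gf F y * (2*A y) := by
        have := htb.2.1
        rw [div_le_iff₀ (by positivity)] at this
        linarith
      have hxΔ : 0 ≤ x * (Gf F (y-h) - Gf F y) := mul_nonneg hx0 hΔ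
      calc y * (Gf F (y-h) - Gf F y)
          ≤ x * (Gf F (y-h) - Gf F y) := mul_le_mul_of_nonneg_right hy.2 hΔ
        _ ≤ (x * (Gf F (y-h) - Gf F y)) * (Gf F y * (2*A y)) :=
            le_mul_of_one_le_right hxΔ key
        _ = (2*A y*Gf F y) * (x * (Gf F (y-h) - Gf F y)) := by ring
        _ ≤ (2*A x*Gf F y) * (x * (Gf F (y-h) - Gf F y)) := by
            apply mul_le_mul_of_nonneg_right _ hxΔ
            apply mul_le_mul_of_nonneg_right _ hGy.le
            linarith
        _ = 2*x*A x * (Gf F (y-h) - Gf F y) * Gf F y := by ring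
    have step2 : ∫ y in (x-s)..x, (2*x*A x) * (Gf F (y-h) - Gf F y)
        = (2*x*A x) * ∫ y in (x-s)..x, (Gf F (y-h) - Gf F y) :=
      intervalIntegral.integral_const_mul _ _
    have step3 : ∫ y in (x-s)..x, (Gf F (y-h) - Gf F y) ≤ h * (Gf F (x-s-h) - Gf F x) :=
      intD_le hh.le (by linarith)
    have step4 : Gf F (x-s-h) ≤ Gf F (x-(1+h)*s) := by
      apply Gf_anti
      have : h*1 ≤ h*s := mul_le_mul_of_nonneg_left hs1 hh.le
      nlinarith
    have step5 : h * (Gf F (x-s-h) - Gf F x) ≤ h * (Gf F (x-(1+h)*s) - Gf F x) := by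
      apply mul_le_mul_of_nonneg_left _ hh.le
      linarith
    calc R0 F h (x-s) x ≤ ∫ y in (x-s)..x, (2*x*A x) * (Gf F (y-h) - Gf F y) := step1
      _ = (2*x*A x) * ∫ y in (x-s)..x, (Gf F (y-h) - Gf F y) := step2
      _ ≤ (2*x*A x) * (h * (Gf F (x-s-h) - Gf F x)) := by
          apply mul_le_mul_of_nonneg_left step3 (by positivity)
      _ ≤ 2*x*A x*(h*(Gf F (x-(1+h)*s) - Gf F x)) := by
          apply mul_le_mul_of_nonneg_left step5 (by positivity)
  -- integrability facts
  have hDGmeas : ∀ c : ℝ, Measurable (fun s : ℝ => Gf F (x - c*s) - Gf F x) := by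
    intro c
    exact (Gf_meas.comp (measurable_const.sub (measurable_id.const_mul c))).sub measurable_const
  have hwR_int : IntervalIntegrable (fun s => (A s)^2/s^2 * R0 F h (x-s) x) volume 1 T := by
    apply ContinuousOn.intervalIntegrable
    rw [Set.uIcc_of_le hT]
    exact (wA_contOn hAcont one_pos).mul (R0_shift_cont hGpos hh.le x).continuousOn
  have hDGmeas1 : Measurable (fun s : ℝ => Gf F (x - s) - Gf F x) := by
    simpa using hDGmeas 1
  have hDGbdd1 : ∀ y : ℝ, |Gf F (x - y) - Gf F x| ≤ 1 := by
    intro y; simpa using DG_bdd (F := F) x 1 x y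
  have hwD_int : ∀ a b : ℝ, 0 < a → a ≤ b →
      IntervalIntegrable (fun s => (A s)^2/s^2 * (Gf F (x - s) - Gf F x)) volume a b := by
    intro a b ha hab
    exact contOn_mul_bdd_intInt hab (wA_contOn hAcont ha) hDGmeas1 hDGbdd1
  -- main integral comparison
  have big1 : ∫ s in (1:ℝ)..T, (A s)^2/s^2 * R0 F h (x-s) x
      ≤ ∫ s in (1:ℝ)..T, (2*x*A x*h) * ((A s)^2/s^2 * (Gf F (x-(1+h)*s) - Gf F x)) := by
    have hRHSint : IntervalIntegrable
        (fun s => (2*x*A x*h) * ((A s)^2/s^2 * (Gf F (x-(1+h)*s) - Gf F x))) volume 1 T := by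
      refine (contOn_mul_bdd_intInt hT (wA_contOn hAcont one_pos) (hDGmeas (1+h))
        (fun y => DG_bdd (F := F) x (1+h) x y)).const_mul _
    refine intervalIntegral.integral_mono_on hT hwR_int hRHSint (fun s hs => ?_)
    have hw : (0:ℝ) ≤ (A s)^2/s^2 := by positivity
    calc (A s)^2/s^2 * R0 F h (x-s) x
        ≤ (A s)^2/s^2 * (2*x*A x*(h*(Gf F (x-(1+h)*s) - Gf F x))) :=
          mul_le_mul_of_nonneg_left (RB s hs) hw
      _ = (2*x*A x*h) * ((A s)^2/s^2 * (Gf F (x-(1+h)*s) - Gf F x)) := by ring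
  have big2 : ∫ s in (1:ℝ)..T, (2*x*A x*h) * ((A s)^2/s^2 * (Gf F (x-(1+h)*s) - Gf F x))
      = (2*x*A x*h) * ∫ s in (1:ℝ)..T, (A s)^2/s^2 * (Gf F (x-(1+h)*s) - Gf F x) :=
    intervalIntegral.integral_const_mul _ _
  -- change of variables t = (1+h) s
  set f : ℝ → ℝ := fun t => (A (t/(1+h)))^2/(t/(1+h))^2 * (Gf F (x-t) - Gf F x) with hfdef
  have hsubst : ∫ s in (1:ℝ)..T, (A s)^2/s^2 * (Gf F (x-(1+h)*s) - Gf F x)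
      = (1+h)⁻¹ * ∫ t in ((1+h)*1)..((1+h)*T), f t := by
    have e1 : ∫ s in (1:ℝ)..T, (A s)^2/s^2 * (Gf F (x-(1+h)*s) - Gf F x)
        = ∫ s in (1:ℝ)..T, f ((1+h)*s) := by
      apply intervalIntegral.integral_congr
      intro s _
      simp only [hfdef]
      rw [mul_div_cancel_left₀ _ (ne_of_gt h1h)]
    rw [e1, intervalIntegral.integral_comp_mul_left f (ne_of_gt h1h), smul_eq_mul]
  -- bound f t by the weight at t
  have hfle : ∀ t ∈ Set.Icc ((1+h)*1) ((1+h)*T),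
      f t ≤ (1+h)^2 * ((A t)^2/t^2 * (Gf F (x-t) - Gf F x)) := by
    intro t ht
    have ht1 : (1+h)*1 ≤ t := ht.1
    have ht0 : (0:ℝ) < t := by linarith
    have htd : (0:ℝ) ≤ t/(1+h) := by positivity
    have htdt : t/(1+h) ≤ t := by
      apply div_le_self ht0.le; linarith
    have hA1 : 0 < A (t/(1+h)) := hApos _ htd
    have hA2 : A (t/(1+h)) ≤ A t := hAmono' htd (by linarith : (0:ℝ) ≤ t) htdt
    have hsq : (A (t/(1+h)))^2 ≤ (A t)^2 := by nlinarith
    have hD : 0 ≤ Gf F (x-t) - Gf F x := sub_nonneg.mpr (Gf_anti (by linarith))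
    have ht2 : (0:ℝ) < t^2 := by positivity
    calc f t = (A (t/(1+h)))^2 * (1+h)^2/t^2 * (Gf F (x-t) - Gf F x) := by
          simp only [hfdef]; rw [div_pow, div_div_eq_mul_div]
      _ ≤ (A t)^2 * (1+h)^2/t^2 * (Gf F (x-t) - Gf F x) := by gcongr
      _ = (1+h)^2 * ((A t)^2/t^2 * (Gf F (x-t) - Gf F x)) := by ring
  have hfint : IntervalIntegrable f volume ((1+h)*1) ((1+h)*T) := by
    exact contOn_mul_bdd_intInt (by nlinarith) (wAc_contOn hAcont h1h (by linarith))
      hDGmeas1 hDGbdd1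
  -- monotone comparison after substitution
  set wD : ℝ → ℝ := fun t => (A t)^2/t^2 * (Gf F (x - t) - Gf F x) with hwDdef
  have hwDnn : ∀ u : ℝ, 0 < u → 0 ≤ wD u := by
    intro u hu
    apply mul_nonneg (by positivity)
    exact sub_nonneg.mpr (Gf_anti (by linarith))
  have hmid : ∫ t in ((1+h)*1)..((1+h)*T), f t
      ≤ (1+h)^2 * ∫ t in ((1+h)*1)..((1+h)*T), wD t := by
    have h2int : IntervalIntegrable (fun t => (1+h)^2 * wD t) volume ((1+h)*1) ((1+h)*T) :=
      (hwD_int _ _ (by linarith) (by nlinarith)).const_mul _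
    have hmono := intervalIntegral.integral_mono_on (by nlinarith : (1+h)*1 ≤ (1+h)*T)
      hfint h2int (fun t ht => hfle t ht)
    calc ∫ t in ((1+h)*1)..((1+h)*T), f t ≤ ∫ t in ((1+h)*1)..((1+h)*T), (1+h)^2 * wD t := hmono
      _ = (1+h)^2 * ∫ t in ((1+h)*1)..((1+h)*T), wD t :=
          intervalIntegral.integral_const_mul _ _
  have hext : ∫ t in ((1+h)*1)..((1+h)*T), wD t ≤ ∫ t in (1:ℝ)..((1+h)*T), wD t := by
    have hadj := intervalIntegral.integral_add_adjacent_intervals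
      (hwD_int 1 ((1+h)*1) one_pos (by nlinarith))
      (hwD_int ((1+h)*1) ((1+h)*T) (by linarith) (by nlinarith))
    have hfirst : 0 ≤ ∫ t in (1:ℝ)..((1+h)*1), wD t :=
      intervalIntegral.integral_nonneg (by nlinarith) (fun u hu => hwDnn u (by linarith [hu.1]))
    linarith
  set V : ℝ := ∫ s in (1:ℝ)..((1+h)*T), wD s with hVdef
  have hVnn : 0 ≤ V :=
    intervalIntegral.integral_nonneg (by nlinarith) (fun u hu => hwDnn u (by linarith [hu.1]))
  have c1 : ∫ s in (1:ℝ)..T, (A s)^2/s^2 * R0 F h (x-s) x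
      ≤ 2*x*A x*h * ((1+h)⁻¹ * ∫ t in ((1+h)*1)..((1+h)*T), f t) := by
    have hc := big1.trans (le_of_eq big2)
    rwa [hsubst] at hc
  have c2 : 2*x*A x*h * ((1+h)⁻¹ * ∫ t in ((1+h)*1)..((1+h)*T), f t)
      ≤ 2*x*A x*h * ((1+h)⁻¹ * ((1+h)^2 * V)) := by
    apply mul_le_mul_of_nonneg_left _ (by positivity)
    apply mul_le_mul_of_nonneg_left _ (by positivity)
    calc ∫ t in ((1+h)*1)..((1+h)*T), f t ≤ (1+h)^2 * ∫ t in ((1+h)*1)..((1+h)*T), wD t := hmid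
      _ ≤ (1+h)^2 * V := mul_le_mul_of_nonneg_left hext (by positivity)
  have hVeq : ∫ s in (1:ℝ)..((1+h)*T), (A s)^2/s^2 * (F (Set.Ioc (x-s) x)).toReal = V := by
    rw [hVdef]
    apply intervalIntegral.integral_congr
    intro s hs
    rw [Set.uIcc_of_le (by nlinarith)] at hs
    simp only [hwDdef]
    rw [Gf_ioc (by linarith [hs.1] : x - s ≤ x)]
  have hBeq : (1+h)*η*x = (1+h)*T := by rw [hTdef]; ring
  rw [hBeq, hVeq]
  calc 1/(A x)^2 * ∫ s in (1:ℝ)..T, (A s)^2/s^2 * R0 F h (x-s) x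
      ≤ 1/(A x)^2 * (2*x*A x*h * ((1+h)⁻¹ * ((1+h)^2 * V))) :=
        mul_le_mul_of_nonneg_left (c1.trans c2) (by positivity)
    _ = 2*h*(1+h) * (x/A x * V) := by
        field_simp







lemma wAsub_contOn (hAcont : ContinuousOn A (Set.Ici 0)) {c a b : ℝ} (hca : c < a) :
    ContinuousOn (fun t : ℝ => (A (t-c))^2/(t-c)^2) (Set.Icc a b) := by
  have hdiv : ContinuousOn (fun t : ℝ => t - c) (Set.Icc a b) :=
    (continuous_id.sub continuous_const).continuousOn
  have hmap : Set.MapsTo (fun t : ℝ => t - c) (Set.Icc a b) (Set.Ici 0) := by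
    intro t ht
    have := ht.1
    exact Set.mem_Ici.mpr (by show (0:ℝ) ≤ t - c; linarith)
  exact ((hAcont.comp hdiv hmap).pow 2).div (hdiv.pow 2)
    (fun t ht => pow_ne_zero _ (by have := ht.1; show t - c ≠ 0; exact ne_of_gt (by linarith)))

set_option maxHeartbeats 2000000 in
/-- Key comparison 2: the probability-form integrand is bounded by the (★★)-integrand. -/
lemma keyP2 (hFsupp : F (Set.Iio 0) = 0)
    (hApos : ∀ x : ℝ, 0 ≤ x → 0 < A x)
    (hAcont : ContinuousOn A (Set.Ici 0))
    (hAmono : StrictMonoOn A (Set.Ici 0))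
    (hAreg : ∀ l : ℝ, 0 < l →
      Tendsto (fun x : ℝ => A (l * x) / A x) atTop (nhds (l ^ α)))
    (hT1 : (fun x : ℝ => (F (Set.Ioi x)).toReal) ~[atTop] fun x : ℝ => 1 / A x)
    (hh : 0 < h) :
    ∃ C : ℝ, 0 < C ∧ ∀ η : ℝ, 0 < η → η ≤ 1/4 →
      ∀ᶠ x in atTop,
        x / A x * ∫ s in (1:ℝ)..(η*x), (A s)^2/s^2 * (F (Set.Ioc (x-s) x)).toReal
          ≤ C * (1/(A (x+h))^2 *
              ∫ t in (1:ℝ)..(((1+2*h)*η)*(x+h)), (A t)^2/t^2 * R0 F h ((x+h)-t) (x+h)) := by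
  obtain ⟨X₀, hX₀⟩ := eventually_atTop.mp (tail_ev hApos hT1)
  have hGpos := Gf_pos hApos hT1
  have hAmono' := hAmono.monotoneOn
  have h12 : (0:ℝ) < 1 + 2*h := by linarith
  set c₀ : ℝ := (1/2:ℝ)^α/2 with hc₀def
  have hc₀ : 0 < c₀ := by
    have := Real.rpow_pos_of_pos (by norm_num : (0:ℝ) < 1/2) α
    rw [hc₀def]; positivity
  set c₁ : ℝ := c₀/4 with hc₁def
  have hc₁ : 0 < c₁ := by rw [hc₁def]; positivity
  set K : ℝ := (2:ℝ)^α + 1 with hKdef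
  have hK0 : 0 < K := by
    have := Real.rpow_pos_of_pos (by norm_num : (0:ℝ) < 2) α
    rw [hKdef]; positivity
  refine ⟨2*K*(1+2*h)^2/(c₁*h), by positivity, ?_⟩
  intro η hη0 hη
  have hhalf : ∀ᶠ x : ℝ in atTop, c₀ * A x ≤ A ((1/2)*x) := by
    have ht := hAreg (1/2) (by norm_num)
    have hlt : c₀ < (1/2:ℝ)^α := by
      have := Real.rpow_pos_of_pos (by norm_num : (0:ℝ) < 1/2) α
      rw [hc₀def]; linarith
    filter_upwards [ht.eventually (eventually_gt_nhds hlt), eventually_ge_atTop (0:ℝ)]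
      with x h1 h2
    have hAx := hApos x h2
    rw [lt_div_iff₀ hAx] at h1
    linarith
  have hKev : ∀ᶠ x : ℝ in atTop, A (2*x) ≤ K * A x := by
    have ht := hAreg 2 (by norm_num)
    have hlt : (2:ℝ)^α < K := by rw [hKdef]; linarith
    filter_upwards [ht.eventually (eventually_lt_nhds hlt), eventually_ge_atTop (0:ℝ)]
      with x h1 h2
    have hAx := hApos x h2
    rw [div_lt_iff₀ hAx] at h1
    linarith
  have hshift : Tendsto (fun x : ℝ => x + h) atTop atTop :=
    tendsto_atTop_add_const_right _ _ tendsto_id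
  filter_upwards [eventually_ge_atTop (max (max (2*X₀) (1/η)) (max 1 (8*h))),
    hshift.eventually hhalf, hKev] with x hx hhalfx hKx
  have hx2 : 2*X₀ ≤ x := le_trans (le_max_left _ _) (le_trans (le_max_left _ _) hx)
  have hx3 : 1/η ≤ x := le_trans (le_max_right _ _) (le_trans (le_max_left _ _) hx)
  have hx1 : 1 ≤ x := le_trans (le_max_left _ _) (le_trans (le_max_right _ _) hx)
  have hx8h : 8*h ≤ x := le_trans (le_max_right _ _) (le_trans (le_max_right _ _) hx)
  have hx0 : 0 ≤ x := by linarith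
  have hAx := hApos x hx0
  have hAxh := hApos (x+h) (by linarith)
  have hT : 1 ≤ η * x := by
    have := (div_le_iff₀ hη0).mp hx3
    linarith [this, mul_comm x η]
  have hTx : η * x ≤ x/4 := by nlinarith
  set T := η * x with hTdef
  have hKx' : A (x+h) ≤ K * A x := by
    have h1 : A (x+h) ≤ A (2*x) := hAmono' (Set.mem_Ici.mpr (by linarith)) (Set.mem_Ici.mpr (by linarith)) (by linarith)
    linarith
  set B : ℝ := 1/(c₁*h*(x+h)*A (x+h)) with hBdef
  have hB : 0 < B := by rw [hBdef]; positivity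
  -- pointwise bound on the Ioc mass
  have cD : ∀ s ∈ Set.Icc (1:ℝ) T,
      (F (Set.Ioc (x-s) x)).toReal ≤ B * R0 F h ((x+h)-(s+2*h)) (x+h) := by
    intro s hs
    obtain ⟨hs1, hs2⟩ := hs
    have hs0 : 0 ≤ s := by linarith
    have hyl : (x+h)/2 ≤ x-s-h := by nlinarith
    have hX0y : X₀ ≤ (x+h)/2 := by linarith
    have hDint : IntervalIntegrable (fun y => Gf F (y-h) - Gf F y) volume (x-s-h) (x+h) := by
      have h0 : IntervalIntegrable (fun y => Gf F (y-h)) volume (x-s-h) (x+h) := by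
        simpa using (Gf_intInt (x-s-h-h) (x+h-h)).comp_sub_right h
      exact h0.sub (Gf_intInt _ _)
    have step1 : ∫ y in (x-s-h)..(x+h), (c₁*(x+h)*A (x+h)) * (Gf F (y-h) - Gf F y)
        ≤ R0 F h (x-s-h) (x+h) := by
      rw [R0]
      refine intervalIntegral.integral_mono_on (by linarith)
        (hDint.const_mul _) (rr_intInt hGpos hh.le _ _) (fun y hy => ?_)
      have hy1 : (x+h)/2 ≤ y := le_trans hyl hy.1
      have hyX : X₀ ≤ y := by linarith
      have htb := hX₀ y hyX
      have hy0 : 0 ≤ y := htb.1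
      have hGy := hGpos y
      have hAy := hApos y hy0
      have hΔ : 0 ≤ Gf F (y-h) - Gf F y := sub_nonneg.mpr (Gf_anti (by linarith))
      have hAy2 : c₀ * A (x+h) ≤ A y := by
        have hmem : (0:ℝ) ≤ (1/2)*(x+h) := by linarith
        have h1 : A ((1/2)*(x+h)) ≤ A y := hAmono' (Set.mem_Ici.mpr hmem) (Set.mem_Ici.mpr hy0) (by linarith)
        linarith [hhalfx]
      rw [rr_eq hh.le]
      have hGle : Gf F y ≤ 2/(A y) := htb.2.2
      have hlow : y * (Gf F (y-h) - Gf F y) * (A y) / 2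
          ≤ y * (Gf F (y-h) - Gf F y) / Gf F y := by
        have hyΔ : 0 ≤ y * (Gf F (y-h) - Gf F y) := mul_nonneg hy0 hΔ
        have hdd : y * (Gf F (y-h) - Gf F y) / (2/(A y))
            ≤ y * (Gf F (y-h) - Gf F y) / Gf F y :=
          div_le_div_of_nonneg_left hyΔ hGy hGle
        calc y * (Gf F (y-h) - Gf F y) * (A y) / 2
            = y * (Gf F (y-h) - Gf F y) / (2/(A y)) := by
              rw [div_div_eq_mul_div]
          _ ≤ y * (Gf F (y-h) - Gf F y) / Gf F y := hdd
      refine le_trans ?_ hlow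
      have hint1 : ((x+h)/2) * (c₀ * A (x+h)) * (Gf F (y-h) - Gf F y)
          ≤ (y * A y) * (Gf F (y-h) - Gf F y) := by
        apply mul_le_mul_of_nonneg_right _ hΔ
        apply mul_le_mul hy1 hAy2 (by positivity) hy0
      rw [hc₁def]
      nlinarith [hint1]
    have step2 : c₁*(x+h)*A (x+h) * (h*(Gf F (x-s) - Gf F x))
        ≤ R0 F h (x-s-h) (x+h) := by
      have h0 := intD_ge (F := F) (h := h) hh.le (by linarith : x-s-h ≤ x+h)
      have e : x+h-h = x := by ring
      rw [e] at h0
      have hmono2 : Gf F (x-s) ≤ Gf F (x-s-h) := Gf_anti (by linarith)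
      have h1 : h*(Gf F (x-s) - Gf F x) ≤ h*(Gf F (x-s-h) - Gf F x) := by
        apply mul_le_mul_of_nonneg_left _ hh.le
        linarith
      have hconst : ∫ y in (x-s-h)..(x+h), (c₁*(x+h)*A (x+h)) * (Gf F (y-h) - Gf F y)
          = (c₁*(x+h)*A (x+h)) * ∫ y in (x-s-h)..(x+h), (Gf F (y-h) - Gf F y) :=
        intervalIntegral.integral_const_mul _ _
      have h2 : c₁*(x+h)*A (x+h) * (h*(Gf F (x-s) - Gf F x))
          ≤ c₁*(x+h)*A (x+h) * ∫ y in (x-s-h)..(x+h), (Gf F (y-h) - Gf F y) := by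
        apply mul_le_mul_of_nonneg_left _ (by positivity)
        linarith
      rw [← hconst] at h2
      exact h2.trans step1
    have earg : (x+h)-(s+2*h) = x-s-h := by ring
    rw [earg, Gf_ioc (by linarith : x-s ≤ x)]
    have hre : c₁*h*(x+h)*A (x+h) * (Gf F (x-s) - Gf F x)
        = c₁*(x+h)*A (x+h) * (h*(Gf F (x-s) - Gf F x)) := by ring
    calc Gf F (x-s) - Gf F x
        = B * (c₁*h*(x+h)*A (x+h) * (Gf F (x-s) - Gf F x)) := by
          rw [hBdef]; field_simp
      _ ≤ B * R0 F h (x-s-h) (x+h) := by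
          apply mul_le_mul_of_nonneg_left _ hB.le
          rw [hre]; exact step2
  -- integral level
  have hLeq : ∫ s in (1:ℝ)..T, (A s)^2/s^2 * (F (Set.Ioc (x-s) x)).toReal
      = ∫ s in (1:ℝ)..T, (A s)^2/s^2 * (Gf F (x-s) - Gf F x) := by
    apply intervalIntegral.integral_congr
    intro s hs
    rw [Set.uIcc_of_le hT] at hs
    show (A s)^2/s^2 * (F (Set.Ioc (x-s) x)).toReal = (A s)^2/s^2 * (Gf F (x-s) - Gf F x)
    rw [Gf_ioc (by linarith [hs.1] : x - s ≤ x)]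
  have hDGmeas1 : Measurable (fun s : ℝ => Gf F (x - s) - Gf F x) :=
    (Gf_meas.comp (measurable_const.sub measurable_id)).sub measurable_const
  have hDGbdd1 : ∀ y : ℝ, |Gf F (x - y) - Gf F x| ≤ 1 := by
    intro y; simpa using DG_bdd (F := F) x 1 x y
  have hwD_int1 : IntervalIntegrable (fun s => (A s)^2/s^2 * (Gf F (x-s) - Gf F x)) volume 1 T :=
    contOn_mul_bdd_intInt hT (wA_contOn hAcont one_pos) hDGmeas1 hDGbdd1
  have hR0cont : Continuous (fun u : ℝ => R0 F h ((x+h) - u) (x+h)) :=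
    R0_shift_cont hGpos hh.le (x+h)
  have hwR_int : ∀ a b : ℝ, 0 < a → a ≤ b →
      IntervalIntegrable (fun t => (A t)^2/t^2 * R0 F h ((x+h)-t) (x+h)) volume a b := by
    intro a b ha hab
    apply ContinuousOn.intervalIntegrable
    rw [Set.uIcc_of_le hab]
    exact (wA_contOn hAcont ha).mul hR0cont.continuousOn
  have hRHS2_int : IntervalIntegrable
      (fun s => (A s)^2/s^2 * (B * R0 F h ((x+h)-(s+2*h)) (x+h))) volume 1 T := by
    apply ContinuousOn.intervalIntegrable
    rw [Set.uIcc_of_le hT]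
    refine (wA_contOn hAcont one_pos).mul (Continuous.continuousOn ?_)
    exact continuous_const.mul (hR0cont.comp (continuous_add_right (2*h)))
  have big1 : ∫ s in (1:ℝ)..T, (A s)^2/s^2 * (Gf F (x-s) - Gf F x)
      ≤ ∫ s in (1:ℝ)..T, (A s)^2/s^2 * (B * R0 F h ((x+h)-(s+2*h)) (x+h)) := by
    refine intervalIntegral.integral_mono_on hT hwD_int1 hRHS2_int (fun s hs => ?_)
    have hcd := cD s hs
    rw [Gf_ioc (by linarith [hs.1] : x - s ≤ x)] at hcd
    exact mul_le_mul_of_nonneg_left hcd (by positivity)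
  -- substitution t = s + 2h
  set g2 : ℝ → ℝ := fun t => (A (t-2*h))^2/(t-2*h)^2 * (B * R0 F h ((x+h)-t) (x+h)) with hg2def
  have hsub2 : ∫ s in (1:ℝ)..T, (A s)^2/s^2 * (B * R0 F h ((x+h)-(s+2*h)) (x+h))
      = ∫ t in (1+2*h)..(T+2*h), g2 t := by
    have e1 : ∫ s in (1:ℝ)..T, (A s)^2/s^2 * (B * R0 F h ((x+h)-(s+2*h)) (x+h))
        = ∫ s in (1:ℝ)..T, g2 (s+2*h) := by
      apply intervalIntegral.integral_congr
      intro s _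
      simp only [hg2def, add_sub_cancel_right]
    rw [e1, intervalIntegral.integral_comp_add_right g2 (2*h)]
  have hR0nn : ∀ t : ℝ, 0 ≤ t → 0 ≤ R0 F h ((x+h)-t) (x+h) :=
    fun t ht => R0_nonneg hFsupp (by linarith)
  have hg2le : ∀ t ∈ Set.Icc (1+2*h) (T+2*h),
      g2 t ≤ (1+2*h)^2 * B * ((A t)^2/t^2 * R0 F h ((x+h)-t) (x+h)) := by
    intro t ht
    have ht1 : 1+2*h ≤ t := ht.1
    have ht0 : (0:ℝ) < t := by linarith
    have htc : (1:ℝ) ≤ t - 2*h := by linarith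
    have hA1 : 0 ≤ A (t-2*h) := (hApos _ (by linarith)).le
    have hA2 : A (t-2*h) ≤ A t := hAmono' (Set.mem_Ici.mpr (by linarith))
      (Set.mem_Ici.mpr (by linarith)) (by linarith)
    have hsq : (A (t-2*h))^2 ≤ (A t)^2 := by nlinarith
    have hgt : t ≤ (1+2*h)*(t-2*h) := by nlinarith [mul_nonneg hh.le (by linarith : (0:ℝ) ≤ t-(1+2*h))]
    have h2 : t^2 ≤ (1+2*h)^2 * (t-2*h)^2 := by
      nlinarith [mul_self_le_mul_self ht0.le hgt]
    have hww : (A (t-2*h))^2/(t-2*h)^2 ≤ (1+2*h)^2 * ((A t)^2/t^2) := by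
      calc (A (t-2*h))^2/(t-2*h)^2 ≤ (A t)^2/(t-2*h)^2 := by gcongr
        _ ≤ (1+2*h)^2 * ((A t)^2/t^2) := by
            have e2 : (1+2*h)^2 * ((A t)^2/t^2) = ((1+2*h)^2 * (A t)^2)/t^2 := by ring
            rw [e2, div_le_div_iff₀ (by positivity) (by positivity)]
            nlinarith [mul_le_mul_of_nonneg_left h2 (sq_nonneg (A t))]
    have hBR : 0 ≤ B * R0 F h ((x+h)-t) (x+h) :=
      mul_nonneg hB.le (hR0nn t (by linarith))
    calc g2 t ≤ ((1+2*h)^2 * ((A t)^2/t^2)) * (B * R0 F h ((x+h)-t) (x+h)) :=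
          mul_le_mul_of_nonneg_right hww hBR
      _ = (1+2*h)^2 * B * ((A t)^2/t^2 * R0 F h ((x+h)-t) (x+h)) := by ring
  have hg2int : IntervalIntegrable g2 volume (1+2*h) (T+2*h) := by
    apply ContinuousOn.intervalIntegrable
    rw [Set.uIcc_of_le (by linarith : 1+2*h ≤ T+2*h)]
    refine (wAsub_contOn hAcont (by linarith : 2*h < 1+2*h)).mul (Continuous.continuousOn ?_)
    exact continuous_const.mul hR0cont
  have hmid2 : ∫ t in (1+2*h)..(T+2*h), g2 t
      ≤ (1+2*h)^2 * B * ∫ t in (1+2*h)..(T+2*h), (A t)^2/t^2 * R0 F h ((x+h)-t) (x+h) := by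
    have h2int : IntervalIntegrable
        (fun t => (1+2*h)^2 * B * ((A t)^2/t^2 * R0 F h ((x+h)-t) (x+h)))
        volume (1+2*h) (T+2*h) :=
      (hwR_int _ _ (by linarith) (by linarith)).const_mul _
    have hmono := intervalIntegral.integral_mono_on (by linarith : 1+2*h ≤ T+2*h)
      hg2int h2int hg2le
    calc ∫ t in (1+2*h)..(T+2*h), g2 t
        ≤ ∫ t in (1+2*h)..(T+2*h), (1+2*h)^2 * B * ((A t)^2/t^2 * R0 F h ((x+h)-t) (x+h)) :=
          hmono
      _ = (1+2*h)^2 * B * ∫ t in (1+2*h)..(T+2*h), (A t)^2/t^2 * R0 F h ((x+h)-t) (x+h) :=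
          intervalIntegral.integral_const_mul _ _
  set Bp : ℝ := ((1+2*h)*η)*(x+h) with hBpdef
  have hTe : (1:ℝ) ≤ η * x := by rw [← hTdef]; exact hT
  have hxh0 : (0:ℝ) < x + h := by linarith
  have hBp1 : T + 2*h ≤ Bp := by
    rw [hBpdef, hTdef]
    have k1 : 0 ≤ h*(η*x-1) := mul_nonneg hh.le (by linarith)
    have k2 : 0 ≤ η*h := mul_nonneg hη0.le hh.le
    have k4 : 0 ≤ h*(η*h) := mul_nonneg hh.le k2
    nlinarith [k1, k2, k4]
  have hwRnn : ∀ u ∈ Set.Icc (1:ℝ) Bp, 0 ≤ (A u)^2/u^2 * R0 F h ((x+h)-u) (x+h) := by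
    intro u hu
    exact mul_nonneg (by positivity) (hR0nn u (by linarith [hu.1]))
  have hextend : ∫ t in (1+2*h)..(T+2*h), (A t)^2/t^2 * R0 F h ((x+h)-t) (x+h)
      ≤ ∫ t in (1:ℝ)..Bp, (A t)^2/t^2 * R0 F h ((x+h)-t) (x+h) := by
    have hadj1 := intervalIntegral.integral_add_adjacent_intervals
      (hwR_int 1 (1+2*h) one_pos (by linarith))
      (hwR_int (1+2*h) (T+2*h) (by linarith) (by linarith))
    have hadj2 := intervalIntegral.integral_add_adjacent_intervals
      (hwR_int 1 (T+2*h) one_pos (by linarith))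
      (hwR_int (T+2*h) Bp (by linarith) hBp1)
    have hp1 : 0 ≤ ∫ t in (1:ℝ)..(1+2*h), (A t)^2/t^2 * R0 F h ((x+h)-t) (x+h) :=
      intervalIntegral.integral_nonneg (by linarith)
        (fun u hu => hwRnn u ⟨hu.1, by linarith [hu.2]⟩)
    have hp2 : 0 ≤ ∫ t in (T+2*h)..Bp, (A t)^2/t^2 * R0 F h ((x+h)-t) (x+h) :=
      intervalIntegral.integral_nonneg hBp1
        (fun u hu => hwRnn u ⟨by linarith [hu.1], hu.2⟩)
    linarith
  set U : ℝ := ∫ t in (1:ℝ)..Bp, (A t)^2/t^2 * R0 F h ((x+h)-t) (x+h) with hUdef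
  have hUnn : 0 ≤ U := by
    rw [hUdef]
    exact intervalIntegral.integral_nonneg (by rw [hBpdef]; nlinarith) hwRnn
  -- final constant comparison
  have key1 : x * A (x+h) ≤ 2*K*(A x*(x+h)) := by
    nlinarith [mul_le_mul_of_nonneg_left hKx' hx0,
      mul_le_mul_of_nonneg_right (show x ≤ 2*(x+h) by linarith) (by positivity : (0:ℝ) ≤ K*A x)]
  have hfac : x/A x * ((1+2*h)^2 * B) ≤ 2*K*(1+2*h)^2/(c₁*h) * (1/(A (x+h))^2) := by
    have e1 : x/A x * ((1+2*h)^2 * B) = (x*(1+2*h)^2) / (A x*(c₁*h*(x+h)*A (x+h))) := by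
      rw [hBdef]; field_simp
    have e2 : 2*K*(1+2*h)^2/(c₁*h) * (1/(A (x+h))^2)
        = (2*K*(1+2*h)^2) / (c₁*h*(A (x+h))^2) := by
      field_simp
    rw [e1, e2, div_le_div_iff₀ (by positivity) (by positivity)]
    nlinarith [mul_le_mul_of_nonneg_right key1
      (by positivity : (0:ℝ) ≤ c₁*h*(1+2*h)^2*A (x+h))]
  calc x / A x * ∫ s in (1:ℝ)..T, (A s)^2/s^2 * (F (Set.Ioc (x-s) x)).toReal
      = x / A x * ∫ s in (1:ℝ)..T, (A s)^2/s^2 * (Gf F (x-s) - Gf F x) := by rw [hLeq]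
    _ ≤ x / A x * ((1+2*h)^2 * B * U) := by
        apply mul_le_mul_of_nonneg_left _ (by positivity)
        calc ∫ s in (1:ℝ)..T, (A s)^2/s^2 * (Gf F (x-s) - Gf F x)
            ≤ ∫ s in (1:ℝ)..T, (A s)^2/s^2 * (B * R0 F h ((x+h)-(s+2*h)) (x+h)) := big1
          _ = ∫ t in (1+2*h)..(T+2*h), g2 t := hsub2
          _ ≤ (1+2*h)^2 * B * ∫ t in (1+2*h)..(T+2*h), (A t)^2/t^2 * R0 F h ((x+h)-t) (x+h) :=
              hmid2
          _ ≤ (1+2*h)^2 * B * U := by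
              apply mul_le_mul_of_nonneg_left hextend (by positivity)
    _ = (x/A x * ((1+2*h)^2 * B)) * U := by ring
    _ ≤ (2*K*(1+2*h)^2/(c₁*h) * (1/(A (x+h))^2)) * U :=
        mul_le_mul_of_nonneg_right hfac hUnn
    _ = 2*K*(1+2*h)^2/(c₁*h) * (1/(A (x+h))^2 * U) := by ring



/-! Φ functions and their basic properties -/

noncomputable def PhiS (F : MeasureTheory.Measure ℝ) (A : ℝ → ℝ) (h η x : ℝ) : ℝ :=
  1 / (A x) ^ 2 * ∫ s in (1:ℝ)..(η * x), (A s) ^ 2 / s ^ 2 * R0 F h (x - s) x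

noncomputable def PhiP (F : MeasureTheory.Measure ℝ) (A : ℝ → ℝ) (η x : ℝ) : ℝ :=
  x / A x * ∫ s in (1:ℝ)..(η * x), (A s) ^ 2 / s ^ 2 * (F (Set.Ioc (x - s) x)).toReal

lemma PhiS_nonneg (hFsupp : F (Set.Iio 0) = 0) {η : ℝ} (hη : 0 < η) :
    ∀ᶠ x in atTop, 0 ≤ PhiS F A h η x := by
  filter_upwards [eventually_ge_atTop (1/η)] with x hx
  have hT : 1 ≤ η * x := by
    have := (div_le_iff₀ hη).mp hx
    linarith [this, mul_comm x η]
  apply mul_nonneg (by positivity)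
  apply intervalIntegral.integral_nonneg hT
  intro s hs
  exact mul_nonneg (by positivity) (R0_nonneg hFsupp (by linarith [hs.1]))

lemma PhiP_nonneg {η : ℝ} (hApos : ∀ x : ℝ, 0 ≤ x → 0 < A x) (hη : 0 < η) :
    ∀ᶠ x in atTop, 0 ≤ PhiP F A η x := by
  filter_upwards [eventually_ge_atTop (max (1/η) 0)] with x hx
  have hx0 : (0:ℝ) ≤ x := le_trans (le_max_right _ _) hx
  have hT : 1 ≤ η * x := by
    have := (div_le_iff₀ hη).mp (le_trans (le_max_left _ _) hx)
    linarith [this, mul_comm x η]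
  apply mul_nonneg (div_nonneg hx0 (hApos x hx0).le)
  apply intervalIntegral.integral_nonneg hT
  intro s hs
  exact mul_nonneg (by positivity) ENNReal.toReal_nonneg

lemma PhiS_mono (hFsupp : F (Set.Iio 0) = 0)
    (hApos : ∀ x : ℝ, 0 ≤ x → 0 < A x)
    (hAcont : ContinuousOn A (Set.Ici 0))
    (hT1 : (fun x : ℝ => (F (Set.Ioi x)).toReal) ~[atTop] fun x : ℝ => 1 / A x)
    (hh : 0 < h) {η₁ η₂ : ℝ} (hη₁ : 0 < η₁) (hη12 : η₁ ≤ η₂) :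
    ∀ᶠ x in atTop, PhiS F A h η₁ x ≤ PhiS F A h η₂ x := by
  have hGpos := Gf_pos hApos hT1
  filter_upwards [eventually_ge_atTop (1/η₁)] with x hx
  have hT : 1 ≤ η₁ * x := by
    have := (div_le_iff₀ hη₁).mp hx
    linarith [this, mul_comm x η₁]
  have hx0 : (0:ℝ) ≤ x := by nlinarith
  have hT2 : η₁ * x ≤ η₂ * x := mul_le_mul_of_nonneg_right hη12 hx0
  have hint : ∀ a b : ℝ, 0 < a → a ≤ b →
      IntervalIntegrable (fun s => (A s)^2/s^2 * R0 F h (x-s) x) volume a b := by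
    intro a b ha hab
    apply ContinuousOn.intervalIntegrable
    rw [Set.uIcc_of_le hab]
    exact (wA_contOn hAcont ha).mul (R0_shift_cont hGpos hh.le x).continuousOn
  have hadj := intervalIntegral.integral_add_adjacent_intervals
    (hint 1 (η₁*x) one_pos hT) (hint (η₁*x) (η₂*x) (by linarith) hT2)
  have hpos : 0 ≤ ∫ s in (η₁*x)..(η₂*x), (A s)^2/s^2 * R0 F h (x-s) x :=
    intervalIntegral.integral_nonneg hT2
      (fun u hu => mul_nonneg (by positivity) (R0_nonneg hFsupp (by linarith [hu.1])))
  apply mul_le_mul_of_nonneg_left _ (by positivity)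
  linarith

lemma PhiP_mono (hApos : ∀ x : ℝ, 0 ≤ x → 0 < A x)
    (hAcont : ContinuousOn A (Set.Ici 0))
    {η₁ η₂ : ℝ} (hη₁ : 0 < η₁) (hη12 : η₁ ≤ η₂) :
    ∀ᶠ x in atTop, PhiP F A η₁ x ≤ PhiP F A η₂ x := by
  filter_upwards [eventually_ge_atTop (max (1/η₁) 0)] with x hx
  have hx0 : (0:ℝ) ≤ x := le_trans (le_max_right _ _) hx
  have hT : 1 ≤ η₁ * x := by
    have := (div_le_iff₀ hη₁).mp (le_trans (le_max_left _ _) hx)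
    linarith [this, mul_comm x η₁]
  have hT2 : η₁ * x ≤ η₂ * x := mul_le_mul_of_nonneg_right hη12 hx0
  have hmeas : Measurable (fun s : ℝ => (F (Set.Ioc (x - s) x)).toReal) := by
    have : (fun s : ℝ => (F (Set.Ioc (x - s) x)).toReal)
        = fun s : ℝ => if x - s ≤ x then Gf F (x - s) - Gf F x else 0 := by
      funext s
      split_ifs with hc
      · exact Gf_ioc hc
      · rw [Set.Ioc_eq_empty (by intro hlt; exact hc hlt.le)]
        simp
    rw [this]
    apply Measurable.ite
    · exact measurableSet_le (measurable_const.sub measurable_id) measurable_const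
    · exact (Gf_meas.comp (measurable_const.sub measurable_id)).sub measurable_const
    · exact measurable_const
  have hbdd : ∀ y : ℝ, |(F (Set.Ioc (x - y) x)).toReal| ≤ 1 := by
    intro y
    rw [abs_of_nonneg ENNReal.toReal_nonneg]
    have h1 : F (Set.Ioc (x-y) x) ≤ 1 := prob_le_one
    simpa using ENNReal.toReal_mono ENNReal.one_ne_top h1
  have hint : ∀ a b : ℝ, 0 < a → a ≤ b →
      IntervalIntegrable (fun s => (A s)^2/s^2 * (F (Set.Ioc (x - s) x)).toReal) volume a b :=
    fun a b ha hab => contOn_mul_bdd_intInt hab (wA_contOn hAcont ha) hmeas hbdd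
  have hadj := intervalIntegral.integral_add_adjacent_intervals
    (hint 1 (η₁*x) one_pos hT) (hint (η₁*x) (η₂*x) (by linarith) hT2)
  have hpos : 0 ≤ ∫ s in (η₁*x)..(η₂*x), (A s)^2/s^2 * (F (Set.Ioc (x - s) x)).toReal :=
    intervalIntegral.integral_nonneg hT2
      (fun u hu => mul_nonneg (by positivity) ENNReal.toReal_nonneg)
  apply mul_le_mul_of_nonneg_left _ (div_nonneg hx0 (hApos x hx0).le)
  linarith

end Aux

/-! limsup machinery -/

lemma ev_shift {p : ℝ → Prop} (c : ℝ) (hp : ∀ᶠ x in atTop, p x) :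
    ∀ᶠ x in atTop, p (x + c) :=
  (tendsto_atTop_add_const_right atTop c tendsto_id).eventually hp

lemma bdd_shift_s11 {g : ℝ → ℝ} (c : ℝ) (hg : Filter.IsBoundedUnder (· ≤ ·) atTop g) :
    Filter.IsBoundedUnder (· ≤ ·) atTop (fun x => g (x + c)) := by
  obtain ⟨b, hb⟩ := hg
  rw [eventually_map] at hb
  exact ⟨b, by rw [eventually_map]; exact ev_shift c hb⟩

lemma limsup_shift (g : ℝ → ℝ) (c : ℝ) :
    limsup (fun x => g (x + c)) atTop = limsup g atTop := by
  rw [limsup_eq, limsup_eq]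
  congr 1
  ext b
  simp only [Set.mem_setOf_eq, eventually_atTop]
  constructor
  · rintro ⟨N, hN⟩
    exact ⟨N + c, fun y hy => by
      have := hN (y - c) (by linarith)
      simpa using this⟩
  · rintro ⟨N, hN⟩
    exact ⟨N - c, fun y hy => hN (y + c) (by linarith)⟩

lemma tendsto_mul_nhdsWithin (a : ℝ) (ha : 0 < a) :
    Tendsto (fun η : ℝ => a * η) (nhdsWithin 0 (Set.Ioi 0)) (nhdsWithin 0 (Set.Ioi 0)) := by
  rw [tendsto_nhdsWithin_iff]
  constructor
  · have hc : Continuous (fun η : ℝ => a * η) := continuous_const.mul continuous_id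
    have := hc.tendsto (0:ℝ)
    simpa using this.mono_left nhdsWithin_le_nhds
  · filter_upwards [self_mem_nhdsWithin] with η hη
    exact Set.mem_Ioi.mpr (mul_pos ha hη)

/-- generic transfer of the vanishing-limsup condition along two-sided comparison bounds -/
lemma limsup_transfer_s11 (Φ Ψ : ℝ → ℝ → ℝ) (C a d ε C' a' d' ε' : ℝ)
    (hC : 0 < C) (ha : 0 < a) (hε : 0 < ε)
    (hC' : 0 < C') (ha' : 0 < a') (hε' : 0 < ε')
    (hΦ0 : ∀ η : ℝ, 0 < η → ∀ᶠ x in atTop, 0 ≤ Φ η x)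
    (hΨ0 : ∀ η : ℝ, 0 < η → ∀ᶠ x in atTop, 0 ≤ Ψ η x)
    (hΨmono : ∀ η₁ η₂ : ℝ, 0 < η₁ → η₁ ≤ η₂ → ∀ᶠ x in atTop, Ψ η₁ x ≤ Ψ η₂ x)
    (hΦmono : ∀ η₁ η₂ : ℝ, 0 < η₁ → η₁ ≤ η₂ → ∀ᶠ x in atTop, Φ η₁ x ≤ Φ η₂ x)
    (h1 : ∀ η : ℝ, 0 < η → η ≤ ε → ∀ᶠ x in atTop, Φ η x ≤ C * Ψ (a*η) (x + d))
    (h2 : ∀ η : ℝ, 0 < η → η ≤ ε' → ∀ᶠ x in atTop, Ψ η x ≤ C' * Φ (a'*η) (x + d'))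
    (H : Tendsto (fun η => limsup (Ψ η) atTop) (nhdsWithin 0 (Set.Ioi 0)) (nhds 0)) :
    Tendsto (fun η => limsup (Φ η) atTop) (nhdsWithin 0 (Set.Ioi 0)) (nhds 0) := by
  by_cases hB : ∃ η₀, 0 < η₀ ∧ Filter.IsBoundedUnder (· ≤ ·) atTop (Ψ η₀)
  · obtain ⟨η₀, hη₀pos, hbdd⟩ := hB
    set ε₂ : ℝ := min ε (η₀/a) with hε₂def
    have hε₂pos : 0 < ε₂ := lt_min hε (by positivity)
    have key : ∀ η : ℝ, 0 < η → η ≤ ε₂ →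
        0 ≤ limsup (Φ η) atTop ∧
        limsup (Φ η) atTop ≤ C * limsup (Ψ (a*η)) atTop := by
      intro η hη hηε₂
      have hηε : η ≤ ε := le_trans hηε₂ (min_le_left _ _)
      have haη : 0 < a*η := mul_pos ha hη
      have haη₀ : a*η ≤ η₀ := by
        have := le_trans hηε₂ (min_le_right _ _)
        rw [le_div_iff₀ ha] at this
        linarith [mul_comm η a]
      have hbdd1 : Filter.IsBoundedUnder (· ≤ ·) atTop (Ψ (a*η)) :=
        hbdd.mono_le (hΨmono _ _ haη haη₀)
      have hbdd2 : Filter.IsBoundedUnder (· ≤ ·) atTop (fun x => Ψ (a*η) (x+d)) :=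
        bdd_shift_s11 d hbdd1
      have hbdd3 : Filter.IsBoundedUnder (· ≤ ·) atTop (fun x => C * Ψ (a*η) (x+d)) := by
        obtain ⟨b, hb⟩ := hbdd2
        rw [eventually_map] at hb
        refine ⟨C*b, ?_⟩
        rw [eventually_map]
        filter_upwards [hb] with y hy
        exact mul_le_mul_of_nonneg_left hy hC.le
      have hΦbdd : Filter.IsBoundedUnder (· ≤ ·) atTop (Φ η) :=
        hbdd3.mono_le (h1 η hη hηε)
      have hco : Filter.IsCoboundedUnder (· ≤ ·) atTop (Φ η) :=
        Filter.isCoboundedUnder_le_of_eventually_le atTop (hΦ0 η hη)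
      have hlow : 0 ≤ limsup (Φ η) atTop :=
        le_limsup_of_frequently_le ((hΦ0 η hη).frequently) hΦbdd
      have hΨshiftnonneg : ∀ᶠ x in atTop, 0 ≤ Ψ (a*η) (x+d) := ev_shift d (hΨ0 _ haη)
      have hco2 : Filter.IsCoboundedUnder (· ≤ ·) atTop (fun x => Ψ (a*η) (x+d)) :=
        Filter.isCoboundedUnder_le_of_eventually_le atTop hΨshiftnonneg
      have hco3 : Filter.IsCoboundedUnder (· ≤ ·) atTop (fun x => C * Ψ (a*η) (x+d)) :=
        Filter.isCoboundedUnder_le_of_eventually_le atTop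
          (by filter_upwards [hΨshiftnonneg] with y hy
              exact mul_nonneg hC.le hy)
      have hlim1 : limsup (Φ η) atTop ≤ limsup (fun x => C * Ψ (a*η) (x+d)) atTop :=
        limsup_le_limsup (h1 η hη hηε) hco hbdd3
      have hlim2 : limsup (fun x => C * Ψ (a*η) (x+d)) atTop
          = C * limsup (fun x => Ψ (a*η) (x+d)) atTop :=
        ((OrderIso.mulLeft₀ C hC).limsup_apply hbdd2 hco2 hbdd3 hco3).symm
      have hlim3 : limsup (fun x => Ψ (a*η) (x+d)) atTop = limsup (Ψ (a*η)) atTop :=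
        limsup_shift _ d
      refine ⟨hlow, ?_⟩
      rw [hlim2, hlim3] at hlim1
      exact hlim1
    have hCN : Tendsto (fun η => C * limsup (Ψ (a*η)) atTop)
        (nhdsWithin 0 (Set.Ioi 0)) (nhds 0) := by
      have := (H.comp (tendsto_mul_nhdsWithin a ha)).const_mul C
      simpa using this
    apply tendsto_of_tendsto_of_tendsto_of_le_of_le' tendsto_const_nhds hCN
    · filter_upwards [Ioo_mem_nhdsGT hε₂pos] with η hη
      exact (key η hη.1 hη.2.le).1
    · filter_upwards [Ioo_mem_nhdsGT hε₂pos] with η hη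
      exact (key η hη.1 hη.2.le).2
  · push_neg at hB
    have hΦunb : ∀ η : ℝ, 0 < η → ¬ Filter.IsBoundedUnder (· ≤ ·) atTop (Φ η) := by
      intro η hη hbddΦ
      set η₂ : ℝ := min (η/a') ε' with hη₂def
      have hη₂pos : 0 < η₂ := lt_min (by positivity) hε'
      have hη₂ε' : η₂ ≤ ε' := min_le_right _ _
      have ha'η₂ : 0 < a'*η₂ := mul_pos ha' hη₂pos
      have ha'η₂η : a'*η₂ ≤ η := by
        have := min_le_left (η/a') ε'
        have h3 : η₂ ≤ η/a' := this
        rw [le_div_iff₀ ha'] at h3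
        linarith [mul_comm η₂ a']
      refine hB η₂ hη₂pos ?_
      obtain ⟨b, hb⟩ := bdd_shift_s11 d' hbddΦ
      rw [eventually_map] at hb
      refine ⟨C'*b, ?_⟩
      rw [eventually_map]
      filter_upwards [h2 η₂ hη₂pos hη₂ε', ev_shift d' (hΦmono _ _ ha'η₂ ha'η₂η), hb]
        with y hy1 hy2 hy3
      calc Ψ η₂ y ≤ C' * Φ (a'*η₂) (y + d') := hy1
        _ ≤ C' * Φ η (y + d') := mul_le_mul_of_nonneg_left hy2 hC'.le
        _ ≤ C' * b := mul_le_mul_of_nonneg_left hy3 hC'.le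
    have hzero : ∀ η : ℝ, 0 < η → limsup (Φ η) atTop = 0 := by
      intro η hη
      rw [limsup_eq]
      have hempty : {a | ∀ᶠ x in atTop, Φ η x ≤ a} = ∅ := by
        rw [Set.eq_empty_iff_forall_notMem]
        intro b hb
        exact hΦunb η hη ⟨b, eventually_map.mpr hb⟩
      rw [hempty, Real.sInf_empty]
    apply Tendsto.congr' _ (tendsto_const_nhds (α := ℝ))
    filter_upwards [self_mem_nhdsWithin] with η hη
    exact (hzero η hη).symm


/-- **Lemma 3.1 (second part)**: under (T1), condition (★★) is equivalent to its
reformulation in terms of `P(X ∈ (x−s, x])`. -/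
theorem condStarStar_iff_prob_form
    (F : Measure ℝ) [IsProbabilityMeasure F]
    (hFsupp : F (Set.Iio 0) = 0)
    (α : ℝ) (hα1 : 0 < α) (hα2 : α < 1)
    (A : ℝ → ℝ)
    (hApos : ∀ x : ℝ, 0 ≤ x → 0 < A x)
    (hAcont : ContinuousOn A (Set.Ici 0))
    (hAmono : StrictMonoOn A (Set.Ici 0))
    (hAreg : ∀ l : ℝ, 0 < l →
      Tendsto (fun x : ℝ => A (l * x) / A x) atTop (nhds (l ^ α)))
    (hT1 : (fun x : ℝ => (F (Set.Ioi x)).toReal) ~[atTop] fun x : ℝ => 1 / A x)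
    (h : ℝ) (hh : 0 < h)
    (hspan : (∃ t, IsArithSpan F t) → IsGreatest {t | IsArithSpan F t} h)
    :
    CondStarStar F A h ↔
      Tendsto (fun η : ℝ =>
          limsup (fun x : ℝ => x / A x *
            ∫ s in (1:ℝ)..(η * x), (A s) ^ 2 / s ^ 2 * (F (Set.Ioc (x - s) x)).toReal)
            atTop)
        (nhdsWithin 0 (Set.Ioi 0)) (nhds 0) := by
  obtain ⟨C₂, hC₂pos, hP2⟩ := keyP2 (F := F) (A := A) (α := α) (h := h)
    hFsupp hApos hAcont hAmono hAreg hT1 hh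
  constructor
  · intro hstar
    have hstar' : Tendsto (fun η => limsup (PhiS F A h η) atTop)
        (nhdsWithin 0 (Set.Ioi 0)) (nhds 0) := hstar
    show Tendsto (fun η => limsup (PhiP F A η) atTop) (nhdsWithin 0 (Set.Ioi 0)) (nhds 0)
    exact limsup_transfer_s11 (PhiP F A) (PhiS F A h) C₂ (1+2*h) h (1/4) (2*h*(1+h)) (1+h) 0 (1/2)
      hC₂pos (by linarith) (by norm_num) (by positivity) (by linarith) (by norm_num)
      (fun η hη => PhiP_nonneg hApos hη)
      (fun η hη => PhiS_nonneg hFsupp hη)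
      (fun η₁ η₂ h1 h2 => PhiS_mono hFsupp hApos hAcont hT1 hh h1 h2)
      (fun η₁ η₂ h1 h2 => PhiP_mono hApos hAcont h1 h2)
      (fun η hη hηε => hP2 η hη hηε)
      (fun η hη hηε => by
        filter_upwards [keyP1 hFsupp hApos hAcont hAmono hT1 hh hη hηε] with x hx
        simpa only [PhiS, PhiP, add_zero] using hx)
      hstar'
  · intro hprob
    have hprob' : Tendsto (fun η => limsup (PhiP F A η) atTop)
        (nhdsWithin 0 (Set.Ioi 0)) (nhds 0) := hprob
    show Tendsto (fun η => limsup (PhiS F A h η) atTop) (nhdsWithin 0 (Set.Ioi 0)) (nhds 0)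
    exact limsup_transfer_s11 (PhiS F A h) (PhiP F A) (2*h*(1+h)) (1+h) 0 (1/2) C₂ (1+2*h) h (1/4)
      (by positivity) (by linarith) (by norm_num) hC₂pos (by linarith) (by norm_num)
      (fun η hη => PhiS_nonneg hFsupp hη)
      (fun η hη => PhiP_nonneg hApos hη)
      (fun η₁ η₂ h1 h2 => PhiP_mono hApos hAcont h1 h2)
      (fun η₁ η₂ h1 h2 => PhiS_mono hFsupp hApos hAcont hT1 hh h1 h2)
      (fun η hη hηε => by
        filter_upwards [keyP1 hFsupp hApos hAcont hAmono hT1 hh hη hηε] with x hx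
        simpa only [PhiS, PhiP, add_zero] using hx)
      (fun η hη hηε => hP2 η hη hηε)
      hprob'
end

section
/- Let A : [0,∞) → (0,∞) be continuous, strictly increasing, regularly varying at infinity with index α ∈ (0,1), with A(x) → ∞. Fix arbitrary positive sequences (z_n) and (ε_n) with z_n → ∞ and ε_n → 0. Then there exist a constant c ∈ (0,∞), a strictly increasing sequence of indices (n_k), and a Borel probability measure F on (0,∞) with F((x,∞)) ~ 1/A(x) as x → ∞, such that F({z_{n_k}}) ≥ c·ε_{n_k}/A(z_{n_k}) for every k ∈ ℕ. -/
open MeasureTheory ProbabilityTheory Filter Set Asymptotics Topology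


lemma geom_tail_summable (K : ℕ) :
    Summable (fun k : ℕ => if k < K then (0:ℝ) else 2⁻¹ ^ k) := by
  have hgeo : Summable (fun k : ℕ => (2⁻¹:ℝ) ^ k) :=
    summable_geometric_of_lt_one (by norm_num) (by norm_num)
  refine Summable.of_nonneg_of_le (fun k => ?_) (fun k => ?_) hgeo
  · split <;> positivity
  · split
    · positivity
    · exact le_rfl

lemma geom_tail_le (K : ℕ) : ∑' k : ℕ, (if k < K then (0:ℝ) else 2⁻¹ ^ k) = 2⁻¹ ^ K * 2 := by
  rw [← Summable.sum_add_tsum_nat_add K (geom_tail_summable K),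
    Finset.sum_eq_zero (fun i hi => if_pos (Finset.mem_range.1 hi)), zero_add]
  have : ∀ i : ℕ, (if (i + K) < K then (0:ℝ) else 2⁻¹ ^ (i + K)) = 2⁻¹ ^ K * 2⁻¹ ^ i := by
    intro i; rw [if_neg (by omega), pow_add]; ring
  rw [tsum_congr this, tsum_mul_left, tsum_geometric_of_lt_one (by norm_num) (by norm_num)]
  norm_num

lemma stieltjes_Ioi (f : StieltjesFunction ℝ) {l u : ℝ}
    (hfl : Tendsto f atBot (𝓝 l)) (hfu : Tendsto f atTop (𝓝 u)) (x : ℝ) :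
    f.measure (Ioi x) = ENNReal.ofReal (u - f x) := by
  have h1 : f.measure (Iic x) + f.measure (Ioi x) = f.measure univ := by
    rw [← measure_union (Iic_disjoint_Ioi le_rfl) measurableSet_Ioi, Iic_union_Ioi]
  rw [f.measure_univ hfl hfu, f.measure_Iic hfl] at h1
  have h2 : l ≤ f x := f.mono.le_of_tendsto hfl x
  have h3 : f x ≤ u := f.mono.ge_of_tendsto hfu x
  have h4 := ENNReal.sub_eq_of_eq_add_rev (a := ENNReal.ofReal (u - l))
    (b := ENNReal.ofReal (f x - l)) (c := f.measure (Ioi x)) ENNReal.ofReal_ne_top h1.symm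
  rw [← h4, ← ENNReal.ofReal_sub _ (by linarith)]
  ring_nf

lemma tendsto_A_atTop (α : ℝ) (hα1 : 0 < α)
    (A : ℝ → ℝ) (hApos : ∀ x : ℝ, 0 ≤ x → 0 < A x)
    (hAmono : StrictMonoOn A (Set.Ici 0))
    (hAreg2 : Tendsto (fun x : ℝ => A (2 * x) / A x) atTop (𝓝 ((2:ℝ) ^ α))) :
    Tendsto A atTop atTop := by
  have h2 : (1:ℝ) < 2 ^ α := Real.one_lt_rpow (by norm_num) hα1
  set r : ℝ := (1 + 2 ^ α) / 2 with hrdef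
  have hr1 : 1 < r := by rw [hrdef]; linarith
  have hr2 : r < 2 ^ α := by rw [hrdef]; linarith
  have hev : ∀ᶠ x : ℝ in atTop, r < A (2 * x) / A x := hAreg2.eventually_const_lt hr2
  obtain ⟨X, hXall⟩ := eventually_atTop.1 (hev.and (eventually_ge_atTop 1))
  set Y := max X 1 with hY
  have hY1 : (1:ℝ) ≤ Y := le_max_right _ _
  have hYpos : (0:ℝ) < Y := by linarith
  have hkey : ∀ x : ℝ, Y ≤ x → r * A x ≤ A (2 * x) := by
    intro x hx
    have hx' : X ≤ x := le_trans (le_max_left _ _) hx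
    have h := (hXall x hx').1
    have hApos' : 0 < A x := hApos x (by linarith [le_trans hY1 hx])
    rw [lt_div_iff₀ hApos'] at h
    linarith
  have hiter : ∀ n : ℕ, r ^ n * A Y ≤ A (2 ^ n * Y) := by
    intro n
    induction n with
    | zero => simp
    | succ n ih =>
      have h1 : Y ≤ 2 ^ n * Y := le_mul_of_one_le_left hYpos.le (one_le_pow₀ (by norm_num))
      have h2' := hkey _ h1
      have h3 : r * (r ^ n * A Y) ≤ r * A (2 ^ n * Y) :=
        mul_le_mul_of_nonneg_left ih (by linarith)
      calc r ^ (n+1) * A Y = r * (r ^ n * A Y) := by ring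
        _ ≤ r * A (2 ^ n * Y) := h3
        _ ≤ A (2 * (2 ^ n * Y)) := h2'
        _ = A (2 ^ (n+1) * Y) := by ring_nf
  rw [tendsto_atTop]
  intro b
  have hAY : 0 < A Y := hApos Y hYpos.le
  obtain ⟨n, hn⟩ := (tendsto_atTop.1
    ((tendsto_pow_atTop_atTop_of_one_lt hr1).atTop_mul_const hAY)) b |>.exists
  filter_upwards [eventually_ge_atTop (2 ^ n * Y)] with x hx
  have h1 : (0:ℝ) ≤ 2 ^ n * Y := by positivity
  have h2' : A (2 ^ n * Y) ≤ A x := hAmono.monotoneOn (mem_Ici.2 h1)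
    (mem_Ici.2 (le_trans h1 hx)) hx
  calc b ≤ r ^ n * A Y := hn
    _ ≤ A (2 ^ n * Y) := hiter n
    _ ≤ A x := h2'

/-- **Lemma 7.1**: given `A` regularly varying of index `α ∈ (0,1)` and sequences
`z_n → ∞`, `ε_n → 0`, there are `c > 0`, a subsequence `n_k` and a probability `F`
on `(0,∞)` with tail `∼ 1/A` such that `F({z_{n_k}}) ≥ c·ε_{n_k}/A(z_{n_k})`. -/
theorem atom_construction
    (α : ℝ) (hα1 : 0 < α) (hα2 : α < 1)
    (A : ℝ → ℝ)
    (hApos : ∀ x : ℝ, 0 ≤ x → 0 < A x)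
    (hAcont : ContinuousOn A (Set.Ici 0))
    (hAmono : StrictMonoOn A (Set.Ici 0))
    (hAreg : ∀ l : ℝ, 0 < l →
      Tendsto (fun x : ℝ => A (l * x) / A x) atTop (nhds (l ^ α)))
    (z ε : ℕ → ℝ) (hz : ∀ n, 0 < z n) (hε : ∀ n, 0 < ε n)
    (hztop : Tendsto z atTop atTop) (hε0 : Tendsto ε atTop (nhds 0)) :
    ∃ c : ℝ, 0 < c ∧ ∃ nk : ℕ → ℕ, StrictMono nk ∧
      ∃ F : Measure ℝ, IsProbabilityMeasure F ∧ F (Set.Iic 0) = 0 ∧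
        ((fun x : ℝ => (F (Set.Ioi x)).toReal) ~[atTop] fun x : ℝ => 1 / A x) ∧
        ∀ k : ℕ, c * ε (nk k) / A (z (nk k)) ≤ (F {z (nk k)}).toReal := by
  classical
  have hAtop : Tendsto A atTop atTop :=
    tendsto_A_atTop α hα1 A hApos hAmono (hAreg 2 (by norm_num))
  -- choose x0 with A x0 ≥ 4
  obtain ⟨x0, hx04, hx01⟩ :=
    ((hAtop.eventually_ge_atTop 4).and (eventually_ge_atTop 1)).exists
  have hx0pos : (0:ℝ) < x0 := by linarith
  have hAx0 : 0 < A x0 := hApos x0 hx0pos.le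
  -- subsequence
  have hNex : ∀ k : ℕ, ∃ N : ℕ, ∀ n ≥ N, ε n ≤ 2⁻¹ ^ k := by
    intro k
    have h : ∀ᶠ n in atTop, ε n < 2⁻¹ ^ k := hε0.eventually_lt_const (by positivity)
    exact eventually_atTop.1 (h.mono fun n hn => hn.le)
  choose N hNs using hNex
  set nk : ℕ → ℕ := fun k => Nat.rec (N 0) (fun k ih => max (ih + 1) (N (k + 1))) k with hnkdef
  have hnk_succ : ∀ k, nk (k + 1) = max (nk k + 1) (N (k + 1)) := fun k => rfl
  have hnk_mono : StrictMono nk := strictMono_nat_of_lt_succ fun k => by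
    rw [hnk_succ]; exact lt_of_lt_of_le (Nat.lt_succ_self _) (le_max_left _ _)
  have hεk : ∀ k, ε (nk k) ≤ 2⁻¹ ^ k := by
    intro k
    cases k with
    | zero => exact hNs 0 _ le_rfl
    | succ k => exact hNs (k + 1) _ (by rw [hnk_succ]; exact le_max_right _ _)
  -- constants
  have hA0 : 0 < A 0 := hApos 0 le_rfl
  set c : ℝ := A 0 / 8 with hcdef
  have hc : 0 < c := by positivity
  set a : ℕ → ℝ := fun k => c * ε (nk k) / A (z (nk k)) with hadef
  have hAz : ∀ n : ℕ, A 0 ≤ A (z n) := fun n =>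
    (hAmono (mem_Ici.2 le_rfl) (mem_Ici.2 (hz n).le) (hz n)).le
  have hAzpos : ∀ n, 0 < A (z n) := fun n => hApos _ (hz n).le
  have ha_pos : ∀ k, 0 < a k := fun k =>
    div_pos (mul_pos hc (hε _)) (hAzpos _)
  have ha_le : ∀ k, a k ≤ 2⁻¹ ^ k / 8 := by
    intro k
    have h1 : c * ε (nk k) / A (z (nk k)) ≤ c * 2⁻¹ ^ k / A 0 :=
      div_le_div₀ (by positivity) (mul_le_mul_of_nonneg_left (hεk k) hc.le) hA0 (hAz _)
    calc a k ≤ c * 2⁻¹ ^ k / A 0 := h1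
      _ = 2⁻¹ ^ k / 8 := by rw [hcdef]; field_simp
  have hgeo : Summable (fun k : ℕ => (2⁻¹:ℝ) ^ k) :=
    summable_geometric_of_lt_one (by norm_num) (by norm_num)
  have ha_sum : Summable a :=
    Summable.of_nonneg_of_le (fun k => (ha_pos k).le) ha_le (hgeo.div_const 8)
  set s : ℝ := ∑' k, a k with hsdef
  have hs_nonneg : 0 ≤ s := tsum_nonneg fun k => (ha_pos k).le
  have hs_le : s ≤ 1/4 := by
    have h2 : ∑' k : ℕ, (2⁻¹:ℝ) ^ k / 8 = 1/4 := by
      rw [tsum_div_const, tsum_geometric_of_lt_one (by norm_num) (by norm_num)]; norm_num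
    calc s ≤ ∑' k : ℕ, (2⁻¹:ℝ) ^ k / 8 := Summable.tsum_le_tsum ha_le ha_sum (hgeo.div_const 8)
      _ = 1/4 := h2
  have hAx0inv : (A x0)⁻¹ ≤ 1/4 := by
    rw [show (1:ℝ)/4 = 4⁻¹ by norm_num]
    exact inv_anti₀ (by norm_num) hx04
  set m0 : ℝ := 1 - (A x0)⁻¹ - s with hm0def
  have hm0 : 0 ≤ m0 := by rw [hm0def]; linarith
  -- the Stieltjes function
  have hAmax_pos : ∀ x : ℝ, 0 < A (max x x0) := fun x =>
    hApos _ (le_trans hx0pos.le (le_max_right _ _))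
  have hfmono : Monotone (fun x : ℝ => -(A (max x x0))⁻¹) := by
    intro u v huv
    simp only [neg_le_neg_iff]
    exact inv_anti₀ (hAmax_pos u)
      (hAmono.monotoneOn (mem_Ici.2 (le_trans hx0pos.le (le_max_right _ _)))
        (mem_Ici.2 (le_trans hx0pos.le (le_max_right _ _))) (max_le_max huv le_rfl))
  have hfcont : Continuous (fun x : ℝ => -(A (max x x0))⁻¹) := by
    have h1 : Continuous fun x : ℝ => A (max x x0) :=
      hAcont.comp_continuous (continuous_id.max continuous_const)
        (fun x => mem_Ici.2 (le_trans hx0pos.le (le_max_right _ _)))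
    exact (h1.inv₀ fun x => (hAmax_pos x).ne').neg
  set f : StieltjesFunction ℝ :=
    ⟨fun x => -(A (max x x0))⁻¹, hfmono, fun x => hfcont.continuousAt.continuousWithinAt⟩
    with hfdef
  have hfeq : ∀ x, f x = -(A (max x x0))⁻¹ := fun x => rfl
  have hf_top : Tendsto f atTop (𝓝 0) := by
    have h1 : Tendsto (fun x : ℝ => -(A x)⁻¹) atTop (𝓝 0) := by
      have := (tendsto_inv_atTop_zero.comp hAtop).neg
      rwa [neg_zero] at this
    apply h1.congr'
    filter_upwards [eventually_ge_atTop x0] with x hx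
    show -(A x)⁻¹ = -(A (max x x0))⁻¹
    rw [max_eq_left hx]
  have hf_bot : Tendsto f atBot (𝓝 (-(A x0)⁻¹)) := by
    apply tendsto_const_nhds.congr'
    filter_upwards [eventually_le_atBot x0] with x hx
    show -(A x0)⁻¹ = -(A (max x x0))⁻¹
    rw [max_eq_right hx]
  -- the measure
  set ν : Measure ℝ := Measure.sum (fun k => ENNReal.ofReal (a k) • Measure.dirac (z (nk k)))
    with hνdef
  set F : Measure ℝ := f.measure + ENNReal.ofReal m0 • Measure.dirac x0 + ν with hFdef
  have hite_sum : ∀ p : ℕ → Prop, ∀ _ : DecidablePred p,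
      Summable (fun k => if p k then a k else 0) := by
    intro p inst
    refine Summable.of_nonneg_of_le (fun k => ?_) (fun k => ?_) ha_sum
    · split
      · exact (ha_pos k).le
      · exact le_rfl
    · split
      · exact le_rfl
      · exact (ha_pos k).le
  have hν_eval : ∀ t : Set ℝ, MeasurableSet t →
      ν t = ENNReal.ofReal (∑' k, if z (nk k) ∈ t then a k else 0) := by
    intro t ht
    rw [hνdef, Measure.sum_apply _ ht]
    have h1 : ∀ k : ℕ, (ENNReal.ofReal (a k) • Measure.dirac (z (nk k))) t
        = ENNReal.ofReal (if z (nk k) ∈ t then a k else 0) := by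
      intro k
      rw [Measure.smul_apply, Measure.dirac_apply' _ ht, smul_eq_mul]
      by_cases h : z (nk k) ∈ t
      · rw [if_pos h, indicator_of_mem h]; simp
      · rw [if_neg h, indicator_of_notMem h]; simp
    rw [tsum_congr h1,
      ← ENNReal.ofReal_tsum_of_nonneg (fun k => by split <;> [exact (ha_pos k).le; exact le_rfl])
        (hite_sum _ _)]
  have hFapp : ∀ t : Set ℝ, F t
      = f.measure t + ENNReal.ofReal m0 * Measure.dirac x0 t + ν t := by
    intro t
    rw [hFdef]
    simp [Measure.add_apply, Measure.smul_apply, smul_eq_mul]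
  have hFuniv : F univ = 1 := by
    rw [hFapp, hν_eval univ MeasurableSet.univ]
    have h1 : f.measure univ = ENNReal.ofReal (A x0)⁻¹ := by
      rw [f.measure_univ hf_bot hf_top]; norm_num
    have h2 : Measure.dirac x0 (univ : Set ℝ) = 1 := by simp
    rw [h1, h2, mul_one]
    simp only [mem_univ, ite_true]
    rw [← hsdef, ← ENNReal.ofReal_add (inv_nonneg.2 hAx0.le) hm0,
      ← ENNReal.ofReal_add (add_nonneg (inv_nonneg.2 hAx0.le) hm0) hs_nonneg]
    rw [show (A x0)⁻¹ + m0 + s = 1 by rw [hm0def]; ring]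
    exact ENNReal.ofReal_one
  haveI hPF : IsProbabilityMeasure F := ⟨hFuniv⟩
  -- F (Iic 0) = 0
  have hF_Iic : F (Iic 0) = 0 := by
    rw [hFapp]
    have h1 : f.measure (Iic 0) = 0 := by
      have h0 : f.measure (Iic x0) = 0 := by
        rw [f.measure_Iic hf_bot, hfeq, max_eq_right le_rfl]
        simp
      exact measure_mono_null (Iic_subset_Iic.2 hx0pos.le) h0
    have h2 : Measure.dirac x0 (Iic 0) = 0 := by
      rw [Measure.dirac_apply' _ measurableSet_Iic, indicator_of_notMem]
      simp [not_le.2 hx0pos]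
    have h3 : ν (Iic 0) = 0 := by
      rw [hν_eval _ measurableSet_Iic]
      have : ∀ k, (if z (nk k) ∈ Iic 0 then a k else 0) = 0 := fun k =>
        if_neg (by simp [not_le.2 (hz _)])
      rw [ENNReal.ofReal_eq_zero]
      refine le_of_eq ((tsum_congr fun k => ?_).trans tsum_zero)
      exact if_neg (by simp [not_le.2 (hz _)])
    rw [h1, h2, h3, mul_zero]
    simp
  -- atoms
  have hatom : ∀ k : ℕ, c * ε (nk k) / A (z (nk k)) ≤ (F {z (nk k)}).toReal := by
    intro k
    have h1 : ENNReal.ofReal (a k) ≤ ν {z (nk k)} := by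
      rw [hν_eval _ (measurableSet_singleton _)]
      apply ENNReal.ofReal_le_ofReal
      have h2 := Summable.le_tsum (hite_sum (fun j => z (nk j) ∈ ({z (nk k)} : Set ℝ))
          (fun j => Classical.propDecidable _)) k
        (fun j _ => by split <;> [exact (ha_pos j).le; exact le_rfl])
      rwa [if_pos (mem_singleton _)] at h2
    have h3 : ν {z (nk k)} ≤ F {z (nk k)} := by
      rw [hFapp]
      exact le_add_self
    have h4 : ENNReal.ofReal (a k) ≤ F {z (nk k)} := le_trans h1 h3
    have h5 := ENNReal.toReal_mono (measure_ne_top F _) h4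
    rwa [ENNReal.toReal_ofReal (ha_pos k).le, hadef] at h5
  -- tail function
  set g : ℝ → ℝ := fun x => ∑' k, if x < z (nk k) then a k else 0 with hgdef
  have hg_sum : ∀ x : ℝ, Summable (fun k => if x < z (nk k) then a k else 0) :=
    fun x => hite_sum _ _
  have hg_nonneg : ∀ x, 0 ≤ g x := fun x =>
    tsum_nonneg fun k => by split <;> [exact (ha_pos k).le; exact le_rfl]
  have hF_Ioi : ∀ x : ℝ, x0 ≤ x → (F (Ioi x)).toReal = (A x)⁻¹ + g x := by
    intro x hx
    have hAx : 0 < A x := hApos x (le_trans hx0pos.le hx)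
    have hμ : f.measure (Ioi x) = ENNReal.ofReal (A x)⁻¹ := by
      rw [stieltjes_Ioi f hf_bot hf_top, hfeq, max_eq_left hx]
      norm_num
    have hd : Measure.dirac x0 (Ioi x) = 0 := by
      rw [Measure.dirac_apply' _ measurableSet_Ioi, indicator_of_notMem]
      simp [not_lt.2 hx]
    have hν' : ν (Ioi x) = ENNReal.ofReal (g x) := hν_eval _ measurableSet_Ioi
    rw [hFapp, hμ, hd, hν', mul_zero, add_zero,
      ← ENNReal.ofReal_add (inv_nonneg.2 hAx.le) (hg_nonneg x),
      ENNReal.toReal_ofReal (add_nonneg (inv_nonneg.2 hAx.le) (hg_nonneg x))]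
  -- the h-function and its limit
  set hfun : ℝ → ℝ := fun x => ∑' k, if x < z (nk k) then ε (nk k) else 0 with hhdef
  have hh_sum : ∀ x : ℝ, Summable (fun k => if x < z (nk k) then ε (nk k) else 0) := by
    intro x
    refine Summable.of_nonneg_of_le (fun k => ?_) (fun k => ?_) hgeo
    · split
      · exact (hε _).le
      · exact le_rfl
    · split
      · exact hεk k
      · positivity
  have hh_nonneg : ∀ x, 0 ≤ hfun x := fun x =>
    tsum_nonneg fun k => by split <;> [exact (hε _).le; exact le_rfl]
  have hh0 : Tendsto hfun atTop (𝓝 0) := by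
    rw [Metric.tendsto_nhds]
    intro δ hδ
    obtain ⟨K, hK⟩ : ∃ K : ℕ, (2⁻¹:ℝ) ^ K < δ / 2 :=
      exists_pow_lt_of_lt_one (by linarith) (by norm_num)
    have hev : ∀ᶠ x : ℝ in atTop, ∀ k ∈ Finset.range K, z (nk k) ≤ x :=
      (Finset.range K).eventually_all.2 fun k _ => eventually_ge_atTop _
    filter_upwards [hev] with x hx
    rw [Real.dist_eq, sub_zero, abs_of_nonneg (hh_nonneg x)]
    have hb : hfun x ≤ ∑' k : ℕ, (if k < K then (0:ℝ) else 2⁻¹ ^ k) := by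
      refine Summable.tsum_le_tsum (fun k => ?_) (hh_sum x) (geom_tail_summable K)
      by_cases hcase : x < z (nk k)
      · rw [if_pos hcase, if_neg fun hkK =>
          absurd hcase (not_lt.2 (hx k (Finset.mem_range.2 hkK)))]
        exact hεk k
      · rw [if_neg hcase]
        split
        · exact le_rfl
        · positivity
    calc hfun x ≤ _ := hb
      _ = 2⁻¹ ^ K * 2 := geom_tail_le K
      _ < δ := by linarith
  -- g x * A x ≤ c * hfun x for x ≥ 0
  have hgA_le : ∀ x : ℝ, 0 ≤ x → g x * A x ≤ c * hfun x := by
    intro x hx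
    have hAx : 0 < A x := hApos x hx
    rw [hgdef, hhdef, ← tsum_mul_right, ← tsum_mul_left]
    refine Summable.tsum_le_tsum (fun k => ?_) ((hg_sum x).mul_right _) ((hh_sum x).mul_left c)
    by_cases hcase : x < z (nk k)
    · rw [if_pos hcase, if_pos hcase, hadef]
      have hAle : A x ≤ A (z (nk k)) :=
        hAmono.monotoneOn (mem_Ici.2 hx) (mem_Ici.2 (hz _).le) hcase.le
      rw [div_mul_eq_mul_div, div_le_iff₀ (hAzpos _)]
      have := mul_le_mul_of_nonneg_left hAle (mul_nonneg hc.le (hε (nk k)).le)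
      linarith
    · rw [if_neg hcase, if_neg hcase, zero_mul, mul_zero]
  have hgA0 : Tendsto (fun x => g x * A x) atTop (𝓝 0) := by
    refine squeeze_zero' (g := fun x => c * hfun x) ?_ ?_ ?_
    · filter_upwards [eventually_ge_atTop (0:ℝ)] with x hx
      exact mul_nonneg (hg_nonneg x) (hApos x hx).le
    · filter_upwards [eventually_ge_atTop (0:ℝ)] with x hx
      exact hgA_le x hx
    · have := hh0.const_mul c
      simpa using this
  -- final asymptotics
  have hasym : (fun x : ℝ => (F (Ioi x)).toReal) ~[atTop] fun x : ℝ => 1 / A x := by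
    apply Asymptotics.isEquivalent_of_tendsto_one
    · have h1 : Tendsto (fun x : ℝ => 1 + g x * A x) atTop (𝓝 1) := by
        have h2 := Tendsto.add (tendsto_const_nhds (x := (1:ℝ)) (f := atTop (α := ℝ))) hgA0
        simpa using h2
      apply h1.congr'
      filter_upwards [eventually_ge_atTop x0] with x hx
      have hAx : 0 < A x := hApos x (le_trans hx0pos.le hx)
      rw [Pi.div_apply, hF_Ioi x hx, one_div, div_eq_mul_inv, inv_inv, add_mul,
        inv_mul_cancel₀ hAx.ne']
  exact ⟨c, hc, nk, hnk_mono, F, hPF, hF_Iic, hasym, hatom⟩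
end

section
/- Suppose F is a Borel probability measure on [0,∞) satisfying tail assumption (T1) with index α ∈ (1/2, 1). Then condition (N) holds automatically: lim_{η→0⁺} limsup_{x→∞} (x/A(x)) · E[ (A(x−X)²/(x−X)) · 1_{1 ≤ x−X < ηx} ] = 0, where X is a random variable with law F. -/
open MeasureTheory ProbabilityTheory Filter Set Asymptotics Topology

/-- Geometric-type bound for sums whose terms eventually grow by ratio `r > 1`. -/
lemma aux_sum_ratio (B : ℕ → ℝ) (hB : ∀ k, 0 ≤ B k) (r : ℝ) (hr : 1 < r) (k₀ : ℕ)
    (hge : ∀ k, k₀ ≤ k → r * B k ≤ B (k + 1)) :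
    ∃ C₀ C₁ : ℝ, 0 ≤ C₀ ∧ 0 ≤ C₁ ∧
      ∀ K, ∑ k ∈ Finset.range (K + 1), B k ≤ C₀ + C₁ * B K := by
  have hr0 : 0 < r - 1 := by linarith
  refine ⟨∑ k ∈ Finset.range (k₀ + 1), B k, r / (r - 1),
    Finset.sum_nonneg fun k _ => hB k, by positivity, ?_⟩
  intro K
  induction K with
  | zero =>
      have h0 : B 0 ≤ ∑ k ∈ Finset.range (k₀ + 1), B k := by
        refine Finset.single_le_sum (fun k _ => hB k) ?_
        exact Finset.mem_range.2 (Nat.succ_pos _)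
      have : (0:ℝ) ≤ r / (r - 1) * B 0 := by
        have := hB 0; positivity
      simpa using by linarith
  | succ K ih =>
      rw [Finset.sum_range_succ]
      by_cases hK : K + 1 ≤ k₀
      · have hsub : Finset.range (K + 2) ⊆ Finset.range (k₀ + 1) := by
          intro i hi; simp only [Finset.mem_range] at *; omega
        have h1 : ∑ k ∈ Finset.range (K + 2), B k ≤ ∑ k ∈ Finset.range (k₀ + 1), B k :=
          Finset.sum_le_sum_of_subset_of_nonneg hsub fun k _ _ => hB k
        have h2 : (0:ℝ) ≤ r / (r - 1) * B (K + 1) := by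
          have := hB (K + 1); positivity
        rw [Finset.sum_range_succ] at h1
        linarith
      · push_neg at hK
        have hk₀K : k₀ ≤ K := by omega
        have hstep := hge K hk₀K
        have hC1 : r / (r - 1) * B K + B (K + 1) ≤ r / (r - 1) * B (K + 1) := by
          have hrne : r - 1 ≠ 0 := ne_of_gt hr0
          have key : (1 / (r - 1)) * (r * B K) ≤ (1 / (r - 1)) * B (K + 1) :=
            mul_le_mul_of_nonneg_left hstep (by positivity)
          have e1 : (1 / (r - 1)) * (r * B K) = r / (r - 1) * B K := by field_simp
          have e2 : (1 / (r - 1)) * B (K + 1) + B (K + 1) = r / (r - 1) * B (K + 1) := by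
            field_simp; ring
          linarith
        linarith

/-- Dyadic localization: for `t ≥ 1`, with `k = Nat.log 2 ⌊t⌋₊` we have `2^k ≤ t < 2^(k+1)`. -/
lemma aux_dyadic (t : ℝ) (ht : 1 ≤ t) :
    (2:ℝ) ^ (Nat.log 2 ⌊t⌋₊) ≤ t ∧ t < 2 ^ (Nat.log 2 ⌊t⌋₊ + 1) := by
  have ht0 : (0:ℝ) ≤ t := by linarith
  have hfl : 1 ≤ ⌊t⌋₊ := Nat.le_floor (by exact_mod_cast ht)
  constructor
  · calc (2:ℝ) ^ (Nat.log 2 ⌊t⌋₊) = ((2 ^ (Nat.log 2 ⌊t⌋₊) : ℕ) : ℝ) := by push_cast; ring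
      _ ≤ (⌊t⌋₊ : ℝ) := by exact_mod_cast Nat.pow_log_le_self 2 (by omega)
      _ ≤ t := Nat.floor_le ht0
  · have h1 : ⌊t⌋₊ < 2 ^ (Nat.log 2 ⌊t⌋₊ + 1) := Nat.lt_pow_succ_log_self one_lt_two _
    have h2 : (⌊t⌋₊ : ℝ) + 1 ≤ (2:ℝ) ^ (Nat.log 2 ⌊t⌋₊ + 1) := by
      exact_mod_cast Nat.succ_le_of_lt h1
    have h3 : t < (⌊t⌋₊ : ℝ) + 1 := Nat.lt_floor_add_one t
    linarith

/-- If `A` is positive, monotone on `[0,∞)` and `A(2x)² ≥ c A(x)²` with `c > 2`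
eventually, then `x / A(x)² → 0`. -/
lemma aux_x_div_sq (A : ℝ → ℝ) (hApos : ∀ x, 0 ≤ x → 0 < A x)
    (hAmono : MonotoneOn A (Set.Ici 0)) (c x₀ : ℝ) (hc : 2 < c) (hx₀ : 1 ≤ x₀)
    (hstep : ∀ x, x₀ ≤ x → c * A x ^ 2 ≤ A (2 * x) ^ 2) :
    Tendsto (fun x => x / A x ^ 2) atTop (nhds 0) := by
  have hx₀0 : (0:ℝ) < x₀ := by linarith
  have hc0 : (0:ℝ) < c := by linarith
  have claim1 : ∀ n : ℕ, c ^ n * A x₀ ^ 2 ≤ A (2 ^ n * x₀) ^ 2 := by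
    intro n
    induction n with
    | zero => simp
    | succ n ih =>
        have h1 : (1:ℝ) ≤ 2 ^ n := one_le_pow₀ one_le_two
        have h2n : x₀ ≤ 2 ^ n * x₀ := le_mul_of_one_le_left hx₀0.le h1
        have harg : 2 * (2 ^ n * x₀) = 2 ^ (n + 1) * x₀ := by ring
        calc c ^ (n + 1) * A x₀ ^ 2 = c * (c ^ n * A x₀ ^ 2) := by ring
          _ ≤ c * A (2 ^ n * x₀) ^ 2 := mul_le_mul_of_nonneg_left ih hc0.le
          _ ≤ A (2 * (2 ^ n * x₀)) ^ 2 := hstep _ h2n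
          _ = A (2 ^ (n + 1) * x₀) ^ 2 := by rw [harg]
  suffices hAT : Tendsto (fun x => A x ^ 2 / x) atTop atTop by
    have h := hAT.inv_tendsto_atTop
    refine h.congr fun x => ?_
    simp [Pi.inv_apply, inv_div]
  rw [tendsto_atTop]
  intro M
  have hAx₀ : 0 < A x₀ := hApos x₀ hx₀0.le
  set D : ℝ := A x₀ ^ 2 / (2 * x₀) with hD
  have hDpos : 0 < D := by positivity
  have hc2 : 1 < c / 2 := by linarith
  obtain ⟨n, hn⟩ : ∃ n : ℕ, M / D ≤ (c / 2) ^ n := by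
    have := (tendsto_pow_atTop_atTop_of_one_lt hc2).eventually_ge_atTop (M / D)
    exact this.exists
  have hnM : M ≤ (c / 2) ^ n * D := by
    rw [div_le_iff₀ hDpos] at hn; linarith
  filter_upwards [eventually_ge_atTop ((2:ℝ) ^ n * x₀)] with y hy
  have h1n : (1:ℝ) ≤ 2 ^ n := one_le_pow₀ one_le_two
  have hyx₀ : x₀ ≤ y := le_trans (le_mul_of_one_le_left hx₀0.le h1n) hy
  have hy0 : 0 < y := lt_of_lt_of_le hx₀0 hyx₀
  have htq : 1 ≤ y / x₀ := (one_le_div hx₀0).2 hyx₀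
  obtain ⟨hm1, hm2⟩ := aux_dyadic (y / x₀) htq
  set m := Nat.log 2 ⌊y / x₀⌋₊ with hm
  have hnm : n ≤ m := by
    have h2n : (2:ℝ) ^ n ≤ y / x₀ := (le_div_iff₀ hx₀0).2 hy
    have : (2:ℝ) ^ n < 2 ^ (m + 1) := lt_of_le_of_lt h2n hm2
    have := (pow_lt_pow_iff_right₀ one_lt_two).1 this
    omega
  have hmy : (2:ℝ) ^ m * x₀ ≤ y := (le_div_iff₀ hx₀0).1 hm1
  have hym : y < 2 ^ (m + 1) * x₀ := by
    have := (div_lt_iff₀ hx₀0).1 hm2; linarith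
  have hA1 : A (2 ^ m * x₀) ≤ A y := by
    refine hAmono ?_ ?_ hmy
    · exact mem_Ici.2 (by positivity)
    · exact mem_Ici.2 hy0.le
  have hA1' : A (2 ^ m * x₀) ^ 2 ≤ A y ^ 2 := by
    have h0 : 0 < A (2 ^ m * x₀) := hApos _ (by positivity)
    nlinarith
  have hkey : c ^ m * A x₀ ^ 2 ≤ A y ^ 2 := le_trans (claim1 m) hA1'
  have hfinal : (c / 2) ^ m * D ≤ A y ^ 2 / y := by
    have hden : (0:ℝ) < 2 ^ (m + 1) * x₀ := by positivity
    have e1 : (c / 2) ^ m * D = c ^ m * A x₀ ^ 2 / (2 ^ (m + 1) * x₀) := by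
      rw [hD, div_pow]; field_simp; ring
    rw [e1]
    exact div_le_div₀ (by positivity) hkey hy0 hym.le
  have hmono : (c / 2) ^ n ≤ (c / 2) ^ m := pow_le_pow_right₀ hc2.le hnm
  have : (c / 2) ^ n * D ≤ (c / 2) ^ m * D := mul_le_mul_of_nonneg_right hmono hDpos.le
  linarith

lemma aux_alg (x P W C0 C1 η : ℝ) (hP : P ≠ 0) (hx : x ≠ 0) (hη : η ≠ 0) :
    x / P * ((8 / P) * (C0 + C1 * (2 * (4 * W ^ 2 * P ^ 2) / (η * x))))
      = 8 * C0 * (x / P ^ 2) + 64 * C1 * (W ^ 2 / η) := by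
  field_simp
  ring

set_option maxHeartbeats 2000000 in
/-- **Appendix A.4**: under (T1) with `α ∈ (1/2, 1)`, condition (N) holds
automatically. -/
theorem condN_of_alpha_gt_half
    (F : Measure ℝ) [IsProbabilityMeasure F]
    (hFsupp : F (Set.Iio 0) = 0)
    (α : ℝ) (hα1 : 1 / 2 < α) (hα2 : α < 1)
    (A : ℝ → ℝ)
    (hApos : ∀ x : ℝ, 0 ≤ x → 0 < A x)
    (hAcont : ContinuousOn A (Set.Ici 0))
    (hAmono : StrictMonoOn A (Set.Ici 0))
    (hAreg : ∀ l : ℝ, 0 < l →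
      Tendsto (fun x : ℝ => A (l * x) / A x) atTop (nhds (l ^ α)))
    (hT1 : (fun x : ℝ => (F (Set.Ioi x)).toReal) ~[atTop] fun x : ℝ => 1 / A x)
    :
    CondN F A := by
  have hα0 : (0:ℝ) < α := by linarith
  have h2α : Tendsto (fun x : ℝ => A (2 * x) / A x) atTop (nhds ((2:ℝ) ^ α)) :=
    hAreg 2 two_pos
  -- `(2^α)^2 > 2`
  have h2lt : (2:ℝ) < ((2:ℝ) ^ α) ^ 2 := by
    have e : (((2:ℝ) ^ α) ^ 2 : ℝ) = (2:ℝ) ^ (α * 2) := by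
      rw [← Real.rpow_natCast ((2:ℝ) ^ α) 2, ← Real.rpow_mul (by norm_num)]
      norm_num
    rw [e]
    calc (2:ℝ) = (2:ℝ) ^ (1:ℝ) := by norm_num
      _ < (2:ℝ) ^ (α * 2) := by
          rw [Real.rpow_lt_rpow_left_iff one_lt_two]; linarith
  -- the dyadic sequence `B`
  set B : ℕ → ℝ := fun k => A ((2:ℝ) ^ (k + 1)) ^ 2 / 2 ^ k with hBdef
  have hBpos : ∀ k, 0 < B k := fun k =>
    div_pos (pow_pos (hApos _ (by positivity)) 2) (by positivity)
  -- ratio of consecutive `B`'s tends to `(2^α)^2/2 > 1`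
  have hseq : Tendsto (fun k : ℕ => (2:ℝ) ^ (k + 1)) atTop atTop := by
    refine tendsto_atTop_mono (fun k => ?_) tendsto_natCast_atTop_atTop
    calc ((k:ℝ)) ≤ 2 ^ k := by
          exact_mod_cast (Nat.lt_two_pow_self (n := k)).le
      _ ≤ 2 ^ (k + 1) := by
          apply pow_le_pow_right₀ one_le_two; omega
  have hBr : Tendsto (fun k : ℕ => A (2 * 2 ^ (k + 1)) / A (2 ^ (k + 1))) atTop
      (nhds ((2:ℝ) ^ α)) := h2α.comp hseq
  set r : ℝ := (1 + ((2:ℝ) ^ α) ^ 2 / 2) / 2 with hrdef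
  have hr1 : 1 < r := by rw [hrdef]; linarith
  have hrρ : r < ((2:ℝ) ^ α) ^ 2 / 2 := by rw [hrdef]; linarith
  have hratio : ∀ᶠ k in (atTop : Filter ℕ), r * B k ≤ B (k + 1) := by
    have h1 : Tendsto (fun k : ℕ => (A (2 * 2 ^ (k + 1)) / A (2 ^ (k + 1))) ^ 2 / 2) atTop
        (nhds (((2:ℝ) ^ α) ^ 2 / 2)) := (hBr.pow 2).div_const 2
    filter_upwards [h1.eventually (eventually_gt_nhds hrρ)] with k hk
    have hpk : (0:ℝ) < A ((2:ℝ) ^ (k + 1)) := hApos _ (by positivity)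
    have harg : (2:ℝ) ^ (k + 1 + 1) = 2 * 2 ^ (k + 1) := by ring
    have hBk1 : B (k + 1) = (A (2 * 2 ^ (k + 1)) / A (2 ^ (k + 1))) ^ 2 / 2 * B k := by
      rw [hBdef]; simp only [harg]
      field_simp
      ring
    rw [hBk1]
    exact mul_le_mul_of_nonneg_right hk.le (hBpos k).le
  obtain ⟨k₀, hk₀⟩ := eventually_atTop.1 hratio
  obtain ⟨C₀, C₁, hC₀, hC₁, hsum⟩ :=
    aux_sum_ratio B (fun k => (hBpos k).le) r hr1 k₀ hk₀
  -- `x / A x ^ 2 → 0`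
  have hD : Tendsto (fun x => x / A x ^ 2) atTop (nhds 0) := by
    set c : ℝ := (2 + ((2:ℝ) ^ α) ^ 2) / 2 with hcdef
    have hc2 : 2 < c := by rw [hcdef]; linarith
    have hcρ : c < ((2:ℝ) ^ α) ^ 2 := by rw [hcdef]; linarith
    have hsq : Tendsto (fun x : ℝ => (A (2 * x) / A x) ^ 2) atTop
        (nhds (((2:ℝ) ^ α) ^ 2)) := h2α.pow 2
    have hev : ∀ᶠ x in (atTop : Filter ℝ), c < (A (2 * x) / A x) ^ 2 :=
      hsq.eventually (eventually_gt_nhds hcρ)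
    obtain ⟨x₁, hx₁⟩ := eventually_atTop.1 (hev.and (eventually_ge_atTop (1:ℝ)))
    refine aux_x_div_sq A hApos hAmono.monotoneOn c (max x₁ 1) hc2 (le_max_right _ _) ?_
    intro x hx
    have h1x : (1:ℝ) ≤ x := le_trans (le_max_right _ _) hx
    obtain ⟨h1, _⟩ := hx₁ x (le_trans (le_max_left _ _) hx)
    have hP : 0 < A x := hApos x (by linarith)
    have : c < A (2 * x) ^ 2 / A x ^ 2 := by rwa [div_pow] at h1
    have := (lt_div_iff₀ (by positivity)).1 this
    linarith
  -- tail bound from (T1)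
  have evG : ∀ᶠ y in (atTop : Filter ℝ), (F (Set.Ioi y)).toReal ≤ 2 / A y := by
    have hb := hT1.def one_half_pos
    filter_upwards [hb, eventually_ge_atTop (0:ℝ)] with y hy hy0
    have hA := hApos y hy0
    simp only [Pi.sub_apply, Real.norm_eq_abs] at hy
    have h1 : (F (Set.Ioi y)).toReal - 1 / A y ≤ 1 / 2 * |1 / A y| := le_of_abs_le hy
    have h2 : |1 / A y| = 1 / A y := abs_of_nonneg (by positivity)
    rw [h2] at h1
    have h3 : (0:ℝ) ≤ 1 / A y := by positivity
    have h4 : 2 / A y = 2 * (1 / A y) := by ring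
    linarith [h4]
  -- main per-η eventual estimate
  have hmain : ∀ η : ℝ, 0 < η → η < 4⁻¹ →
      ∀ᶠ x in (atTop : Filter ℝ),
        x / A x * ∫ y, Set.indicator {s : ℝ | 1 ≤ x - s ∧ x - s < η * x}
          (fun s => (A (x - s)) ^ 2 / (x - s)) y ∂F
        ≤ η + 64 * C₁ * (((2 * η) ^ α) ^ 2 / η) := by
    intro η hη hη4
    have h12η : (0:ℝ) < 1 - 2 * η := by linarith
    have h2η : (0:ℝ) < 2 * η := by linarith
    have hW : 0 < (2 * η) ^ α := Real.rpow_pos_of_pos h2η α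
    have h14 : (4:ℝ)⁻¹ < (1 - 2 * η) ^ α := by
      have h1 : ((1:ℝ) - 2 * η) ^ (1:ℝ) ≤ (1 - 2 * η) ^ α :=
        Real.rpow_le_rpow_of_exponent_ge h12η (by linarith) hα2.le
      rw [Real.rpow_one] at h1
      linarith
    have e1 := eventually_ge_atTop (1:ℝ)
    have e2 : ∀ᶠ x in (atTop : Filter ℝ), 1 ≤ η * x :=
      (Tendsto.const_mul_atTop hη tendsto_id).eventually_ge_atTop 1
    have e3 : ∀ᶠ x in (atTop : Filter ℝ),
        (F (Set.Ioi ((1 - 2 * η) * x))).toReal ≤ 2 / A ((1 - 2 * η) * x) :=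
      (Tendsto.const_mul_atTop h12η tendsto_id).eventually evG
    have e4 : ∀ᶠ x in (atTop : Filter ℝ), (4:ℝ)⁻¹ < A ((1 - 2 * η) * x) / A x :=
      (hAreg (1 - 2 * η) h12η).eventually (eventually_gt_nhds h14)
    have e5 : ∀ᶠ x in (atTop : Filter ℝ), A ((2 * η) * x) / A x < 2 * (2 * η) ^ α :=
      (hAreg (2 * η) h2η).eventually (eventually_lt_nhds (by linarith))
    have e6 : ∀ᶠ x in (atTop : Filter ℝ), x / A x ^ 2 < η / (8 * C₀ + 1) :=
      hD.eventually (eventually_lt_nhds (by positivity))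
    filter_upwards [e1, e2, e3, e4, e5, e6] with x hx1 hx2 hx3 hx4 hx5 hx6
    have hx0 : (0:ℝ) < x := by linarith
    have hP : 0 < A x := hApos x hx0.le
    have hQ : 0 < A ((1 - 2 * η) * x) := hApos _ (by positivity)
    have hR : 0 < A ((2 * η) * x) := hApos _ (by positivity)
    set K := Nat.log 2 ⌊η * x⌋₊ with hK
    obtain ⟨hK1, hK2⟩ := aux_dyadic (η * x) hx2
    set S : Set ℝ := {s : ℝ | 1 ≤ x - s ∧ x - s < η * x} with hS
    have hSeq : S = Set.Ioc (x - η * x) (x - 1) := by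
      rw [hS]; ext s
      simp only [mem_setOf_eq, mem_Ioc]
      constructor <;> rintro ⟨h1', h2'⟩ <;> exact ⟨by linarith, by linarith⟩
    set φ : ℝ → ℝ := S.indicator (fun s => (A (x - s)) ^ 2 / (x - s)) with hφ
    have hφnn : ∀ s, 0 ≤ φ s := by
      intro s
      apply Set.indicator_nonneg
      intro a ha
      have h1' : (1:ℝ) ≤ x - a := ha.1
      exact div_nonneg (sq_nonneg _) (by linarith)
    set blk : ℕ → Set ℝ := fun k => Set.Ioc (x - 2 ^ (k + 1)) (x - 2 ^ k) with hblk
    set g : ℝ → ℝ := fun s => ∑ k ∈ Finset.range (K + 1),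
      (blk k).indicator (fun _ => B k) s with hg
    have hgnn : ∀ s, 0 ≤ g s := fun s =>
      Finset.sum_nonneg fun k _ => Set.indicator_nonneg (fun _ _ => (hBpos k).le) s
    -- pointwise dyadic bound
    have hle : ∀ s, φ s ≤ g s := by
      intro s
      by_cases hs : s ∈ S
      · have ht1 : (1:ℝ) ≤ x - s := hs.1
        have ht2 : x - s < η * x := hs.2
        have ht0 : (0:ℝ) ≤ x - s := by linarith
        obtain ⟨hd1, hd2⟩ := aux_dyadic (x - s) ht1
        set k := Nat.log 2 ⌊x - s⌋₊ with hkdef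
        have hkK : k < K + 1 := by
          have n1 : 2 ^ k ≤ ⌊x - s⌋₊ := Nat.pow_log_le_self 2 (by
            have : 1 ≤ ⌊x - s⌋₊ := Nat.le_floor (by exact_mod_cast ht1)
            omega)
          have n2 : ⌊x - s⌋₊ ≤ ⌊η * x⌋₊ := Nat.floor_le_floor ht2.le
          have n3 : ⌊η * x⌋₊ < 2 ^ (K + 1) := Nat.lt_pow_succ_log_self one_lt_two _
          have : (2:ℕ) ^ k < 2 ^ (K + 1) := by omega
          exact (Nat.pow_lt_pow_iff_right (by norm_num)).1 this
        have hmem : s ∈ blk k := by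
          simp only [hblk, Set.mem_Ioc]
          constructor <;> linarith
        have hφs : φ s = A (x - s) ^ 2 / (x - s) := by
          rw [hφ, Set.indicator_of_mem hs]
        have hbound : A (x - s) ^ 2 / (x - s) ≤ B k := by
          have hm : A (x - s) ≤ A ((2:ℝ) ^ (k + 1)) :=
            hAmono.monotoneOn (mem_Ici.2 ht0) (mem_Ici.2 (by positivity)) hd2.le
          have hAt0 : 0 ≤ A (x - s) := (hApos _ ht0).le
          have hsq : A (x - s) ^ 2 ≤ A ((2:ℝ) ^ (k + 1)) ^ 2 :=
            pow_le_pow_left₀ hAt0 hm 2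
          have hd := div_le_div₀ (by positivity) hsq
            (by positivity : (0:ℝ) < 2 ^ k) hd1
          rw [hBdef]
          exact hd
        have hgs : B k ≤ g s := by
          rw [hg]
          have hik : (blk k).indicator (fun _ => B k) s = B k :=
            Set.indicator_of_mem hmem _
          rw [← hik]
          exact Finset.single_le_sum
            (fun j _ => Set.indicator_nonneg (fun _ _ => (hBpos j).le) s)
            (Finset.mem_range.2 hkK)
        rw [hφs]; exact le_trans hbound hgs
      · rw [hφ, Set.indicator_of_notMem hs]; exact hgnn s
    -- measurability and integrability
    have hSmeas : MeasurableSet S := by rw [hSeq]; exact measurableSet_Ioc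
    have hcont : Continuous fun s : ℝ => A (max (x - s) 1) := by
      apply hAcont.comp_continuous
      · exact (continuous_const.sub continuous_id).max continuous_const
      · intro s; exact mem_Ici.2 (le_trans zero_le_one (le_max_right _ _))
    have hm1 : Measurable fun s : ℝ => A (max (x - s) 1) ^ 2 := (hcont.pow 2).measurable
    have hm2 : Measurable fun s : ℝ => x - s := measurable_const.sub measurable_id
    have hmeas2 : Measurable fun s : ℝ => A (max (x - s) 1) ^ 2 / (x - s) := hm1.div hm2
    have hφeq : φ = S.indicator (fun s => A (max (x - s) 1) ^ 2 / (x - s)) := by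
      rw [hφ]
      apply Set.indicator_congr
      intro a ha
      have h1' : (1:ℝ) ≤ x - a := ha.1
      show A (x - a) ^ 2 / (x - a) = A (max (x - a) 1) ^ 2 / (x - a)
      rw [max_eq_left (by linarith)]
    have hφmeas : AEStronglyMeasurable φ F := by
      rw [hφeq]; exact (hmeas2.indicator hSmeas).aestronglyMeasurable
    have hgint : Integrable g F := by
      rw [hg]
      apply integrable_finset_sum
      intro k _
      exact (integrable_const (B k)).indicator measurableSet_Ioc
    have hφint : Integrable φ F := by
      apply hgint.mono' hφmeas
      filter_upwards with s
      rw [Real.norm_eq_abs, abs_of_nonneg (hφnn s)]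
      exact hle s
    -- integral bound
    set G₁ : ℝ := (F (Set.Ioi ((1 - 2 * η) * x))).toReal with hG₁
    have hG₁nn : 0 ≤ G₁ := ENNReal.toReal_nonneg
    have hblkle : ∀ k ∈ Finset.range (K + 1), ((F (blk k)).toReal) ≤ G₁ := by
      intro k hk
      have hkK : k ≤ K := Nat.lt_succ_iff.1 (Finset.mem_range.1 hk)
      have h2k : (2:ℝ) ^ k ≤ η * x :=
        le_trans (pow_le_pow_right₀ one_le_two hkK) hK1
      have hsub : blk k ⊆ Set.Ioi ((1 - 2 * η) * x) := by
        have hpk : (2:ℝ) ^ (k + 1) = 2 * 2 ^ k := by ring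
        have hle' : (1 - 2 * η) * x ≤ x - 2 ^ (k + 1) := by linarith [h2k, hpk]
        simp only [hblk]
        exact subset_trans Set.Ioc_subset_Ioi_self (Set.Ioi_subset_Ioi hle')
      rw [hG₁]
      exact ENNReal.toReal_mono (measure_ne_top F _) (measure_mono hsub)
    have hint_g : ∫ y, g y ∂F = ∑ k ∈ Finset.range (K + 1), (F (blk k)).toReal * B k := by
      rw [hg, integral_finset_sum]
      · refine Finset.sum_congr rfl fun k _ => ?_
        rw [integral_indicator_const _ measurableSet_Ioc, smul_eq_mul]; rfl
      · intro k _
        exact (integrable_const (B k)).indicator measurableSet_Ioc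
    have hIbound : ∫ y, φ y ∂F ≤ G₁ * (C₀ + C₁ * B K) := by
      have h1 : ∫ y, φ y ∂F ≤ ∫ y, g y ∂F := integral_mono hφint hgint hle
      have h2 : ∑ k ∈ Finset.range (K + 1), (F (blk k)).toReal * B k ≤
          ∑ k ∈ Finset.range (K + 1), G₁ * B k :=
        Finset.sum_le_sum fun k hk => mul_le_mul_of_nonneg_right (hblkle k hk) (hBpos k).le
      have h3 : ∑ k ∈ Finset.range (K + 1), G₁ * B k
          = G₁ * ∑ k ∈ Finset.range (K + 1), B k := by rw [Finset.mul_sum]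
      have h5 : G₁ * (∑ k ∈ Finset.range (K + 1), B k) ≤ G₁ * (C₀ + C₁ * B K) :=
        mul_le_mul_of_nonneg_left (hsum K) hG₁nn
      rw [hint_g] at h1
      linarith
    -- bound on B K
    have hBK : B K ≤ 2 * A ((2 * η) * x) ^ 2 / (η * x) := by
      have hpK : (2:ℝ) ^ (K + 1) = 2 * 2 ^ K := by ring
      have h2K : (2:ℝ) ^ (K + 1) ≤ (2 * η) * x := by linarith [hK1, hpK]
      have hAK : A ((2:ℝ) ^ (K + 1)) ≤ A ((2 * η) * x) :=
        hAmono.monotoneOn (mem_Ici.2 (by positivity)) (mem_Ici.2 (by positivity)) h2K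
      have hAK0 : 0 ≤ A ((2:ℝ) ^ (K + 1)) := (hApos _ (by positivity)).le
      have e : B K = 2 * A ((2:ℝ) ^ (K + 1)) ^ 2 / 2 ^ (K + 1) := by
        rw [hBdef]
        field_simp [pow_succ]
        ring
      rw [e]
      have hsqK : A ((2:ℝ) ^ (K + 1)) ^ 2 ≤ A ((2 * η) * x) ^ 2 :=
        pow_le_pow_left₀ hAK0 hAK 2
      exact div_le_div₀ (by positivity) (by linarith) (by positivity) hK2.le
    -- final numeric chain
    have hxA : 0 ≤ x / A x := div_nonneg hx0.le hP.le
    have hG₁le : G₁ ≤ 8 / A x := by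
      have hq : (4:ℝ)⁻¹ * A x < A ((1 - 2 * η) * x) := (lt_div_iff₀ hP).1 hx4
      have h8 : 2 / A ((1 - 2 * η) * x) ≤ 8 / A x := by
        rw [div_le_div_iff₀ hQ hP]
        linarith
      exact le_trans hx3 h8
    have hRle : A ((2 * η) * x) ≤ 2 * (2 * η) ^ α * A x := by
      have := (div_lt_iff₀ hP).1 hx5
      linarith
    have hR2 : A ((2 * η) * x) ^ 2 ≤ 4 * ((2 * η) ^ α) ^ 2 * A x ^ 2 := by
      have h1' := pow_le_pow_left₀ hR.le hRle 2
      have h2' : (2 * (2 * η) ^ α * A x) ^ 2 = 4 * ((2 * η) ^ α) ^ 2 * A x ^ 2 := by ring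
      linarith
    have hηx : (0:ℝ) < η * x := by positivity
    calc x / A x * (∫ y, φ y ∂F)
        ≤ x / A x * (G₁ * (C₀ + C₁ * B K)) := mul_le_mul_of_nonneg_left hIbound hxA
      _ ≤ x / A x * ((8 / A x) * (C₀ + C₁ *
            (2 * (4 * ((2 * η) ^ α) ^ 2 * A x ^ 2) / (η * x)))) := by
          refine mul_le_mul_of_nonneg_left ?_ hxA
          refine mul_le_mul hG₁le ?_
            (add_nonneg hC₀ (mul_nonneg hC₁ (hBpos K).le)) (by positivity)
          refine add_le_add_right (mul_le_mul_of_nonneg_left ?_ hC₁) C₀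
          refine le_trans hBK ((div_le_div_iff_of_pos_right hηx).2 (by linarith [hR2]))
      _ = 8 * C₀ * (x / A x ^ 2) + 64 * C₁ * (((2 * η) ^ α) ^ 2 / η) :=
          aux_alg x (A x) ((2 * η) ^ α) C₀ C₁ η hP.ne' (by linarith) hη.ne'
      _ ≤ η + 64 * C₁ * (((2 * η) ^ α) ^ 2 / η) := by
          have k1 : 8 * C₀ * (x / A x ^ 2) ≤ 8 * C₀ * (η / (8 * C₀ + 1)) :=
            mul_le_mul_of_nonneg_left hx6.le (by positivity)
          have k2 : 8 * C₀ * (η / (8 * C₀ + 1)) ≤ η := by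
            have h0 : (0:ℝ) < 8 * C₀ + 1 := by positivity
            rw [mul_div_assoc', div_le_iff₀ h0]
            nlinarith [hC₀, hη]
          linarith
  -- the bound function tends to 0
  have hΨ : Tendsto (fun η : ℝ => η + 64 * C₁ * (((2 * η) ^ α) ^ 2 / η))
      (nhdsWithin 0 (Set.Ioi 0)) (nhds 0) := by
    have hexp : (0:ℝ) < α * 2 - 1 := by linarith
    have t1 : Tendsto (fun η : ℝ => η ^ (α * 2 - 1)) (nhdsWithin (0:ℝ) (Set.Ioi 0)) (nhds 0) := by
      have hc : ContinuousAt (fun η : ℝ => η ^ (α * 2 - 1)) 0 :=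
        Real.continuousAt_rpow_const 0 _ (Or.inr hexp.le)
      have h := hc.tendsto.mono_left (nhdsWithin_le_nhds (s := Set.Ioi (0:ℝ)))
      simpa [Real.zero_rpow (ne_of_gt hexp)] using h
    have t2 := t1.const_mul (64 * C₁ * (2:ℝ) ^ (α * 2))
    rw [mul_zero] at t2
    have hmemIoo : Set.Ioo (0:ℝ) 4⁻¹ ∈ nhdsWithin (0:ℝ) (Set.Ioi 0) :=
      Ioo_mem_nhdsGT (by norm_num)
    have heqF : (fun η : ℝ => 64 * C₁ * (2:ℝ) ^ (α * 2) * η ^ (α * 2 - 1))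
        =ᶠ[nhdsWithin (0:ℝ) (Set.Ioi 0)] fun η : ℝ => 64 * C₁ * (((2 * η) ^ α) ^ 2 / η) := by
      filter_upwards [hmemIoo] with η hη
      obtain ⟨hη0, -⟩ := hη
      have h2η : (0:ℝ) ≤ 2 * η := by linarith
      have e1' : ((2 * η) ^ α) ^ 2 = (2 * η) ^ (α * 2) := by
        rw [← Real.rpow_natCast ((2 * η) ^ α) 2, ← Real.rpow_mul h2η]
        norm_num
      have e2' : (2 * η) ^ (α * 2) = (2:ℝ) ^ (α * 2) * η ^ (α * 2) :=
        Real.mul_rpow (by norm_num) hη0.le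
      have e3' : η ^ (α * 2) / η = η ^ (α * 2 - 1) := by
        rw [Real.rpow_sub hη0, Real.rpow_one]
      rw [e1', e2', mul_div_assoc, e3']
      ring
    have t3 := t2.congr' heqF
    have hid : Tendsto (fun η : ℝ => η) (nhdsWithin (0:ℝ) (Set.Ioi 0)) (nhds 0) :=
      tendsto_id.mono_left nhdsWithin_le_nhds
    simpa using hid.add t3
  -- conclusion
  unfold CondN
  have hmemIoo : Set.Ioo (0:ℝ) 4⁻¹ ∈ nhdsWithin (0:ℝ) (Set.Ioi 0) :=
    Ioo_mem_nhdsGT (by norm_num)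
  have hnonneg : ∀ η : ℝ, ∀ᶠ x in (atTop : Filter ℝ),
      0 ≤ x / A x * ∫ y, Set.indicator {s : ℝ | 1 ≤ x - s ∧ x - s < η * x}
        (fun s => (A (x - s)) ^ 2 / (x - s)) y ∂F := by
    intro η
    filter_upwards [eventually_ge_atTop (1:ℝ)] with x hx1
    have hP : 0 < A x := hApos x (by linarith)
    have hint : 0 ≤ ∫ y, Set.indicator {s : ℝ | 1 ≤ x - s ∧ x - s < η * x}
        (fun s => (A (x - s)) ^ 2 / (x - s)) y ∂F := by
      apply integral_nonneg
      intro s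
      apply Set.indicator_nonneg
      intro a ha
      exact div_nonneg (sq_nonneg _) (by linarith [ha.1])
    exact mul_nonneg (div_nonneg (by linarith) hP.le) hint
  apply tendsto_of_tendsto_of_tendsto_of_le_of_le' tendsto_const_nhds hΨ
  · filter_upwards [hmemIoo] with η hη
    exact le_limsup_of_frequently_le (hnonneg η).frequently
      (isBoundedUnder_of_eventually_le (hmain η hη.1 hη.2))
  · filter_upwards [hmemIoo] with η hη
    exact limsup_le_of_le (isCoboundedUnder_le_of_eventually_le _ (hnonneg η))
      (hmain η hη.1 hη.2)
end
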